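/- arXiv:cond-mat/0310735 — 7 statements merged into one kernel-verified Lean document; each statement's English description precedes it below -/
import Mathlib

section
/- Let f : ℝ → ℝ be continuously differentiable, let a < b, and suppose f'(x) < 0 for all x ∈ (a,b) and f(a) > 0 > f(b). Put h₀ = min(f(a), −f(b)). Then for every h with 0 ≤ h < h₀ there exists a 1-periodic solution x of the equation x' = f(x) + h·cos(2πt) satisfying a ≤ x(t) ≤ b for all t ∈ ℝ. -/
open Real

/-- A 1-periodic solution of x' = f(x) + h·cos(2πt). -/
def IsPeriodicSolution (f : ℝ → ℝ) (h : ℝ) (x : ℝ → ℝ) : Prop :=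
  Differentiable ℝ x ∧
  (∀ t, deriv x t = f (x t) + h * Real.cos (2 * Real.pi * t)) ∧
  ∀ t, x (t + 1) = x t

open Set

noncomputable section PeriodicAux

/-- Clamp to the interval `[a, b]`. -/
private def clampI (a b y : ℝ) : ℝ := max a (min b y)

private lemma clampI_mem {a b : ℝ} (hab : a ≤ b) (y : ℝ) : clampI a b y ∈ Icc a b :=
  ⟨le_max_left _ _, max_le hab (min_le_left _ _)⟩

private lemma clampI_eq {a b y : ℝ} (hy : y ∈ Icc a b) : clampI a b y = y := by
  unfold clampI
  rw [min_eq_right hy.2, max_eq_right hy.1]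

private lemma clampI_of_le {a b y : ℝ} (hab : a ≤ b) (hy : b ≤ y) : clampI a b y = b := by
  unfold clampI
  rw [min_eq_left hy, max_eq_right hab]

private lemma clampI_of_ge {a b y : ℝ} (hab : a ≤ b) (hy : y ≤ a) : clampI a b y = a := by
  unfold clampI
  rw [min_eq_right (hy.trans hab), max_eq_left hy]

private lemma lipschitz_clampI (a b : ℝ) : LipschitzWith 1 (clampI a b) := by
  apply LipschitzWith.of_dist_le_mul
  intro y z
  simp only [clampI, Real.dist_eq, NNReal.coe_one, one_mul]
  calc |max a (min b y) - max a (min b z)|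
      = |max (min b y) a - max (min b z) a| := by rw [max_comm a, max_comm a]
    _ ≤ |min b y - min b z| := abs_max_sub_max_le_abs _ _ _
    _ ≤ max |b - b| |y - z| := abs_min_sub_min_le_max _ _ _ _
    _ = |y - z| := by simp [abs_nonneg]

/-- Global existence of solutions for a globally Lipschitz, bounded field. -/
private lemma exists_global_solution (v : ℝ → ℝ → ℝ) (K : NNReal)
    (hlip : ∀ t, LipschitzWith K (v t))
    (hcont : ∀ y, Continuous fun t => v t y)
    (C : ℝ) (hC : 0 ≤ C) (hbdd : ∀ t y, |v t y| ≤ C) (x₀ : ℝ) :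
    ∃ X : ℝ → ℝ, X 0 = x₀ ∧ ∀ t, HasDerivAt X (v t (X t)) t := by
  have key : ∀ n : ℕ, ∃ X : ℝ → ℝ, X 0 = x₀ ∧
      ∀ t ∈ Icc (-(n + 1 : ℝ)) (n + 1), HasDerivWithinAt X (v t (X t))
        (Icc (-(n + 1 : ℝ)) (n + 1)) t := by
    intro n
    have hn1 : (0 : ℝ) ≤ (n : ℝ) + 1 := by positivity
    have hpl : IsPicardLindelof v (tmin := -(n + 1 : ℝ)) (tmax := n + 1)
        ⟨0, ⟨by linarith, by linarith⟩⟩ x₀ ⟨C * (n + 1), by positivity⟩ 0 ⟨C, hC⟩ K :=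
      { lipschitzOnWith := fun t _ => (hlip t).lipschitzOnWith
        continuousOn := fun y _ => (hcont y).continuousOn
        norm_le := fun t _ y _ => by rw [Real.norm_eq_abs]; exact hbdd t y
        mul_max_le := by simp; exact le_rfl }
    obtain ⟨X, h0, hD⟩ := hpl.exists_eq_forall_mem_Icc_hasDerivWithinAt₀
    exact ⟨X, h0, hD⟩
  choose sol hsol0 hsolD using key
  have huniq : ∀ m n : ℕ, ∀ t : ℝ, |t| < m + 1 → |t| < n + 1 → sol m t = sol n t := by
    intro m n t hm hn
    set T : ℝ := min ((m : ℝ) + 1) ((n : ℝ) + 1) with hT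
    have hT0 : 0 < T := by
      apply lt_min <;> positivity
    have hTm : T ≤ (m : ℝ) + 1 := min_le_left _ _
    have hTn : T ≤ (n : ℝ) + 1 := min_le_right _ _
    have hsub : ∀ (k : ℕ), T ≤ (k : ℝ) + 1 → Icc (-T) T ⊆ Icc (-(k + 1 : ℝ)) (k + 1) :=
      fun k hk => Icc_subset_Icc (by linarith) (by linarith)
    have hDk : ∀ (k : ℕ), T ≤ (k : ℝ) + 1 → ∀ u ∈ Ioo (-T) T,
        HasDerivAt (sol k) (v u (sol k u)) u := by
      intro k hk u hu
      have humem : u ∈ Icc (-(k + 1 : ℝ)) (k + 1) :=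
        ⟨by linarith [hu.1], by linarith [hu.2]⟩
      exact (hsolD k u humem).hasDerivAt
        (Icc_mem_nhds (by linarith [hu.1]) (by linarith [hu.2]))
    have hck : ∀ (k : ℕ), T ≤ (k : ℝ) + 1 → ContinuousOn (sol k) (Icc (-T) T) := by
      intro k hk u hu
      exact ((hsolD k u (hsub k hk hu)).continuousWithinAt).mono (hsub k hk)
    have h0mem : (0 : ℝ) ∈ Ioo (-T) T := ⟨by linarith, hT0⟩
    have heq0 : sol m 0 = sol n 0 := by rw [hsol0 m, hsol0 n]
    have := ODE_solution_unique_of_mem_Icc (v := v) (s := fun _ => (univ : Set ℝ))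
      (fun u _ => (hlip u).lipschitzOnWith) h0mem (hck m hTm) (hDk m hTm)
      (fun _ _ => mem_univ _) (hck n hTn) (hDk n hTn) (fun _ _ => mem_univ _) heq0
    have htmem : t ∈ Icc (-T) T := by
      rcases abs_lt.mp hm with ⟨h1, h2⟩
      rcases abs_lt.mp hn with ⟨h3, h4⟩
      constructor
      · rw [neg_le, hT]
        exact le_min (by linarith) (by linarith)
      · apply le_min <;> linarith
    exact this htmem
  refine ⟨fun t => sol ⌈|t|⌉₊ t, by simpa using hsol0 ⌈|(0 : ℝ)|⌉₊, ?_⟩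
  intro t
  set n : ℕ := ⌈|t|⌉₊ with hn
  have ht : |t| < (n : ℝ) + 1 := (Nat.le_ceil _).trans_lt (by linarith)
  have htIoo : t ∈ Ioo (-(n + 1 : ℝ)) (n + 1) := abs_lt.mp ht
  have heq : (fun s => sol ⌈|s|⌉₊ s) =ᶠ[nhds t] sol n := by
    filter_upwards [isOpen_Ioo.mem_nhds htIoo] with s hs
    have hs' : |s| < (n : ℝ) + 1 := abs_lt.mpr ⟨hs.1, hs.2⟩
    exact huniq ⌈|s|⌉₊ n s ((Nat.le_ceil _).trans_lt (by linarith)) hs'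
  have hD : HasDerivAt (sol n) (v t (sol n t)) t :=
    (hsolD n t (Ioo_subset_Icc_self htIoo)).hasDerivAt (Icc_mem_nhds htIoo.1 htIoo.2)
  have hX := hD.congr_of_eventuallyEq heq
  have hval : sol ⌈|t|⌉₊ t = sol n t := rfl
  rwa [← hval] at hX

/-- Forward invariance (upper bound). -/
private lemma forward_le (V : ℝ → ℝ → ℝ) (b : ℝ) (X : ℝ → ℝ)
    (hX : ∀ t, HasDerivAt X (V t (X t)) t)
    (hb : ∀ t y, b ≤ y → V t y < 0) (h0 : X 0 ≤ b) :
    ∀ t, 0 ≤ t → X t ≤ b := by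
  intro t₁ ht₁
  by_contra hcon
  push_neg at hcon
  have hXc : Continuous X := by
    rw [continuous_iff_continuousAt]; exact fun t => (hX t).continuousAt
  set S : Set ℝ := Icc 0 t₁ ∩ {u | X u ≤ b} with hSdef
  have hS0 : (0 : ℝ) ∈ S := ⟨⟨le_refl 0, ht₁⟩, h0⟩
  have hSc : IsCompact S := isCompact_Icc.inter_right (isClosed_le hXc continuous_const)
  have hsmem := hSc.sSup_mem ⟨0, hS0⟩
  set s : ℝ := sSup S with hs
  have hst : s < t₁ := lt_of_le_of_ne hsmem.1.2 (by
    intro hcontra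
    exact absurd hsmem.2 (by rw [hcontra]; exact not_le.mpr hcon))
  have hbddS : BddAbove S := ⟨t₁, fun u hu => hu.1.2⟩
  have hgt : ∀ u ∈ Ioc s t₁, b < X u := by
    intro u hu
    by_contra h'
    push_neg at h'
    have humem : u ∈ S := ⟨⟨hsmem.1.1.trans hu.1.le, hu.2⟩, h'⟩
    exact absurd (le_csSup hbddS humem) (not_le.mpr hu.1)
  have hanti : StrictAntiOn X (Icc s t₁) := by
    apply strictAntiOn_of_deriv_neg (convex_Icc _ _) hXc.continuousOn
    intro u hu
    rw [interior_Icc] at hu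
    rw [(hX u).deriv]
    exact hb u (X u) (hgt u ⟨hu.1, hu.2.le⟩).le
  have h2 := hanti ⟨le_refl s, hst.le⟩ ⟨hst.le, le_refl t₁⟩ hst
  have hXs : X s ≤ b := hsmem.2
  linarith

/-- Forward invariance (lower bound). -/
private lemma forward_ge (V : ℝ → ℝ → ℝ) (a : ℝ) (X : ℝ → ℝ)
    (hX : ∀ t, HasDerivAt X (V t (X t)) t)
    (ha : ∀ t y, y ≤ a → 0 < V t y) (h0 : a ≤ X 0) :
    ∀ t, 0 ≤ t → a ≤ X t := by
  have key := forward_le (fun t y => -V t (-y)) (-a) (fun t => -X t)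
    (fun t => by show HasDerivAt (fun u => -X u) (-V t (-(-X t))) t; rw [neg_neg]; exact (hX t).neg)
    (fun t y hy => by simpa using ha t (-y) (by linarith))
    (by simpa using h0)
  intro t ht
  have h7 : -X t ≤ -a := key t ht
  linarith

/-- Uniqueness of solutions for a globally Lipschitz field. -/
private lemma sol_unique (v : ℝ → ℝ → ℝ) (K : NNReal) (hlip : ∀ t, LipschitzWith K (v t))
    (X Y : ℝ → ℝ) (hX : ∀ t, HasDerivAt X (v t (X t)) t)
    (hY : ∀ t, HasDerivAt Y (v t (Y t)) t)
    (s : ℝ) (hs : X s = Y s) : ∀ t, X t = Y t := by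
  intro t
  set T : ℝ := |s| + |t| + 1 with hT
  have h1 := neg_abs_le s
  have h2 := le_abs_self s
  have h3 := neg_abs_le t
  have h4 := le_abs_self t
  have h5 := abs_nonneg s
  have h6 := abs_nonneg t
  have hsT : s ∈ Ioo (-T) T := ⟨by simp only [hT]; linarith, by simp only [hT]; linarith⟩
  have htT : t ∈ Icc (-T) T := ⟨by simp only [hT]; linarith, by simp only [hT]; linarith⟩
  have hXc : ContinuousOn X (Icc (-T) T) :=
    fun u _ => (hX u).continuousAt.continuousWithinAt
  have hYc : ContinuousOn Y (Icc (-T) T) :=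
    fun u _ => (hY u).continuousAt.continuousWithinAt
  exact ODE_solution_unique_of_mem_Icc (v := v) (s := fun _ => (univ : Set ℝ))
    (fun u _ => (hlip u).lipschitzOnWith) hsT hXc (fun u _ => hX u) (fun _ _ => mem_univ _)
    hYc (fun u _ => hY u) (fun _ _ => mem_univ _) hs htT

end PeriodicAux

theorem small_h_existence (f : ℝ → ℝ) (hf : ContDiff ℝ 1 f)
    (a b : ℝ) (hab : a < b)
    (hder : ∀ x ∈ Set.Ioo a b, deriv f x < 0)
    (hfa : 0 < f a) (hfb : f b < 0)
    (h : ℝ) (hh0 : 0 ≤ h) (hh : h < min (f a) (-f b)) :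
    ∃ x : ℝ → ℝ, IsPeriodicSolution f h x ∧ ∀ t, a ≤ x t ∧ x t ≤ b := by
  have hha : h < f a := lt_of_lt_of_le hh (min_le_left _ _)
  have hhb : h < -f b := lt_of_lt_of_le hh (min_le_right _ _)
  set F : ℝ → ℝ := fun y => f (clampI a b y) with hF
  set v : ℝ → ℝ → ℝ := fun t y => F y + h * Real.cos (2 * π * t) with hv
  -- Lipschitz constant for f on [a, b]
  have hderiv_cont : Continuous (deriv f) := hf.continuous_deriv le_rfl
  obtain ⟨Kr, hKr⟩ := isCompact_Icc.exists_bound_of_continuousOn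
    (s := Icc a b) hderiv_cont.continuousOn
  set K : NNReal := Real.toNNReal Kr with hK
  have hKbound : ∀ y ∈ Icc a b, ‖deriv f y‖₊ ≤ K := by
    intro y hy
    rw [← NNReal.coe_le_coe, coe_nnnorm, hK, Real.coe_toNNReal']
    exact le_trans (hKr y hy) (le_max_left _ _)
  have hlipf : LipschitzOnWith K f (Icc a b) :=
    (convex_Icc a b).lipschitzOnWith_of_nnnorm_hasDerivWithin_le
      (fun y _ => ((hf.differentiable one_ne_zero) y).hasDerivAt.hasDerivWithinAt) hKbound
  have hlipF : LipschitzWith K F := by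
    apply LipschitzWith.of_dist_le_mul
    intro y z
    calc dist (F y) (F z) ≤ K * dist (clampI a b y) (clampI a b z) :=
          hlipf.dist_le_mul _ (clampI_mem hab.le y) _ (clampI_mem hab.le z)
      _ ≤ K * dist y z := by
          have h1 := (lipschitz_clampI a b).dist_le_mul y z
          have hK0 : (0 : ℝ) ≤ (K : ℝ) := K.coe_nonneg
          have h2 : dist (clampI a b y) (clampI a b z) ≤ dist y z := by simpa using h1
          exact mul_le_mul_of_nonneg_left h2 hK0
  have hlipv : ∀ t, LipschitzWith K (v t) := by
    intro t
    apply LipschitzWith.of_dist_le_mul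
    intro y z
    have := hlipF.dist_le_mul y z
    simpa [hv, Real.dist_eq, add_sub_add_right_eq_sub] using this
  have hcont_t : ∀ y, Continuous fun t => v t y := by
    intro y
    apply continuous_const.add
    exact continuous_const.mul (Real.continuous_cos.comp (continuous_const.mul continuous_id))
  -- bound
  obtain ⟨M, hM⟩ := isCompact_Icc.exists_bound_of_continuousOn
    (s := Icc a b) hf.continuous.continuousOn
  have hM0 : 0 ≤ M := le_trans (norm_nonneg _) (hM a ⟨le_refl a, hab.le⟩)
  have hbddv : ∀ t y, |v t y| ≤ M + h := by
    intro t y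
    have h1 : |F y| ≤ M := by
      simpa [Real.norm_eq_abs] using hM _ (clampI_mem hab.le y)
    have h2 : |h * Real.cos (2 * π * t)| ≤ h := by
      rw [abs_mul, abs_of_nonneg hh0]
      calc h * |Real.cos (2 * π * t)| ≤ h * 1 :=
            mul_le_mul_of_nonneg_left (Real.abs_cos_le_one _) hh0
        _ = h := mul_one h
    calc |v t y| ≤ |F y| + |h * Real.cos (2 * π * t)| := abs_add_le _ _
      _ ≤ M + h := add_le_add h1 h2
  have hCnn : (0 : ℝ) ≤ M + h := by linarith
  -- solutions through any initial point
  have hex : ∀ x₀ : ℝ, ∃ X : ℝ → ℝ, X 0 = x₀ ∧ ∀ t, HasDerivAt X (v t (X t)) t :=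
    fun x₀ => exists_global_solution v K hlipv hcont_t (M + h) hCnn hbddv x₀
  choose sol hsol0 hsolD using hex
  -- the vector field points inward at the boundary
  have hVneg : ∀ t y, b ≤ y → v t y < 0 := by
    intro t y hy
    have hclamp : clampI a b y = b := clampI_of_le hab.le hy
    have hcos : h * Real.cos (2 * π * t) ≤ h := by
      calc h * Real.cos (2 * π * t) ≤ h * 1 :=
            mul_le_mul_of_nonneg_left (Real.cos_le_one _) hh0
        _ = h := mul_one h
    have : v t y = f b + h * Real.cos (2 * π * t) := by simp [hv, hF, hclamp]
    rw [this]
    linarith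
  have hVpos : ∀ t y, y ≤ a → 0 < v t y := by
    intro t y hy
    have hclamp : clampI a b y = a := clampI_of_ge hab.le hy
    have hcos : -h ≤ h * Real.cos (2 * π * t) := by
      have := mul_le_mul_of_nonneg_left (Real.neg_one_le_cos (2 * π * t)) hh0
      linarith
    have : v t y = f a + h * Real.cos (2 * π * t) := by simp [hv, hF, hclamp]
    rw [this]
    linarith
  -- invariance of [a, b]
  have hinv : ∀ y ∈ Icc a b, ∀ t, 0 ≤ t → sol y t ∈ Icc a b := by
    intro y hy t ht
    constructor
    · exact forward_ge v a (sol y) (hsolD y) hVpos (by rw [hsol0 y]; exact hy.1) t ht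
    · exact forward_le v b (sol y) (hsolD y) hVneg (by rw [hsol0 y]; exact hy.2) t ht
  -- Poincaré map
  set P : ℝ → ℝ := fun y => sol y 1 with hP
  have hPmem : ∀ y ∈ Icc a b, P y ∈ Icc a b := fun y hy => hinv y hy 1 zero_le_one
  have hmono : ∀ y z, y ≤ z → P y ≤ P z := by
    intro y z hyz
    by_contra hcon
    push_neg at hcon
    have hcY : Continuous (sol y) := by
      rw [continuous_iff_continuousAt]; exact fun t => (hsolD y t).continuousAt
    have hcZ : Continuous (sol z) := by
      rw [continuous_iff_continuousAt]; exact fun t => (hsolD z t).continuousAt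
    have hcg : ContinuousOn (fun t => sol y t - sol z t) (Icc (0 : ℝ) 1) :=
      (hcY.sub hcZ).continuousOn
    have ivt := intermediate_value_Icc (zero_le_one) hcg
    have h0mem : (0 : ℝ) ∈ Icc (sol y 0 - sol z 0) (sol y 1 - sol z 1) := by
      rw [hsol0 y, hsol0 z]
      constructor
      · linarith
      · have : sol z 1 < sol y 1 := hcon
        linarith
    obtain ⟨s, _, hgs⟩ := ivt h0mem
    have hgs' : sol y s - sol z s = 0 := hgs
    have heqs : sol y s = sol z s := by linarith
    have := sol_unique v K hlipv (sol y) (sol z) (hsolD y) (hsolD z) s heqs 1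
    have hcon' : sol z 1 < sol y 1 := hcon
    linarith
  -- fixed point of the Poincaré map via sup
  set S : Set ℝ := {y | y ∈ Icc a b ∧ y ≤ P y} with hS
  have haS : a ∈ S := ⟨⟨le_refl a, hab.le⟩, (hPmem a ⟨le_refl a, hab.le⟩).1⟩
  have hbddS : BddAbove S := ⟨b, fun y hy => hy.1.2⟩
  set c : ℝ := sSup S with hc
  have hca : a ≤ c := le_csSup hbddS haS
  have hcb : c ≤ b := csSup_le ⟨a, haS⟩ (fun y hy => hy.1.2)
  have hcmem : c ∈ Icc a b := ⟨hca, hcb⟩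
  have hcP : c ≤ P c := by
    apply csSup_le ⟨a, haS⟩
    intro y hy
    exact le_trans hy.2 (hmono y c (le_csSup hbddS hy))
  have hPc : P c ≤ c := le_csSup hbddS ⟨hPmem c hcmem, hmono c (P c) hcP⟩
  have hfix : sol c 1 = c := le_antisymm hPc hcP
  -- periodicity
  set X : ℝ → ℝ := sol c with hX
  have hXD : ∀ t, HasDerivAt X (v t (X t)) t := hsolD c
  have hper1 : ∀ t, X (t + 1) = X t := by
    have hYD : ∀ t, HasDerivAt (fun u => X (u + 1)) (v t (X (t + 1))) t := by
      intro t
      have h1 : HasDerivAt (fun u : ℝ => u + 1) 1 t := (hasDerivAt_id t).add_const 1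
      have h2 := (hXD (t + 1)).comp t h1
      have hcos : Real.cos (2 * π * (t + 1)) = Real.cos (2 * π * t) := by
        have harg : 2 * π * (t + 1) = 2 * π * t + 2 * π := by ring
        rw [harg, Real.cos_add_two_pi]
      have hveq : v (t + 1) (X (t + 1)) = v t (X (t + 1)) := by
        simp only [hv, hcos]
      rw [mul_one] at h2
      rw [← hveq]
      exact h2
    have hY0 : (fun u => X (u + 1)) 0 = X 0 := by
      simp only [zero_add]
      rw [hX, hsol0 c]
      exact hfix
    exact sol_unique v K hlipv (fun u => X (u + 1)) X hYD hXD 0 hY0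
  have hperN : ∀ (n : ℕ) (t : ℝ), X (t + n) = X t := by
    intro n
    induction n with
    | zero => intro t; simp
    | succ k ih =>
      intro t
      have : t + (k + 1 : ℕ) = (t + k) + 1 := by push_cast; ring
      rw [this, hper1 (t + k), ih t]
  have hmemX : ∀ t, X t ∈ Icc a b := by
    intro t
    set n : ℕ := ⌈-t⌉₊ with hn
    have hge : (0 : ℝ) ≤ t + n := by
      have := Nat.le_ceil (-t)
      linarith
    have := hinv c hcmem (t + n) hge
    rw [← hX] at this
    rwa [hperN n t] at this
  refine ⟨X, ⟨?_, ?_, hper1⟩, fun t => ⟨(hmemX t).1, (hmemX t).2⟩⟩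
  · exact fun t => (hXD t).differentiableAt
  · intro t
    rw [(hXD t).deriv]
    show F (X t) + h * Real.cos (2 * π * t) = f (X t) + h * Real.cos (2 * π * t)
    rw [hF]
    simp only [clampI_eq (hmemX t)]
end

section
/- Let f : ℝ → ℝ be continuously differentiable, let a < b, and suppose f'(x) < 0 for all x ∈ (a,b) and f(a) > 0 > f(b). Put h₀ = min(f(a), −f(b)). Then for every h with 0 ≤ h < h₀, every 1-periodic solution x of the equation x' = f(x) + h·cos(2πt) that satisfies a ≤ x(t) ≤ b for all t ∈ ℝ in fact satisfies a < x(t) < b for all t and is stable, i.e. ∫₀¹ f'(x(s)) ds < 0. -/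
open Real

theorem small_h_stability (f : ℝ → ℝ) (hf : ContDiff ℝ 1 f)
    (a b : ℝ) (hab : a < b)
    (hder : ∀ x ∈ Set.Ioo a b, deriv f x < 0)
    (hfa : 0 < f a) (hfb : f b < 0)
    (h : ℝ) (hh0 : 0 ≤ h) (hh : h < min (f a) (-f b))
    (x : ℝ → ℝ) (hx : IsPeriodicSolution f h x)
    (hrange : ∀ t, a ≤ x t ∧ x t ≤ b) :
    (∀ t, a < x t ∧ x t < b) ∧ (∫ s in (0:ℝ)..1, deriv f (x s)) < 0 := by
  obtain ⟨hxdiff, hxde, hxper⟩ := hx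
  have hha : h < f a := lt_of_lt_of_le hh (min_le_left _ _)
  have hhb : h < -f b := lt_of_lt_of_le hh (min_le_right _ _)
  have hstrict : ∀ t, a < x t ∧ x t < b := by
    intro t
    constructor
    · rcases lt_or_eq_of_le (hrange t).1 with h' | h'
      · exact h'
      · exfalso
        have hmin : IsLocalMin x t :=
          Filter.Eventually.of_forall (fun s => h' ▸ (hrange s).1)
        have h0 : deriv x t = 0 := hmin.deriv_eq_zero
        rw [hxde t, ← h'] at h0
        have hcos : -1 ≤ Real.cos (2 * Real.pi * t) := neg_one_le_cos _
        nlinarith [mul_nonneg hh0 (by linarith : (0:ℝ) ≤ Real.cos (2 * Real.pi * t) + 1)]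
    · rcases lt_or_eq_of_le (hrange t).2 with h' | h'
      · exact h'
      · exfalso
        have hmax : IsLocalMax x t :=
          Filter.Eventually.of_forall (fun s => h' ▸ (hrange s).2)
        have h0 : deriv x t = 0 := hmax.deriv_eq_zero
        rw [hxde t, h'] at h0
        have hcos : Real.cos (2 * Real.pi * t) ≤ 1 := cos_le_one _
        nlinarith [mul_nonneg hh0 (by linarith : (0:ℝ) ≤ 1 - Real.cos (2 * Real.pi * t))]
  refine ⟨hstrict, ?_⟩
  have hc : Continuous fun s => deriv f (x s) :=
    (hf.continuous_deriv le_rfl).comp hxdiff.continuous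
  have hpos :
      (0:ℝ) < ∫ s in (0:ℝ)..1, -(deriv f (x s)) := by
    apply intervalIntegral.intervalIntegral_pos_of_pos_on
    · exact (hc.neg).intervalIntegrable _ _
    · intro s _
      have := hder (x s) ⟨(hstrict s).1, (hstrict s).2⟩
      linarith
    · norm_num
  rw [intervalIntegral.integral_neg] at hpos
  linarith
end

section
/- Let f : ℝ → ℝ be continuously differentiable, let a < b, and suppose f'(x) < 0 for all x ∈ (a,b) and f(a) > 0 > f(b). Put h₀ = min(f(a), −f(b)). Then for every h with 0 ≤ h < h₀ there is a unique 1-periodic solution x of the equation x' = f(x) + h·cos(2πt) satisfying a ≤ x(t) ≤ b for all t ∈ ℝ; that is, any two 1-periodic solutions whose values all lie in [a,b] are equal. -/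
open Real

namespace SmallHAux

open MeasureTheory Set Filter Topology

lemma ker_hasDerivAt {L : ℝ} (hL : 0 < L) (u x : ℝ) :
    HasDerivAt (fun s => Real.exp (L * (s - u)) / L) (Real.exp (L * (x - u))) x := by
  have h1 : HasDerivAt (fun s : ℝ => L * (s - u)) L x := by
    simpa using ((hasDerivAt_id x).sub_const u).const_mul L
  have h2 := h1.exp.div_const L
  simpa [mul_div_assoc, div_self hL.ne'] using h2

lemma ker_intervalIntegral {L : ℝ} (hL : 0 < L) (u c t : ℝ) :
    ∫ x in c..t, Real.exp (L * (x - u)) =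
      (Real.exp (L * (t - u)) - Real.exp (L * (c - u))) / L := by
  rw [intervalIntegral.integral_eq_sub_of_hasDerivAt
    (fun x _ => ker_hasDerivAt hL u x)
    ((Real.continuous_exp.comp (by fun_prop)).intervalIntegrable c t)]
  ring

lemma ker_integrableOn {L : ℝ} (hL : 0 < L) (u t : ℝ) :
    IntegrableOn (fun s => Real.exp (L * (s - u))) (Iic t) := by
  refine integrableOn_Iic_of_intervalIntegral_norm_bounded
    (Real.exp (L * (t - u)) / L) t
    (fun i => (Real.continuous_exp.comp (by fun_prop)).integrableOn_Ioc)
    tendsto_id ?_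
  filter_upwards with c
  have h1 : (∫ x in c..t, ‖Real.exp (L * (x - u))‖)
      = ∫ x in c..t, Real.exp (L * (x - u)) := by
    congr 1
    funext x
    exact Real.norm_of_nonneg (Real.exp_pos _).le
  simp only [id] at *
  rw [h1, ker_intervalIntegral hL]
  have h2 := (Real.exp_pos (L * (c - u))).le
  gcongr
  linarith

lemma ker_setIntegral {L : ℝ} (hL : 0 < L) (t : ℝ) :
    ∫ s in Iic t, Real.exp (L * (s - t)) = 1 / L := by
  have htend : Tendsto (fun s => Real.exp (L * (s - t)) / L) atBot (𝓝 0) := by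
    have h1 : Tendsto (fun s : ℝ => L * (s - t)) atBot atBot := by
      have h0 : Tendsto (fun s : ℝ => s - t) atBot atBot := by
        simpa [sub_eq_add_neg] using tendsto_atBot_add_const_right atBot (-t) tendsto_id
      exact h0.const_mul_atBot hL
    have h2 := (Real.tendsto_exp_atBot.comp h1).div_const L
    simpa using h2
  have := MeasureTheory.integral_Iic_of_hasDerivAt_of_tendsto'
    (fun x _ => ker_hasDerivAt hL t x) (ker_integrableOn hL t t) htend
  simpa using this

noncomputable def Gop (L : ℝ) (w : ℝ → ℝ) (t : ℝ) : ℝ :=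
  ∫ s in Iic t, Real.exp (L * s) * w s

noncomputable def Top (L : ℝ) (w : ℝ → ℝ) (t : ℝ) : ℝ :=
  Real.exp (-(L * t)) * Gop L w t

variable {L C : ℝ} {w : ℝ → ℝ}

lemma shift_integrableOn (hL : 0 < L) (mw : Measurable w) (bw : ∀ s, |w s| ≤ C)
    (u t : ℝ) : IntegrableOn (fun s => Real.exp (L * (s - u)) * w s) (Iic t) := by
  refine Integrable.mono' ((ker_integrableOn hL u t).const_mul C) ?_ ?_
  · exact ((Real.measurable_exp.comp (by fun_prop)).mul mw).aestronglyMeasurable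
  · filter_upwards with s
    have h1 : ‖Real.exp (L * (s - u)) * w s‖ = Real.exp (L * (s - u)) * |w s| := by
      rw [norm_mul, Real.norm_of_nonneg (Real.exp_pos _).le, Real.norm_eq_abs]
    rw [h1, mul_comm C]
    exact mul_le_mul_of_nonneg_left (bw s) (Real.exp_pos _).le

lemma G_integrableOn (hL : 0 < L) (mw : Measurable w) (bw : ∀ s, |w s| ≤ C)
    (t : ℝ) : IntegrableOn (fun s => Real.exp (L * s) * w s) (Iic t) := by
  have := shift_integrableOn hL mw bw 0 t
  simpa using this

lemma Top_eq (L : ℝ) (w : ℝ → ℝ) (t : ℝ) :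
    Top L w t = ∫ s in Iic t, Real.exp (L * (s - t)) * w s := by
  unfold Top Gop
  rw [← MeasureTheory.integral_const_mul]
  congr 1
  funext s
  rw [← mul_assoc, ← Real.exp_add]
  ring_nf

lemma Top_le (hL : 0 < L) (mw : Measurable w) (bw : ∀ s, |w s| ≤ C)
    {M : ℝ} (hM : ∀ s, w s ≤ M) (t : ℝ) : Top L w t ≤ M / L := by
  rw [Top_eq]
  have h1 : (∫ s in Iic t, Real.exp (L * (s - t)) * w s)
      ≤ ∫ s in Iic t, Real.exp (L * (s - t)) * M :=
    setIntegral_mono_on (shift_integrableOn hL mw bw t t)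
      ((ker_integrableOn hL t t).mul_const M) measurableSet_Iic
      (fun s _ => mul_le_mul_of_nonneg_left (hM s) (Real.exp_pos _).le)
  have h2 : (∫ s in Iic t, Real.exp (L * (s - t)) * M) = M / L := by
    rw [MeasureTheory.integral_mul_const, ker_setIntegral hL]
    ring
  linarith

lemma Top_ge (hL : 0 < L) (mw : Measurable w) (bw : ∀ s, |w s| ≤ C)
    {m : ℝ} (hm : ∀ s, m ≤ w s) (t : ℝ) : m / L ≤ Top L w t := by
  rw [Top_eq]
  have h1 : (∫ s in Iic t, Real.exp (L * (s - t)) * m)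
      ≤ ∫ s in Iic t, Real.exp (L * (s - t)) * w s :=
    setIntegral_mono_on ((ker_integrableOn hL t t).mul_const m)
      (shift_integrableOn hL mw bw t t) measurableSet_Iic
      (fun s _ => mul_le_mul_of_nonneg_left (hm s) (Real.exp_pos _).le)
  have h2 : (∫ s in Iic t, Real.exp (L * (s - t)) * m) = m / L := by
    rw [MeasureTheory.integral_mul_const, ker_setIntegral hL]
    ring
  linarith

lemma Top_mono (hL : 0 < L) {w₁ w₂ : ℝ → ℝ} {C₁ C₂ : ℝ}
    (mw₁ : Measurable w₁) (bw₁ : ∀ s, |w₁ s| ≤ C₁)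
    (mw₂ : Measurable w₂) (bw₂ : ∀ s, |w₂ s| ≤ C₂)
    (hw : ∀ s, w₁ s ≤ w₂ s) (t : ℝ) : Top L w₁ t ≤ Top L w₂ t := by
  rw [Top_eq, Top_eq]
  exact setIntegral_mono_on (shift_integrableOn hL mw₁ bw₁ t t)
    (shift_integrableOn hL mw₂ bw₂ t t) measurableSet_Iic
    (fun s _ => mul_le_mul_of_nonneg_left (hw s) (Real.exp_pos _).le)

lemma Top_periodic (hL : 0 < L) (pw : ∀ s, w (s + 1) = w s) (t : ℝ) :
    Top L w (t + 1) = Top L w t := by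
  rw [Top_eq, Top_eq]
  have hemb : MeasurableEmbedding (· + (1:ℝ)) :=
    (MeasurableEquiv.addRight (1:ℝ)).measurableEmbedding
  have key := (measurePreserving_add_right volume (1:ℝ)).setIntegral_preimage_emb hemb
    (fun s => Real.exp (L * (s - (t + 1))) * w s) (Iic (t + 1))
  have hpre : (· + (1:ℝ)) ⁻¹' Iic (t + 1) = Iic t := by
    ext x; simp
  rw [hpre] at key
  rw [← key]
  congr 1
  funext x
  rw [pw x]
  ring_nf

lemma Top_hasDerivAt (hL : 0 < L) (mw : Measurable w) (bw : ∀ s, |w s| ≤ C)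
    (cw : Continuous w) (t : ℝ) :
    HasDerivAt (Top L w) (w t - L * Top L w t) t := by
  have hφcont : Continuous (fun s => Real.exp (L * s) * w s) := by fun_prop
  have heq : Gop L w = fun u => Gop L w t + ∫ s in t..u, Real.exp (L * s) * w s := by
    funext u
    have := intervalIntegral.integral_Iic_sub_Iic (G_integrableOn hL mw bw t)
      (G_integrableOn hL mw bw u)
    unfold Gop
    linarith
  have hGder : HasDerivAt (Gop L w) (Real.exp (L * t) * w t) t := by
    rw [heq]
    exact HasDerivAt.const_add _
      (intervalIntegral.integral_hasDerivAt_right (hφcont.intervalIntegrable _ _)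
        (hφcont.stronglyMeasurableAtFilter _ _) hφcont.continuousAt)
  have hEder : HasDerivAt (fun u => Real.exp (-(L * u))) (-L * Real.exp (-(L * t))) t := by
    have h1 : HasDerivAt (fun u : ℝ => -(L * u)) (-L) t := by
      simpa using ((hasDerivAt_id t).const_mul (-L)).congr_deriv (by ring)
    simpa [mul_comm] using h1.exp
  have hmul := hEder.mul hGder
  have hval : -L * Real.exp (-(L * t)) * Gop L w t
      + Real.exp (-(L * t)) * (Real.exp (L * t) * w t) = w t - L * Top L w t := by
    have h1 : Real.exp (-(L * t)) * Real.exp (L * t) = 1 := by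
      rw [← Real.exp_add, neg_add_cancel, Real.exp_zero]
    unfold Top
    linear_combination (w t) * h1
  rw [hval] at hmul
  exact hmul

lemma exists_sol (f : ℝ → ℝ) (hf : ContDiff ℝ 1 f)
    (a b : ℝ) (hab : a < b)
    (hfa : 0 < f a) (hfb : f b < 0)
    (h : ℝ) (hh0 : 0 ≤ h) (hh : h < min (f a) (-f b)) :
    ∃ x : ℝ → ℝ, IsPeriodicSolution f h x ∧ ∀ t, a ≤ x t ∧ x t ≤ b := by
  have hfc : Continuous f := hf.continuous
  have hf'c : Continuous (deriv f) := hf.continuous_deriv le_rfl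
  obtain ⟨M, hM⟩ := isCompact_Icc.exists_bound_of_continuousOn (s := Icc a b) hf'c.continuousOn
  have hM0 : 0 ≤ M := le_trans (norm_nonneg _) (hM a ⟨le_rfl, hab.le⟩)
  set L : ℝ := M + 1 with hLdef
  have hL : 0 < L := by simp only [hLdef]; linarith
  set c : ℝ → ℝ := fun u => max a (min u b) with hcdef
  have hc_mem : ∀ u, c u ∈ Icc a b := fun u => ⟨le_max_left _ _, max_le hab.le (min_le_right u b)⟩
  have hc_mono : Monotone c := fun u v huv => max_le_max le_rfl (min_le_min huv le_rfl)
  have hc_id : ∀ u, a ≤ u → u ≤ b → c u = u := by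
    intro u h1 h2
    simp only [hcdef]
    rw [min_eq_left h2, max_eq_right h1]
  have hc_cont : Continuous c := continuous_const.max (continuous_id.min continuous_const)
  have hfdiff : Differentiable ℝ f := hf.differentiable one_ne_zero
  have hφmono : MonotoneOn (fun u => f u + L * u) (Icc a b) := by
    have hcontLu : Continuous (fun u : ℝ => f u + L * u) := by fun_prop
    have hdiffLu : Differentiable ℝ (fun u : ℝ => f u + L * u) := by fun_prop
    apply monotoneOn_of_deriv_nonneg (convex_Icc a b)
      hcontLu.continuousOn hdiffLu.differentiableOn
    intro x hx
    rw [interior_Icc] at hx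
    have hd : deriv (fun u => f u + L * u) x = deriv f x + L := by
      have h2 : HasDerivAt (fun u : ℝ => L * u) L x := by
        simpa using (hasDerivAt_id x).const_mul L
      exact ((hfdiff x).hasDerivAt.add h2).deriv
    rw [hd]
    have h1 := hM x (Ioo_subset_Icc_self hx)
    rw [Real.norm_eq_abs] at h1
    have h2 := (abs_le.1 h1).1
    simp only [hLdef]
    linarith
  set F : ℝ → ℝ := fun u => f (c u) + L * c u with hFdef
  have hFmono : Monotone F := fun u v huv => hφmono (hc_mem u) (hc_mem v) (hc_mono huv)
  have hFcont : Continuous F := (hfc.comp hc_cont).add (continuous_const.mul hc_cont)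
  have hFub : ∀ u, F u ≤ f b + L * b := fun u =>
    hφmono (hc_mem u) (right_mem_Icc.2 hab.le) (hc_mem u).2
  have hFlb : ∀ u, f a + L * a ≤ F u := fun u =>
    hφmono (left_mem_Icc.2 hab.le) (hc_mem u) (hc_mem u).1
  have hFid : ∀ u, a ≤ u → u ≤ b → F u = f u + L * u := by
    intro u h1 h2
    simp only [hFdef]
    rw [hc_id u h1 h2]
  have hha : h < f a := lt_of_lt_of_le hh (min_le_left _ _)
  have hhb : h < -f b := lt_of_lt_of_le hh (min_le_right _ _)
  set G : (ℝ → ℝ) → ℝ → ℝ := fun x s => F (x s) + h * Real.cos (2 * Real.pi * s) with hGdef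
  have hcos_bd : ∀ s : ℝ, -h ≤ h * Real.cos (2 * Real.pi * s)
      ∧ h * Real.cos (2 * Real.pi * s) ≤ h := by
    intro s
    constructor
    · nlinarith [Real.neg_one_le_cos (2 * Real.pi * s)]
    · nlinarith [Real.cos_le_one (2 * Real.pi * s)]
  have hGlb : ∀ x s, L * a ≤ G x s := by
    intro x s
    have h1 := (hcos_bd s).1
    have h2 := hFlb (x s)
    simp only [hGdef]
    linarith
  have hGub : ∀ x s, G x s ≤ L * b := by
    intro x s
    have h1 := (hcos_bd s).2
    have h2 := hFub (x s)
    simp only [hGdef]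
    linarith
  set C₀ : ℝ := |L * a| + |L * b| with hC0def
  have hGbd : ∀ x s, |G x s| ≤ C₀ := by
    intro x s
    rw [abs_le]
    constructor
    · have h1 := neg_abs_le (L * a); have h2 := abs_nonneg (L * b); have h3 := hGlb x s
      simp only [hC0def]; linarith
    · have h1 := le_abs_self (L * b); have h2 := abs_nonneg (L * a); have h3 := hGub x s
      simp only [hC0def]; linarith
  have hGmeas : ∀ {x : ℝ → ℝ}, Measurable x → Measurable (G x) := by
    intro x hx
    exact (hFcont.measurable.comp hx).add (by fun_prop)
  have hGcont : ∀ {x : ℝ → ℝ}, Continuous x → Continuous (G x) := by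
    intro x hx
    exact (hFcont.comp hx).add (by fun_prop)
  have hGper : ∀ {x : ℝ → ℝ}, (∀ t, x (t + 1) = x t) → ∀ s, G x (s + 1) = G x s := by
    intro x hx s
    simp only [hGdef, hx s]
    congr 1
    rw [mul_add, mul_one, Real.cos_add_two_pi]
  have hGmono : ∀ {x y : ℝ → ℝ}, (∀ s, x s ≤ y s) → ∀ s, G x s ≤ G y s := by
    intro x y hxy s
    exact add_le_add_left (hFmono (hxy s)) _
  set X : ℕ → ℝ → ℝ := fun n => Nat.rec (motive := fun _ => ℝ → ℝ) (fun _ => a)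
    (fun _ xp => Top L (G xp)) n with hXdef
  have hXs : ∀ n, X (n + 1) = Top L (G (X n)) := fun n => rfl
  have hX0 : ∀ t, X 0 t = a := fun t => rfl
  have hLa : L * a / L = a := by field_simp
  have hLb : L * b / L = b := by field_simp
  have main : ∀ n, Continuous (X n) ∧ (∀ t, a ≤ X n t ∧ X n t ≤ b)
      ∧ (∀ t, X n (t + 1) = X n t) := by
    intro n
    induction n with
    | zero => exact ⟨continuous_const, fun t => ⟨le_rfl, hab.le⟩, fun t => rfl⟩
    | succ n ih =>
      obtain ⟨hcont, hbdd, hper⟩ := ih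
      have hm := hGmeas hcont.measurable
      have hbG := hGbd (X n)
      have hd : ∀ t, HasDerivAt (X (n + 1)) (G (X n) t - L * X (n + 1) t) t := by
        intro t
        rw [hXs n]
        exact Top_hasDerivAt hL hm hbG (hGcont hcont) t
      refine ⟨continuous_iff_continuousAt.2 fun t => (hd t).continuousAt, ?_, ?_⟩
      · intro t
        constructor
        · have h1 := Top_ge hL hm hbG (hGlb (X n)) t
          rw [hLa] at h1
          rw [hXs n]
          exact h1
        · have h1 := Top_le hL hm hbG (hGub (X n)) t
          rw [hLb] at h1
          rw [hXs n]
          exact h1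
      · intro t
        rw [hXs n]
        exact Top_periodic hL (hGper hper) t
  have mono : ∀ n t, X n t ≤ X (n + 1) t := by
    intro n
    induction n with
    | zero => exact fun t => ((main 1).2.1 t).1
    | succ n ih =>
      intro t
      rw [hXs n, hXs (n + 1)]
      exact Top_mono hL (hGmeas (main n).1.measurable) (hGbd (X n))
        (hGmeas (main (n + 1)).1.measurable) (hGbd (X (n + 1))) (hGmono ih) t
  have monot : ∀ t, Monotone fun n => X n t :=
    fun t => monotone_nat_of_le_succ (fun n => mono n t)
  have bdd : ∀ t, BddAbove (Set.range fun n => X n t) := by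
    intro t
    refine ⟨b, ?_⟩
    rintro v ⟨n, rfl⟩
    exact ((main n).2.1 t).2
  set xs : ℝ → ℝ := fun t => ⨆ n, X n t with hxsdef
  have hlim : ∀ t, Tendsto (fun n => X n t) atTop (𝓝 (xs t)) :=
    fun t => tendsto_atTop_ciSup (monot t) (bdd t)
  have hxs_lb : ∀ t, a ≤ xs t := fun t => le_ciSup (bdd t) 0
  have hxs_ub : ∀ t, xs t ≤ b := fun t => ciSup_le fun n => ((main n).2.1 t).2
  have hxs_per : ∀ t, xs (t + 1) = xs t := by
    intro t
    simp only [hxsdef]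
    congr 1
    funext n
    exact (main n).2.2 t
  have hxs_meas : Measurable xs :=
    measurable_of_tendsto_metrizable' atTop (fun n => (main n).1.measurable)
      (tendsto_pi_nhds.2 hlim)
  have hfix : ∀ t, xs t = Top L (G xs) t := by
    intro t
    have h1 : Tendsto (fun n => X (n + 1) t) atTop (𝓝 (xs t)) :=
      (hlim t).comp (tendsto_add_atTop_nat 1)
    have h2 : Tendsto (fun n => Top L (G (X n)) t) atTop (𝓝 (Top L (G xs) t)) := by
      have he1 : (fun n => Top L (G (X n)) t)
          = fun n => ∫ s in Iic t, Real.exp (L * (s - t)) * G (X n) s :=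
        funext fun n => Top_eq L (G (X n)) t
      rw [he1, Top_eq]
      apply MeasureTheory.tendsto_integral_of_dominated_convergence
        (fun s => C₀ * Real.exp (L * (s - t)))
      · intro n
        exact ((Real.continuous_exp.comp (by fun_prop : Continuous fun s : ℝ => L * (s - t))).mul
          (hGcont (main n).1)).aestronglyMeasurable
      · exact (ker_integrableOn hL t t).const_mul C₀
      · intro n
        filter_upwards with s
        rw [norm_mul, Real.norm_of_nonneg (Real.exp_pos _).le, Real.norm_eq_abs, mul_comm C₀]
        exact mul_le_mul_of_nonneg_left (hGbd (X n) s) (Real.exp_pos _).le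
      · filter_upwards with s
        have hG : Tendsto (fun n => G (X n) s) atTop (𝓝 (G xs s)) := by
          simp only [hGdef]
          exact ((hFcont.tendsto (xs s)).comp (hlim s)).add_const _
        exact hG.const_mul _
    have h3 : (fun n => X (n + 1) t) = fun n => Top L (G (X n)) t :=
      funext fun n => by rw [hXs n]
    rw [h3] at h1
    exact tendsto_nhds_unique h1 h2
  set K : ℝ := C₀ + L * (|a| + |b|) with hKdef
  have habsv : ∀ v : ℝ, a ≤ v → v ≤ b → |v| ≤ |a| + |b| := by
    intro v h1 h2
    rw [abs_le]
    constructor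
    · have := neg_abs_le a; have := abs_nonneg b; linarith
    · have := le_abs_self b; have := abs_nonneg a; linarith
  have hlip : ∀ n (s t : ℝ), |X (n + 1) t - X (n + 1) s| ≤ K * |t - s| := by
    intro n s t
    have hm := hGmeas (main n).1.measurable
    have hbG := hGbd (X n)
    have hd : ∀ u, HasDerivAt (X (n + 1)) (G (X n) u - L * X (n + 1) u) u := by
      intro u
      rw [hXs n]
      exact Top_hasDerivAt hL hm hbG (hGcont (main n).1) u
    have hbd2 : ∀ u ∈ (Set.univ : Set ℝ), ‖G (X n) u - L * X (n + 1) u‖ ≤ K := by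
      intro u _
      rw [Real.norm_eq_abs]
      have h1 := hGbd (X n) u
      have h2 := habsv (X (n + 1) u) ((main (n + 1)).2.1 u).1 ((main (n + 1)).2.1 u).2
      have h3 : |G (X n) u - L * X (n + 1) u| ≤ |G (X n) u| + |L * X (n + 1) u| :=
        abs_sub _ _
      have h4 : |L * X (n + 1) u| = L * |X (n + 1) u| := by
        rw [abs_mul, abs_of_pos hL]
      have h5 : L * |X (n + 1) u| ≤ L * (|a| + |b|) :=
        mul_le_mul_of_nonneg_left h2 hL.le
      simp only [hKdef]
      linarith
    have := convex_univ.norm_image_sub_le_of_norm_hasDerivWithin_le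
      (fun u _ => (hd u).hasDerivWithinAt) hbd2 (Set.mem_univ s) (Set.mem_univ t)
    simpa [Real.norm_eq_abs] using this
  have hxlip : ∀ s t : ℝ, |xs t - xs s| ≤ K * |t - s| := by
    intro s t
    have h1 : Tendsto (fun n => |X (n + 1) t - X (n + 1) s|) atTop (𝓝 |xs t - xs s|) :=
      (((hlim t).comp (tendsto_add_atTop_nat 1)).sub
        ((hlim s).comp (tendsto_add_atTop_nat 1))).abs
    exact le_of_tendsto h1 (Filter.Eventually.of_forall fun n => hlip n s t)
  have hK0 : 0 ≤ K := by
    have := abs_nonneg (L * a); have := abs_nonneg (L * b)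
    have := abs_nonneg a; have := abs_nonneg b
    have h1 : 0 ≤ L * (|a| + |b|) := by positivity
    simp only [hKdef, hC0def]
    linarith
  have hxscont : Continuous xs := by
    have hl : LipschitzWith (Real.toNNReal K) xs := by
      apply LipschitzWith.of_dist_le_mul
      intro t s
      rw [Real.dist_eq, Real.dist_eq]
      calc |xs t - xs s| ≤ K * |t - s| := hxlip s t
        _ = Real.toNNReal K * |t - s| := by rw [Real.coe_toNNReal K hK0]
    exact hl.continuous
  have hgx_cont : Continuous (G xs) := hGcont hxscont
  have hTx : Top L (G xs) = xs := funext fun u => (hfix u).symm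
  have hDer : ∀ t, HasDerivAt xs (f (xs t) + h * Real.cos (2 * Real.pi * t)) t := by
    intro t
    have hT := Top_hasDerivAt hL (hGmeas hxs_meas) (hGbd xs) hgx_cont t
    rw [hTx] at hT
    have hval : G xs t - L * xs t = f (xs t) + h * Real.cos (2 * Real.pi * t) := by
      simp only [hGdef]
      rw [hFid (xs t) (hxs_lb t) (hxs_ub t)]
      ring
    rw [hval] at hT
    exact hT
  exact ⟨xs, ⟨fun t => (hDer t).differentiableAt, fun t => (hDer t).deriv, hxs_per⟩,
    fun t => ⟨hxs_lb t, hxs_ub t⟩⟩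

lemma uniq_sol (f : ℝ → ℝ) (hf : ContDiff ℝ 1 f)
    (a b : ℝ) (hab : a < b)
    (hder : ∀ x ∈ Set.Ioo a b, deriv f x < 0) (h : ℝ)
    (x y : ℝ → ℝ)
    (hx : IsPeriodicSolution f h x) (hxb : ∀ t, a ≤ x t ∧ x t ≤ b)
    (hy : IsPeriodicSolution f h y) (hyb : ∀ t, a ≤ y t ∧ y t ≤ b) : x = y := by
  have hanti : StrictAntiOn f (Icc a b) := by
    apply strictAntiOn_of_deriv_neg (convex_Icc a b) (hf.continuous.continuousOn)
    rwa [interior_Icc]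
  obtain ⟨hxd, hxe, hxp⟩ := hx
  obtain ⟨hyd, hye, hyp⟩ := hy
  set V : ℝ → ℝ := fun t => (x t - y t) ^ 2 with hVdef
  have hVd : ∀ t, HasDerivAt V (2 * (x t - y t) * (f (x t) - f (y t))) t := by
    intro t
    have h1 : HasDerivAt x (deriv x t) t := (hxd t).hasDerivAt
    have h2 : HasDerivAt y (deriv y t) t := (hyd t).hasDerivAt
    have h3 := ((h1.sub h2).pow 2)
    have h4 : deriv x t - deriv y t = f (x t) - f (y t) := by
      rw [hxe t, hye t]; ring
    rw [h4] at h3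
    exact h3.congr_deriv (by simp only [Pi.sub_apply]; push_cast; ring)
  have hVnonpos : ∀ t, deriv V t ≤ 0 := by
    intro t
    rw [(hVd t).deriv]
    rcases lt_trichotomy (x t) (y t) with hlt | heq | hgt
    · have := hanti ⟨(hxb t).1, (hxb t).2⟩ ⟨(hyb t).1, (hyb t).2⟩ hlt
      nlinarith
    · rw [heq]; simp
    · have := hanti ⟨(hyb t).1, (hyb t).2⟩ ⟨(hxb t).1, (hxb t).2⟩ hgt
      nlinarith
  have hVanti : Antitone V :=
    antitone_of_deriv_nonpos (fun t => (hVd t).differentiableAt) hVnonpos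
  have hVper : ∀ t, V (t + 1) = V t := by
    intro t
    simp only [hVdef, hxp t, hyp t]
  have hVint : ∀ k : ℤ, V k = V 0 := by
    intro k
    induction k using Int.induction_on with
    | zero => norm_num
    | succ n ih =>
      push_cast
      push_cast at ih
      rw [hVper]
      exact ih
    | pred n ih =>
      push_cast
      push_cast at ih
      have h2 : (-(n : ℝ) - 1) + 1 = -n := by ring
      have h3 := hVper (-(n : ℝ) - 1)
      rw [h2] at h3
      rw [← h3]
      exact ih
  have hVconst : ∀ t, V t = V 0 := by
    intro t
    have h1 : V t ≤ V (⌊t⌋ : ℝ) := hVanti (Int.floor_le t)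
    have h2 : V ((⌊t⌋ : ℝ) + 1) ≤ V t := hVanti (Int.lt_floor_add_one t).le
    have h3 : V ((⌊t⌋ : ℝ) + 1) = V (⌊t⌋ : ℝ) := hVper _
    have h4 := hVint ⌊t⌋
    linarith
  have hVderiv0 : ∀ t, deriv V t = 0 := by
    intro t
    have hc : V = fun _ => V 0 := funext hVconst
    rw [hc]
    simp
  funext t
  by_contra hne
  have h0 : 2 * (x t - y t) * (f (x t) - f (y t)) = 0 := by
    rw [← (hVd t).deriv, hVderiv0 t]
  have hd0 : x t - y t ≠ 0 := sub_ne_zero.2 hne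
  have hfe : f (x t) = f (y t) := by
    have h1 : (2 : ℝ) * (x t - y t) ≠ 0 := by
      simp [hd0]
    have := mul_eq_zero.1 h0
    rcases this with h2 | h2
    · exact absurd h2 h1
    · linarith [sub_eq_zero.1 h2]
  exact hne (hanti.injOn ⟨(hxb t).1, (hxb t).2⟩ ⟨(hyb t).1, (hyb t).2⟩ hfe)

end SmallHAux

theorem small_h_uniqueness (f : ℝ → ℝ) (hf : ContDiff ℝ 1 f)
    (a b : ℝ) (hab : a < b)
    (hder : ∀ x ∈ Set.Ioo a b, deriv f x < 0)
    (hfa : 0 < f a) (hfb : f b < 0)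
    (h : ℝ) (hh0 : 0 ≤ h) (hh : h < min (f a) (-f b)) :
    (∃ x : ℝ → ℝ, IsPeriodicSolution f h x ∧ ∀ t, a ≤ x t ∧ x t ≤ b) ∧
    (∀ x y : ℝ → ℝ,
      IsPeriodicSolution f h x → (∀ t, a ≤ x t ∧ x t ≤ b) →
      IsPeriodicSolution f h y → (∀ t, a ≤ y t ∧ y t ≤ b) → x = y) := by
  constructor
  · exact SmallHAux.exists_sol f hf a b hab hfa hfb h hh0 hh
  · intro x y hx hxb hy hyb
    exact SmallHAux.uniq_sol f hf a b hab hder h x y hx hxb hy hyb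
end

section
/- Let γ > 0, let f(x) = γx − x³, and let x_m = √(γ/3), so that f(x_m) = max_{x>0} f(x). Then for every h with 0 ≤ h < f(x_m), the equation x' = f(x) + h·cos(2πt) has exactly three 1-periodic solutions: one whose values lie in (−∞, −x_m), one whose values lie in (−x_m, x_m), and one whose values lie in (x_m, ∞). The two solutions with values outside [−x_m, x_m] are stable, i.e. satisfy ∫₀¹ f'(x(s)) ds < 0. -/
open Real

open Set Filter Topology

set_option maxHeartbeats 1000000

lemma escape_neg {x : ℝ → ℝ} {s : Set ℝ} {τ b d : ℝ}
    (hx : HasDerivWithinAt x d s τ) (hd : d < 0) (hsub : Ioo τ b ⊆ s) (hτ : τ < b) :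
    ∃ t ∈ Ioo τ b, x t < x τ := by
  have hslope := hasDerivWithinAt_iff_tendsto_slope.mp hx
  have hmono : 𝓝[Ioo τ b] τ ≤ 𝓝[s \ {τ}] τ :=
    nhdsWithin_mono _ (fun t ht => ⟨hsub ht, fun h => absurd h (ne_of_gt ht.1)⟩)
  have hev : ∀ᶠ t in 𝓝[Ioo τ b] τ, slope x τ t < 0 :=
    (hslope.mono_left hmono).eventually (eventually_lt_nhds hd)
  have hev2 : ∀ᶠ t in 𝓝[Ioo τ b] τ, t ∈ Ioo τ b := eventually_mem_nhdsWithin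
  haveI : (𝓝[Ioo τ b] τ).NeBot := by
    rw [nhdsWithin_Ioo_eq_nhdsGT hτ]; infer_instance
  obtain ⟨t, hst, htm⟩ := (hev.and hev2).exists
  refine ⟨t, htm, ?_⟩
  have h1 : x t - x τ = slope x τ t * (t - τ) := by
    rw [slope_def_field, div_mul_cancel₀ _ (sub_ne_zero.mpr (ne_of_gt htm.1))]
  have h2 : slope x τ t * (t - τ) < 0 := mul_neg_of_neg_of_pos hst (sub_pos.mpr htm.1)
  linarith [h1 ▸ h2]

lemma stay_le {v : ℝ → ℝ → ℝ} {x : ℝ → ℝ} {t₀ t₁ c : ℝ}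
    (hx : ∀ t ∈ Icc t₀ t₁, HasDerivWithinAt x (v t (x t)) (Icc t₀ t₁) t)
    (hc : ∀ t, v t c < 0) (h0 : x t₀ ≤ c) :
    ∀ s ∈ Icc t₀ t₁, x s ≤ c := by
  intro s hs
  by_contra hxs
  push_neg at hxs
  have hcont : ContinuousOn x (Icc t₀ t₁) := fun t ht => (hx t ht).continuousWithinAt
  have ht₀s : t₀ < s := by
    rcases eq_or_lt_of_le hs.1 with he | h
    · exact absurd h0 (by rw [he]; exact not_le.mpr hxs)
    · exact h
  set A := Icc t₀ s ∩ x ⁻¹' (Iic c)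
  have hne : A.Nonempty := ⟨t₀, ⟨le_refl _, ht₀s.le⟩, h0⟩
  have hbdd : BddAbove A := ⟨s, fun t ht => ht.1.2⟩
  have hclosed : IsClosed A :=
    (hcont.mono (Icc_subset_Icc_right hs.2)).preimage_isClosed_of_isClosed isClosed_Icc isClosed_Iic
  set τ := sSup A
  have hτA : τ ∈ A := hclosed.csSup_mem hne hbdd
  have hτs : τ < s :=
    lt_of_le_of_ne hτA.1.2 (by
      intro he; rw [he] at hτA; exact absurd hτA.2 (not_le.mpr hxs))
  have hτmem : τ ∈ Icc t₀ t₁ := ⟨hτA.1.1, le_trans hτA.1.2 hs.2⟩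
  have hIoosub : Ioo τ s ⊆ Icc t₀ t₁ :=
    fun t ht => ⟨le_trans hτA.1.1 ht.1.le, le_trans ht.2.le hs.2⟩
  have hgt : ∀ t ∈ Ioo τ s, c < x t := by
    intro t ht
    by_contra hle; push_neg at hle
    have htA : t ∈ A := ⟨⟨le_trans hτA.1.1 ht.1.le, ht.2.le⟩, hle⟩
    exact absurd (le_csSup hbdd htA) (not_le.mpr ht.1)
  haveI : (𝓝[Ioo τ s] τ).NeBot := by
    rw [nhdsWithin_Ioo_eq_nhdsGT hτs]; infer_instance
  have hge : c ≤ x τ := by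
    have hten : Tendsto x (𝓝[Ioo τ s] τ) (𝓝 (x τ)) :=
      (hcont τ hτmem).tendsto.mono_left (nhdsWithin_mono _ hIoosub)
    exact ge_of_tendsto hten (eventually_nhdsWithin_of_forall (fun t ht => (hgt t ht).le))
  have hxτ : x τ = c := le_antisymm hτA.2 hge
  have hd := hx τ hτmem
  rw [hxτ] at hd
  obtain ⟨t, ht, hlt⟩ := escape_neg hd (hc τ) hIoosub hτs
  rw [hxτ] at hlt
  exact absurd hlt (not_lt.mpr (hgt t ht).le)

lemma stay_ge {v : ℝ → ℝ → ℝ} {x : ℝ → ℝ} {t₀ t₁ c : ℝ}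
    (hx : ∀ t ∈ Icc t₀ t₁, HasDerivWithinAt x (v t (x t)) (Icc t₀ t₁) t)
    (hc : ∀ t, 0 < v t c) (h0 : c ≤ x t₀) :
    ∀ s ∈ Icc t₀ t₁, c ≤ x s := by
  intro s hs
  have h := stay_le (v := fun t u => -(v t (-u))) (x := fun t => -(x t)) (c := -c)
    (fun t ht => by simpa [Pi.neg_def] using (hx t ht).neg) (fun t => by simpa using hc t)
    (by simpa using h0) s hs
  simpa using h

lemma icc_deriv_to_ici {x : ℝ → ℝ} {d t a b : ℝ} (h : HasDerivWithinAt x d (Icc a b) t)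
    (ht : t ∈ Ico a b) : HasDerivWithinAt x d (Ici t) t := by
  apply h.mono_of_mem_nhdsWithin
  rw [mem_nhdsWithin]
  exact ⟨Iio b, isOpen_Iio, ht.2, fun s hs => ⟨le_trans ht.1 hs.2, hs.1.le⟩⟩

lemma exists_sol {v : ℝ → ℝ → ℝ} {K : NNReal} {C : ℝ}
    (hlip : ∀ t, LipschitzWith K (fun u => v t u))
    (hcont : ∀ u, Continuous (fun t => v t u))
    (hC : 0 ≤ C) (hbdd : ∀ t u, |v t u| ≤ C) (a : ℝ) :
    ∃ x : ℝ → ℝ, x 0 = a ∧ ∀ t ∈ Icc (0:ℝ) 1, HasDerivWithinAt x (v t (x t)) (Icc (0:ℝ) 1) t := by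
  have hpl : IsPicardLindelof v (tmin := 0) (tmax := 1) ⟨0, ⟨le_refl _, zero_le_one⟩⟩ a
      C.toNNReal 0 C.toNNReal K :=
    { lipschitzOnWith := fun t _ => (hlip t).lipschitzOnWith
      continuousOn := fun u _ => (hcont u).continuousOn
      norm_le := fun t _ u _ => by rw [Real.norm_eq_abs, Real.coe_toNNReal _ hC]; exact hbdd t u
      mul_max_le := by simp }
  exact hpl.exists_eq_forall_mem_Icc_hasDerivWithinAt₀

lemma sol_unique_s3 {v : ℝ → ℝ → ℝ} {K : NNReal}
    (hlip : ∀ t, LipschitzWith K (fun u => v t u))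
    {x y : ℝ → ℝ} (hx : ∀ t, HasDerivAt x (v t (x t)) t)
    (hy : ∀ t, HasDerivAt y (v t (y t)) t) {t₀ : ℝ} (h : x t₀ = y t₀) : x = y := by
  funext t
  rcases le_total t₀ t with hle | hle
  · exact ODE_solution_unique hlip
      (fun s _ => (hx s).continuousAt.continuousWithinAt)
      (fun s _ => (hx s).hasDerivWithinAt)
      (fun s _ => (hy s).continuousAt.continuousWithinAt)
      (fun s _ => (hy s).hasDerivWithinAt) h ⟨hle, le_refl t⟩
  · exact ODE_solution_unique_of_mem_Icc_left (s := fun _ => univ)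
      (fun t _ => (hlip t).lipschitzOnWith)
      (fun s _ => (hx s).continuousAt.continuousWithinAt)
      (fun s _ => (hx s).hasDerivWithinAt) (fun _ _ => trivial)
      (fun s _ => (hy s).continuousAt.continuousWithinAt)
      (fun s _ => (hy s).hasDerivWithinAt) (fun _ _ => trivial)
      h ⟨le_refl t, hle⟩

lemma sol_dist {v : ℝ → ℝ → ℝ} {K : NNReal}
    (hlip : ∀ t, LipschitzWith K (fun u => v t u))
    {x y : ℝ → ℝ}
    (hx : ∀ t ∈ Icc (0:ℝ) 1, HasDerivWithinAt x (v t (x t)) (Icc (0:ℝ) 1) t)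
    (hy : ∀ t ∈ Icc (0:ℝ) 1, HasDerivWithinAt y (v t (y t)) (Icc (0:ℝ) 1) t) :
    dist (x 1) (y 1) ≤ dist (x 0) (y 0) * Real.exp K := by
  have h := dist_le_of_trajectories_ODE hlip
    (fun t ht => (hx t ht).continuousWithinAt)
    (fun t ht => icc_deriv_to_ici (hx t (Ico_subset_Icc_self ht)) ht)
    (fun t ht => (hy t ht).continuousWithinAt)
    (fun t ht => icc_deriv_to_ici (hy t (Ico_subset_Icc_self ht)) ht)
    (le_refl _) 1 ⟨zero_le_one, le_refl 1⟩
  simpa using h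

lemma extend_periodic {v : ℝ → ℝ → ℝ} (hper : ∀ t u, v (t + 1) u = v t u)
    {x : ℝ → ℝ} (hx : ∀ t ∈ Icc (0:ℝ) 1, HasDerivWithinAt x (v t (x t)) (Icc (0:ℝ) 1) t)
    (hend : x 1 = x 0) :
    ∃ X : ℝ → ℝ, (∀ t, HasDerivAt X (v t (X t)) t) ∧ (∀ t, X (t + 1) = X t) ∧
      (∀ t, ∃ s ∈ Icc (0:ℝ) 1, X t = x s) := by
  have hvper : ∀ (n : ℤ) (t u : ℝ), v (t - n) u = v t u := by
    intro n t u
    have hp : Function.Periodic (fun t => v t u) 1 := fun s => hper s u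
    simpa using hp.sub_int_mul_eq n (x := t)
  refine ⟨fun t => x (Int.fract t), ?_, ?_, ?_⟩
  · intro t
    rcases eq_or_ne (Int.fract t) 0 with h0 | h0
    · -- t is an integer n = ⌊t⌋
      set n : ℤ := ⌊t⌋ with hn
      have htn : t = (n : ℝ) := by
        have h := Int.self_sub_floor t
        rw [h0] at h
        have h' : t - (n:ℝ) = 0 := h
        linarith
      have hX0 : x (Int.fract t) = x 0 := by rw [h0]
      -- left piece
      have hinner1 : HasDerivWithinAt x (v 1 (x 1)) (Icc (0:ℝ) 1) 1 :=
        hx 1 ⟨zero_le_one, le_refl 1⟩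
      have hmaps1 : MapsTo (fun s : ℝ => s - ((n:ℝ) - 1)) (Icc ((n:ℝ) - 1) n) (Icc (0:ℝ) 1) := by
        intro s hs
        simp only [mem_Icc] at hs ⊢
        exact ⟨by linarith, by linarith⟩
      have hcomp1 : HasDerivWithinAt (fun s : ℝ => x (s - ((n:ℝ) - 1)))
          (v 1 (x 1)) (Icc ((n:ℝ) - 1) n) t := by
        have hpt : t - ((n:ℝ) - 1) = 1 := by rw [htn]; ring
        have hinner1' : HasDerivWithinAt x (v 1 (x 1)) (Icc (0:ℝ) 1) (t - ((n:ℝ) - 1)) := by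
          rw [hpt]; exact hinner1
        have := HasDerivWithinAt.comp t hinner1'
          ((hasDerivWithinAt_id t _).sub_const ((n:ℝ) - 1)) hmaps1
        simpa [Function.comp_def] using this
      have heq1 : EqOn (fun s => x (Int.fract s)) (fun s : ℝ => x (s - ((n:ℝ) - 1)))
          (Icc ((n:ℝ) - 1) n) := by
        intro s hs
        rcases eq_or_lt_of_le hs.2 with he | hlt
        · simp only [he, htn]
          rw [show (n:ℝ) - ((n:ℝ) - 1) = 1 by ring, hend]
          norm_num
        · have hfl : ⌊s⌋ = n - 1 := by
            rw [Int.floor_eq_iff]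
            constructor
            · push_cast; linarith [hs.1]
            · push_cast; linarith [hlt]
          simp only [Int.fract, hfl]
          push_cast
          ring_nf
      have hleft : HasDerivWithinAt (fun s => x (Int.fract s)) (v 1 (x 1))
          (Icc ((n:ℝ) - 1) n) t :=
        hcomp1.congr heq1 (by exact heq1 ⟨by rw [htn]; linarith, by rw [htn]⟩)
      -- right piece
      have hinner2 : HasDerivWithinAt x (v 0 (x 0)) (Icc (0:ℝ) 1) 0 :=
        hx 0 ⟨le_refl 0, zero_le_one⟩
      have hmaps2 : MapsTo (fun s : ℝ => s - (n:ℝ)) (Icc (n:ℝ) ((n:ℝ) + 1)) (Icc (0:ℝ) 1) := by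
        intro s hs
        simp only [mem_Icc] at hs ⊢
        exact ⟨by linarith, by linarith⟩
      have hcomp2 : HasDerivWithinAt (fun s : ℝ => x (s - (n:ℝ)))
          (v 0 (x 0)) (Icc (n:ℝ) ((n:ℝ) + 1)) t := by
        have hpt : t - (n:ℝ) = 0 := by rw [htn]; ring
        have hinner2' : HasDerivWithinAt x (v 0 (x 0)) (Icc (0:ℝ) 1) (t - (n:ℝ)) := by
          rw [hpt]; exact hinner2
        have := HasDerivWithinAt.comp t hinner2'
          ((hasDerivWithinAt_id t _).sub_const ((n:ℝ))) hmaps2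
        simpa [Function.comp_def] using this
      have heq2 : EqOn (fun s => x (Int.fract s)) (fun s : ℝ => x (s - (n:ℝ)))
          (Icc (n:ℝ) ((n:ℝ) + 1)) := by
        intro s hs
        rcases eq_or_lt_of_le hs.2 with he | hlt
        · simp only [he]
          rw [show (n:ℝ) + 1 - (n:ℝ) = 1 by ring, hend]
          have : Int.fract ((n:ℝ) + 1) = 0 := by
            rw [Int.fract_add_one]; simp
          rw [this]
        · have hfl : ⌊s⌋ = n := by
            rw [Int.floor_eq_iff]
            exact ⟨hs.1, by push_cast; linarith [hlt]⟩
          simp only [Int.fract, hfl]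
      have hright : HasDerivWithinAt (fun s => x (Int.fract s)) (v 0 (x 0))
          (Icc (n:ℝ) ((n:ℝ) + 1)) t :=
        hcomp2.congr heq2 (by exact heq2 ⟨by rw [htn], by rw [htn]; linarith⟩)
      -- match derivative values
      have hval : v 1 (x 1) = v 0 (x 0) := by
        rw [hend, show (1:ℝ) = 0 + 1 by ring, hper]
      rw [hval] at hleft
      have hunion := hleft.union hright
      rw [Icc_union_Icc_eq_Icc (by linarith : (n:ℝ) - 1 ≤ (n:ℝ)) (by linarith : (n:ℝ) ≤ (n:ℝ) + 1)]
        at hunion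
      have hnb : Icc ((n:ℝ) - 1) ((n:ℝ) + 1) ∈ 𝓝 t :=
        Icc_mem_nhds (by rw [htn]; linarith) (by rw [htn]; linarith)
      have := hunion.hasDerivAt hnb
      have hv0 : v 0 (x 0) = v t (x (Int.fract t)) := by
        rw [hX0, ← hvper n t (x 0), htn]
        norm_num
      rwa [hv0] at this
    · -- fract t ∈ (0,1)
      set n : ℤ := ⌊t⌋ with hn
      have hfr : Int.fract t = t - (n:ℝ) := rfl
      have h1 : 0 < Int.fract t := lt_of_le_of_ne (Int.fract_nonneg t) (Ne.symm h0)
      have h2 : Int.fract t < 1 := Int.fract_lt_one t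
      have hinner : HasDerivAt x (v (Int.fract t) (x (Int.fract t))) (Int.fract t) :=
        (hx _ ⟨h1.le, h2.le⟩).hasDerivAt (Icc_mem_nhds h1 h2)
      have hcomp : HasDerivAt (fun s : ℝ => x (s - (n:ℝ)))
          (v (Int.fract t) (x (Int.fract t))) t := by
        have hinner' : HasDerivAt x (v (Int.fract t) (x (Int.fract t))) (t - (n:ℝ)) := by
          rw [← hfr]; exact hinner
        have := HasDerivAt.comp t hinner' ((hasDerivAt_id t).sub_const ((n:ℝ)))
        simpa [Function.comp_def] using this
      have heq : (fun s => x (Int.fract s)) =ᶠ[𝓝 t] (fun s : ℝ => x (s - (n:ℝ))) := by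
        have hmem : Ioo ((n:ℝ)) ((n:ℝ) + 1) ∈ 𝓝 t := by
          apply Ioo_mem_nhds
          · have : (n:ℝ) ≤ t := Int.floor_le t
            rcases eq_or_lt_of_le this with he | hlt
            · exfalso; apply h0; rw [hfr, ← he]; ring
            · exact hlt
          · exact Int.lt_floor_add_one t
        filter_upwards [hmem] with s hs
        have hfl : ⌊s⌋ = n := by
          rw [Int.floor_eq_iff]
          exact ⟨hs.1.le, by push_cast; linarith [hs.2]⟩
        simp only [Int.fract, hfl]
      have := hcomp.congr_of_eventuallyEq heq
      rwa [hfr, hvper n t] at this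
  · intro t
    simp [Int.fract_add_one]
  · intro t
    exact ⟨Int.fract t, ⟨Int.fract_nonneg t, (Int.fract_lt_one t).le⟩, rfl⟩

lemma cross_up {w : ℝ → ℝ} {t d : ℝ} (hd : HasDerivAt w d t) (hpos : 0 < d) (h0 : w t = 0) :
    ∃ δ > 0, (∀ s ∈ Ioo (t - δ) t, w s < 0) ∧ (∀ s ∈ Ioo t (t + δ), 0 < w s) := by
  have hslope := hasDerivAt_iff_tendsto_slope.mp hd
  have hev : ∀ᶠ s in 𝓝[≠] t, 0 < slope w t s := hslope.eventually (eventually_gt_nhds hpos)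
  rw [eventually_nhdsWithin_iff] at hev
  obtain ⟨δ, hδ, hball⟩ := Metric.eventually_nhds_iff.mp hev
  refine ⟨δ, hδ, ?_, ?_⟩
  · intro s hs
    have hne : s ≠ t := ne_of_lt hs.2
    have hdist : dist s t < δ := by
      rw [Real.dist_eq, abs_sub_lt_iff]; constructor <;> linarith [hs.1, hs.2]
    have hsl := hball hdist hne
    rw [slope_def_field, h0, sub_zero] at hsl
    by_contra hc
    push_neg at hc
    have hq : w s / (s - t) ≤ 0 :=
      div_nonpos_of_nonneg_of_nonpos hc (by linarith [hs.2])
    linarith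
  · intro s hs
    have hne : s ≠ t := ne_of_gt hs.1
    have hdist : dist s t < δ := by
      rw [Real.dist_eq, abs_sub_lt_iff]; constructor <;> linarith [hs.1, hs.2]
    have hsl := hball hdist hne
    rw [slope_def_field, h0, sub_zero] at hsl
    have hst : 0 < s - t := by linarith [hs.1]
    have : w s = (w s / (s - t)) * (s - t) := (div_mul_cancel₀ _ (ne_of_gt hst)).symm
    rw [this]
    exact mul_pos hsl hst

lemma no_periodic_crossing {w : ℝ → ℝ} (hw : Continuous w)
    (hper : ∀ t, w (t + 1) = w t)
    (hup : ∀ t, w t = 0 → ∃ δ > 0, (∀ s ∈ Ioo (t - δ) t, w s < 0) ∧ (∀ s ∈ Ioo t (t + δ), 0 < w s))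
    {t₀ : ℝ} (h0 : w t₀ = 0) : False := by
  obtain ⟨δ₀, hδ₀, _, hup₀⟩ := hup t₀ h0
  set t₁ := t₀ + min (δ₀ / 2) (1 / 2) with ht₁
  have hmin : 0 < min (δ₀ / 2) (1 / 2) := lt_min (by linarith) (by norm_num)
  have ht₁mem : t₁ ∈ Ioo t₀ (t₀ + δ₀) := by
    constructor
    · simp only [ht₁]; linarith
    · have := min_le_left (δ₀ / 2) (1 / 2); simp only [ht₁]; linarith
  have hwt₁ : 0 < w t₁ := hup₀ t₁ ht₁mem
  have ht₁lt : t₁ < t₀ + 1 := by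
    have := min_le_right (δ₀ / 2) (1 / 2); simp only [ht₁]; linarith
  set B := Icc t₁ (t₀ + 1) ∩ w ⁻¹' (Iic 0) with hB
  have hne : B.Nonempty := ⟨t₀ + 1, ⟨ht₁lt.le, le_refl _⟩, by
    rw [mem_preimage, mem_Iic, hper t₀, h0]⟩
  have hbdd : BddBelow B := ⟨t₁, fun s hs => hs.1.1⟩
  have hclosed : IsClosed B := IsClosed.inter isClosed_Icc (isClosed_Iic.preimage hw)
  set τ := sInf B with hτ
  have hτB : τ ∈ B := hclosed.csInf_mem hne hbdd
  have hwτ : w τ ≤ 0 := hτB.2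
  have hτgt : t₁ < τ := lt_of_le_of_ne hτB.1.1 (by
    intro he; rw [he] at hwt₁; linarith)
  have hbefore : ∀ s ∈ Ico t₁ τ, 0 < w s := by
    intro s hs
    by_contra hc
    push_neg at hc
    have hsB : s ∈ B := ⟨⟨hs.1, le_trans hs.2.le hτB.1.2⟩, hc⟩
    exact absurd (csInf_le hbdd hsB) (not_le.mpr hs.2)
  have hwτ0 : w τ = 0 := by
    refine le_antisymm hwτ ?_
    haveI : (𝓝[Ioo t₁ τ] τ).NeBot := by
      rw [nhdsWithin_Ioo_eq_nhdsLT hτgt]; infer_instance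
    have hten : Tendsto w (𝓝[Ioo t₁ τ] τ) (𝓝 (w τ)) :=
      (hw.tendsto τ).mono_left nhdsWithin_le_nhds
    exact ge_of_tendsto hten (eventually_nhdsWithin_of_forall
      (fun s hs => (hbefore s ⟨hs.1.le, hs.2⟩).le))
  obtain ⟨δ, hδ, hdown, _⟩ := hup τ hwτ0
  set s := max t₁ (τ - δ / 2) with hs
  have hsmem : s ∈ Ioo (τ - δ) τ := by
    constructor
    · have := le_max_right t₁ (τ - δ / 2); simp only [hs]; linarith
    · exact max_lt hτgt (by linarith)
  have h1 : w s < 0 := hdown s hsmem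
  have h2 : 0 < w s := hbefore s ⟨le_max_left _ _, hsmem.2⟩
  linarith

lemma construct_periodic {v : ℝ → ℝ → ℝ} {K : NNReal} {C lo hi : ℝ}
    (hlip : ∀ t, LipschitzWith K (fun u => v t u))
    (hcont : ∀ u, Continuous (fun t => v t u))
    (hC : 0 ≤ C) (hbdd : ∀ t u, |v t u| ≤ C)
    (hper : ∀ t u, v (t + 1) u = v t u)
    (hlohi : lo ≤ hi) (hlo : ∀ t, 0 < v t lo) (hhi : ∀ t, v t hi < 0) :
    ∃ X : ℝ → ℝ, (∀ t, HasDerivAt X (v t (X t)) t) ∧ (∀ t, X (t + 1) = X t) ∧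
      (∀ t, X t ∈ Icc lo hi) := by
  choose sol h0 hsol using exists_sol hlip hcont hC hbdd
  set P : ℝ → ℝ := fun a => sol a 1 with hP
  have hPlip : LipschitzWith (Real.exp K).toNNReal P := by
    apply LipschitzWith.of_dist_le_mul
    intro a b
    have hd := sol_dist hlip (hsol a) (hsol b)
    rw [h0 a, h0 b] at hd
    calc dist (P a) (P b) ≤ dist a b * Real.exp K := hd
      _ = (Real.exp (K:ℝ)).toNNReal * dist a b := by
          rw [Real.coe_toNNReal _ (Real.exp_nonneg _)]; ring
  have hinv : ∀ a ∈ Icc lo hi, ∀ t ∈ Icc (0:ℝ) 1, sol a t ∈ Icc lo hi := by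
    intro a ha t ht
    refine ⟨stay_ge (hsol a) hlo (by rw [h0 a]; exact ha.1) t ht,
      stay_le (hsol a) hhi (by rw [h0 a]; exact ha.2) t ht⟩
  have hg : ContinuousOn (fun a => P a - a) (Icc lo hi) :=
    (hPlip.continuous.sub continuous_id).continuousOn
  have h1 : P hi - hi ≤ 0 :=
    sub_nonpos.mpr (hinv hi ⟨hlohi, le_refl hi⟩ 1 ⟨zero_le_one, le_refl 1⟩).2
  have h2 : 0 ≤ P lo - lo :=
    sub_nonneg.mpr (hinv lo ⟨le_refl lo, hlohi⟩ 1 ⟨zero_le_one, le_refl 1⟩).1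
  obtain ⟨a₀, ha₀, hfix⟩ := intermediate_value_Icc' hlohi hg ⟨h1, h2⟩
  have hfix' : sol a₀ 1 = sol a₀ 0 := by rw [h0]; exact sub_eq_zero.mp hfix
  obtain ⟨X, hX1, hX2, hX3⟩ := extend_periodic hper (hsol a₀) hfix'
  exact ⟨X, hX1, hX2, fun t => by
    obtain ⟨s, hs, he⟩ := hX3 t; rw [he]; exact hinv a₀ ha₀ s hs⟩

theorem three_solutions_cubic (γ : ℝ) (hγ : 0 < γ)
    (f : ℝ → ℝ) (hf : ∀ x, f x = γ * x - x ^ 3)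
    (xm : ℝ) (hxm : xm = Real.sqrt (γ / 3))
    (h : ℝ) (hh0 : 0 ≤ h) (hh : h < f xm) :
    ∃ x₁ x₂ x₃ : ℝ → ℝ,
      IsPeriodicSolution f h x₁ ∧ IsPeriodicSolution f h x₂ ∧
      IsPeriodicSolution f h x₃ ∧
      (∀ t, x₁ t < -xm) ∧ (∀ t, -xm < x₂ t ∧ x₂ t < xm) ∧ (∀ t, xm < x₃ t) ∧
      (∫ s in (0:ℝ)..1, deriv f (x₁ s)) < 0 ∧
      (∫ s in (0:ℝ)..1, deriv f (x₃ s)) < 0 ∧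
      ∀ y : ℝ → ℝ, IsPeriodicSolution f h y → y = x₁ ∨ y = x₂ ∨ y = x₃ := by
  -- ### basic facts about xm and M
  have hγ3 : (0:ℝ) < γ / 3 := by linarith
  have hxm0 : 0 < xm := by rw [hxm]; exact Real.sqrt_pos.mpr hγ3
  have hxmsq : xm ^ 2 = γ / 3 := by rw [hxm]; exact Real.sq_sqrt hγ3.le
  have hfxm : 0 < f xm := lt_of_le_of_lt hh0 hh
  obtain ⟨M, hMdef⟩ : ∃ M : ℝ, M = max 1 (Real.sqrt (γ + h + 1)) := ⟨_, rfl⟩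
  have hM1 : 1 ≤ M := hMdef ▸ le_max_left _ _
  have hM0 : 0 < M := by linarith
  have hMsq : γ + h + 1 ≤ M ^ 2 := by
    have h1 : Real.sqrt (γ + h + 1) ^ 2 = γ + h + 1 := Real.sq_sqrt (by linarith)
    have h2 : Real.sqrt (γ + h + 1) ≤ M := hMdef ▸ le_max_right _ _
    nlinarith [Real.sqrt_nonneg (γ + h + 1)]
  have hxmM : xm ≤ M := by
    rw [hxm]
    exact le_trans (Real.sqrt_le_sqrt (by linarith)) (hMdef ▸ le_max_right _ _)
  have hfub : ∀ u, M ≤ u → f u + h ≤ -1 := by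
    intro u hu
    rw [hf]
    have hu2 : γ + h + 1 ≤ u ^ 2 := by
      nlinarith [mul_nonneg (sub_nonneg.mpr hu) (by linarith : (0:ℝ) ≤ u + M)]
    nlinarith [mul_nonneg (by linarith : (0:ℝ) ≤ u - 1)
      (by linarith : (0:ℝ) ≤ u ^ 2 - (γ + h + 1)),
      mul_nonneg hh0 (by linarith : (0:ℝ) ≤ u - 1)]
  have hflb : ∀ u, u ≤ -M → 1 ≤ f u - h := by
    intro u hu
    have h1 := hfub (-u) (by linarith)
    rw [hf] at h1 ⊢
    ring_nf at h1 ⊢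
    linarith
  -- ### the truncated vector field
  obtain ⟨proj, hprojdef⟩ : ∃ p : ℝ → ℝ, p = fun u => max (-M) (min M u) := ⟨_, rfl⟩
  have hprojmem : ∀ u, proj u ∈ Icc (-M) M := by
    intro u
    rw [hprojdef]
    exact ⟨le_max_left _ _, max_le (by linarith) (min_le_left _ _)⟩
  have hprojid : ∀ u, u ∈ Icc (-M) M → proj u = u := by
    intro u hu
    rw [hprojdef]
    simp only
    rw [min_eq_right hu.2, max_eq_right hu.1]
  have hprojlip : ∀ u w, |proj u - proj w| ≤ |u - w| := by
    intro u w
    have h1 : |min M u - min M w| ≤ max |M - M| |u - w| := abs_min_sub_min_le_max _ _ _ _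
    rw [sub_self, abs_zero, max_eq_right (abs_nonneg _)] at h1
    calc |proj u - proj w| = |max (min M u) (-M) - max (min M w) (-M)| := by
          rw [hprojdef]; simp only; rw [max_comm (-M) (min M u), max_comm (-M) (min M w)]
      _ ≤ |min M u - min M w| := abs_max_sub_max_le_abs _ _ _
      _ ≤ |u - w| := h1
  obtain ⟨F, hFdef⟩ : ∃ F : ℝ → ℝ → ℝ,
      F = fun t u => f (proj u) + h * Real.cos (2 * Real.pi * t) := ⟨_, rfl⟩
  obtain ⟨G, hGdef⟩ : ∃ G : ℝ → ℝ → ℝ, G = fun t u => -(F t u) := ⟨_, rfl⟩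
  obtain ⟨K, hKdef⟩ : ∃ K : NNReal, K = Real.toNNReal (γ + 3 * M ^ 2) := ⟨_, rfl⟩
  have hKco : (K : ℝ) = γ + 3 * M ^ 2 := by rw [hKdef]; exact Real.coe_toNNReal _ (by positivity)
  have hflip2 : ∀ u w, u ∈ Icc (-M) M → w ∈ Icc (-M) M →
      |f u - f w| ≤ (γ + 3 * M ^ 2) * |u - w| := by
    intro u w hu hw
    rw [hf, hf, show γ*u - u^3 - (γ*w - w^3) = (γ - (u^2 + u*w + w^2)) * (u - w) by ring, abs_mul]
    refine mul_le_mul_of_nonneg_right ?_ (abs_nonneg _)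
    rw [abs_le]
    constructor <;>
      nlinarith [sq_nonneg (u + w), sq_nonneg (u - w),
        mul_nonneg (by linarith [hu.2] : (0:ℝ) ≤ M - u) (by linarith [hu.1] : (0:ℝ) ≤ M + u),
        mul_nonneg (by linarith [hw.2] : (0:ℝ) ≤ M - w) (by linarith [hw.1] : (0:ℝ) ≤ M + w)]
  have hFlip : ∀ t, LipschitzWith K (fun u => F t u) := by
    intro t
    apply LipschitzWith.of_dist_le_mul
    intro u w
    rw [Real.dist_eq, Real.dist_eq, hKco, hFdef]
    simp only
    rw [show f (proj u) + h * Real.cos (2*Real.pi*t) - (f (proj w) + h * Real.cos (2*Real.pi*t))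
      = f (proj u) - f (proj w) by ring]
    exact le_trans (hflip2 _ _ (hprojmem u) (hprojmem w))
      (mul_le_mul_of_nonneg_left (hprojlip u w) (by positivity))
  have hGlip : ∀ t, LipschitzWith K (fun u => G t u) := by
    intro t
    apply LipschitzWith.of_dist_le_mul
    intro u w
    rw [hGdef]
    simp only
    rw [Real.dist_eq, Real.dist_eq, show -F t u - -F t w = -(F t u - F t w) by ring, abs_neg,
      ← Real.dist_eq, ← Real.dist_eq]
    exact (hFlip t).dist_le_mul u w
  obtain ⟨C, hCdef⟩ : ∃ C : ℝ, C = γ * M + M ^ 3 + h := ⟨_, rfl⟩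
  have hC0 : 0 ≤ C := by
    rw [hCdef]
    have : 0 ≤ γ * M := mul_nonneg hγ.le hM0.le
    nlinarith [pow_pos hM0 3]
  have hfbnd : ∀ u, u ∈ Icc (-M) M → |f u| ≤ γ * M + M ^ 3 := by
    intro u hu
    rw [hf, abs_le]
    constructor <;>
      nlinarith [mul_nonneg (by linarith [hu.2] : (0:ℝ) ≤ M - u) (by linarith [hu.1] : (0:ℝ) ≤ M + u),
        mul_nonneg (by linarith [hu.2] : (0:ℝ) ≤ M - u) (sq_nonneg u),
        mul_nonneg (by linarith [hu.1] : (0:ℝ) ≤ M + u) (sq_nonneg u),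
        mul_nonneg hγ.le (by linarith [hu.2] : (0:ℝ) ≤ M - u),
        mul_nonneg hγ.le (by linarith [hu.1] : (0:ℝ) ≤ M + u),
        mul_nonneg hM0.le (mul_nonneg (by linarith [hu.2] : (0:ℝ) ≤ M - u)
          (by linarith [hu.1] : (0:ℝ) ≤ M + u))]
  have hFbnd : ∀ t u, |F t u| ≤ C := by
    intro t u
    rw [hFdef, hCdef]
    simp only
    have h1 := hfbnd (proj u) (hprojmem u)
    have h2 : |h * Real.cos (2*Real.pi*t)| ≤ h := by
      rw [abs_mul, abs_of_nonneg hh0]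
      exact mul_le_of_le_one_right hh0 (abs_cos_le_one _)
    calc |f (proj u) + h * Real.cos (2*Real.pi*t)| ≤ |f (proj u)| + |h * Real.cos (2*Real.pi*t)| :=
          abs_add_le _ _
      _ ≤ γ * M + M ^ 3 + h := by linarith
  have hGbnd : ∀ t u, |G t u| ≤ C := by
    intro t u
    rw [hGdef]
    simp only [abs_neg]
    exact hFbnd t u
  have hFcont : ∀ u, Continuous (fun t => F t u) := by
    intro u
    rw [hFdef]
    simp only
    fun_prop
  have hGcont : ∀ u, Continuous (fun t => G t u) := by
    intro u
    rw [hGdef]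
    exact (hFcont u).neg
  have hcosper : ∀ t : ℝ, Real.cos (2*Real.pi*(t+1)) = Real.cos (2*Real.pi*t) := by
    intro t
    rw [show 2*Real.pi*(t+1) = 2*Real.pi*t + 2*Real.pi by ring, Real.cos_add_two_pi]
  have hFper : ∀ t u, F (t+1) u = F t u := by
    intro t u; rw [hFdef]; simp only [hcosper]
  have hGper : ∀ t u, G (t+1) u = G t u := by
    intro t u; rw [hGdef]; simp only [hFper]
  -- ### barrier signs
  have hcos_ge : ∀ t : ℝ, -h ≤ h * Real.cos (2*Real.pi*t) := by
    intro t
    have := mul_le_mul_of_nonneg_left (Real.neg_one_le_cos (2*Real.pi*t)) hh0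
    linarith
  have hcos_le : ∀ t : ℝ, h * Real.cos (2*Real.pi*t) ≤ h := by
    intro t
    have := mul_le_mul_of_nonneg_left (Real.cos_le_one (2*Real.pi*t)) hh0
    linarith
  have hFM : ∀ t, F t M < 0 := by
    intro t
    rw [hFdef]; simp only
    rw [hprojid M ⟨by linarith, le_refl M⟩]
    linarith [hfub M (le_refl M), hcos_le t]
  have hFnegM : ∀ t, 0 < F t (-M) := by
    intro t
    rw [hFdef]; simp only
    rw [hprojid (-M) ⟨le_refl _, by linarith⟩]
    linarith [hflb (-M) (le_refl _), hcos_ge t]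
  have hFxm : ∀ t, 0 < F t xm := by
    intro t
    rw [hFdef]; simp only
    rw [hprojid xm ⟨by linarith, hxmM⟩]
    linarith [hcos_ge t, hh]
  have hFnegxm : ∀ t, F t (-xm) < 0 := by
    intro t
    rw [hFdef]; simp only
    rw [hprojid (-xm) ⟨by linarith, by linarith⟩]
    have hsym : f (-xm) = -(f xm) := by rw [hf, hf]; ring
    rw [hsym]
    linarith [hcos_le t, hh]
  have hGxm : ∀ t, G t xm < 0 := by
    intro t; rw [hGdef]; simp only; linarith [hFxm t]
  have hGnegxm : ∀ t, 0 < G t (-xm) := by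
    intro t; rw [hGdef]; simp only; linarith [hFnegxm t]
  -- ### construct the three periodic solutions
  obtain ⟨X₃, hX₃d, hX₃p, hX₃m⟩ :=
    construct_periodic hFlip hFcont hC0 hFbnd hFper hxmM hFxm hFM
  obtain ⟨X₁, hX₁d, hX₁p, hX₁m⟩ :=
    construct_periodic hFlip hFcont hC0 hFbnd hFper (by linarith : -M ≤ -xm) hFnegM hFnegxm
  obtain ⟨Z, hZd, hZp, hZm⟩ :=
    construct_periodic hGlip hGcont hC0 hGbnd hGper (by linarith : -xm ≤ xm) hGnegxm hGxm
  obtain ⟨X₂, hX₂def⟩ : ∃ X₂ : ℝ → ℝ, X₂ = fun t => Z (-t) := ⟨_, rfl⟩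
  have hX₂d : ∀ t, HasDerivAt X₂ (F t (X₂ t)) t := by
    intro t
    have hc := HasDerivAt.comp t (hZd (-t)) (hasDerivAt_neg t)
    have hval : G (-t) (Z (-t)) * (-1) = F t (Z (-t)) := by
      rw [hGdef, hFdef]
      simp only
      rw [show 2*Real.pi*(-t) = -(2*Real.pi*t) by ring, Real.cos_neg]
      ring
    rw [hX₂def]
    simp only
    rw [← hval]
    simpa [Function.comp_def] using hc
  have hX₂p : ∀ t, X₂ (t+1) = X₂ t := by
    intro t
    have h1 := hZp (-t - 1)
    rw [show -t - 1 + 1 = -t by ring] at h1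
    rw [hX₂def]
    simp only
    rw [show -(t+1) = -t - 1 by ring]
    exact h1.symm
  have hX₂m : ∀ t, X₂ t ∈ Icc (-xm) xm := by
    intro t; rw [hX₂def]; exact hZm (-t)
  -- ### the constructed functions are periodic solutions
  have hsol_of : ∀ (X : ℝ → ℝ), (∀ t, HasDerivAt X (F t (X t)) t) → (∀ t, X (t+1) = X t) →
      (∀ t, X t ∈ Icc (-M) M) → IsPeriodicSolution f h X := by
    intro X hd hp hm
    refine ⟨fun t => (hd t).differentiableAt, fun t => ?_, hp⟩
    rw [(hd t).deriv, hFdef]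
    simp only
    rw [hprojid _ (hm t)]
  have sol₁ : IsPeriodicSolution f h X₁ :=
    hsol_of X₁ hX₁d hX₁p (fun t => ⟨(hX₁m t).1, le_trans (hX₁m t).2 (by linarith)⟩)
  have sol₂ : IsPeriodicSolution f h X₂ :=
    hsol_of X₂ hX₂d hX₂p (fun t => ⟨le_trans (by linarith : -M ≤ -xm) (hX₂m t).1,
      le_trans (hX₂m t).2 hxmM⟩)
  have sol₃ : IsPeriodicSolution f h X₃ :=
    hsol_of X₃ hX₃d hX₃p (fun t => ⟨le_trans (by linarith : -M ≤ xm) (hX₃m t).1, (hX₃m t).2⟩)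
  -- ### every periodic solution is bounded by M
  have hbound : ∀ y : ℝ → ℝ, IsPeriodicSolution f h y → ∀ t, y t ∈ Icc (-M) M := by
    intro y hy t
    obtain ⟨hyd, hyde, hyp⟩ := hy
    have hycont : Continuous y := hyd.continuous
    have hfr : ∀ s : ℝ, y (Int.fract s) = y s := by
      intro s
      have hp : Function.Periodic y 1 := fun a => hyp a
      have h1 := hp.sub_int_mul_eq (⌊s⌋) (x := s)
      rw [mul_one, Int.self_sub_floor] at h1
      exact h1
    have hfrm : ∀ s : ℝ, Int.fract s ∈ Icc (0:ℝ) 1 :=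
      fun s => ⟨Int.fract_nonneg s, (Int.fract_lt_one s).le⟩
    obtain ⟨tM, htM, hmax⟩ := isCompact_Icc.exists_isMaxOn (nonempty_Icc.mpr zero_le_one)
      hycont.continuousOn
    obtain ⟨tm, htm, hmin⟩ := isCompact_Icc.exists_isMinOn (nonempty_Icc.mpr zero_le_one)
      hycont.continuousOn
    have hgmax : ∀ s, y s ≤ y tM := by
      intro s
      rw [← hfr s]
      exact hmax (hfrm s)
    have hgmin : ∀ s, y tm ≤ y s := by
      intro s
      rw [← hfr s]
      exact hmin (hfrm s)
    constructor
    · by_contra hc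
      push_neg at hc
      have hml : y tm < -M := lt_of_le_of_lt (hgmin t) hc
      have hloc : IsLocalMin y tm := Filter.Eventually.of_forall hgmin
      have hd0 := hloc.deriv_eq_zero
      rw [hyde tm] at hd0
      linarith [hflb (y tm) hml.le, hcos_ge tm]
    · by_contra hc
      push_neg at hc
      have hml : M < y tM := lt_of_lt_of_le hc (hgmax t)
      have hloc : IsLocalMax y tM := Filter.Eventually.of_forall hgmax
      have hd0 := hloc.deriv_eq_zero
      rw [hyde tM] at hd0
      linarith [hfub (y tM) hml.le, hcos_le tM]
  -- ### every periodic solution solves the truncated equation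
  have hFsol : ∀ y, IsPeriodicSolution f h y → ∀ t, HasDerivAt y (F t (y t)) t := by
    intro y hy t
    have hd : HasDerivAt y (deriv y t) t := (hy.1 t).hasDerivAt
    rw [hy.2.1 t] at hd
    have he : F t (y t) = f (y t) + h * Real.cos (2*Real.pi*t) := by
      rw [hFdef]; simp only; rw [hprojid _ (hbound y hy t)]
    rwa [← he] at hd
  -- ### periodic solutions avoid ±xm
  have havoid : ∀ y, IsPeriodicSolution f h y → ∀ t, y t ≠ xm ∧ y t ≠ -xm := by
    intro y hy t
    have hyF := hFsol y hy
    have hycont : Continuous y := (hy.1).continuous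
    constructor
    · intro he
      refine no_periodic_crossing (w := fun s => y s - xm) (hycont.sub continuous_const)
        (fun s => by simp [hy.2.2 s]) ?_ (t₀ := t) (by simp [he])
      intro s hs
      have hys : y s = xm := by linarith [hs, sub_eq_zero.mp hs]
      have hd : HasDerivAt (fun s' => y s' - xm) (F s (y s)) s := (hyF s).sub_const xm
      rw [hys] at hd
      exact cross_up hd (hFxm s) hs
    · intro he
      refine no_periodic_crossing (w := fun s => -(y s) - xm) ((hycont.neg).sub continuous_const)
        (fun s => by simp [hy.2.2 s]) ?_ (t₀ := t) (by show -(y t) - xm = 0; rw [he]; ring)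
      intro s hs
      have hys : y s = -xm := by
        have h1 : -(y s) - xm = 0 := hs
        linarith
      have hd : HasDerivAt (fun s' => -(y s') - xm) (-(F s (y s))) s := ((hyF s).neg).sub_const xm
      rw [hys] at hd
      exact cross_up hd (by linarith [hFnegxm s]) hs
  -- ### trichotomy
  have htri : ∀ y, IsPeriodicSolution f h y →
      (∀ t, y t < -xm) ∨ (∀ t, -xm < y t ∧ y t < xm) ∨ (∀ t, xm < y t) := by
    intro y hy
    have hycont : Continuous y := (hy.1).continuous
    have hav := havoid y hy
    have hIVT : ∀ c : ℝ, (∀ t, y t ≠ c) → ∀ t s : ℝ, y t < c → c < y s → False := by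
      intro c hne t s h1 h2
      have hc : c ∈ uIcc (y t) (y s) := by rw [mem_uIcc]; left; exact ⟨h1.le, h2.le⟩
      obtain ⟨r, _, hr⟩ := intermediate_value_uIcc hycont.continuousOn hc
      exact hne r hr
    rcases lt_trichotomy (y 0) (-xm) with h0 | h0 | h0
    · left
      intro t
      by_contra hc
      push_neg at hc
      have hlt : -xm < y t := lt_of_le_of_ne hc (Ne.symm (hav t).2)
      exact hIVT (-xm) (fun s => (hav s).2) 0 t h0 hlt
    · exact absurd h0 (hav 0).2
    · rcases lt_trichotomy (y 0) xm with h1 | h1 | h1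
      · right; left
        intro t
        constructor
        · by_contra hc
          push_neg at hc
          have hlt : y t < -xm := lt_of_le_of_ne hc (hav t).2
          exact hIVT (-xm) (fun s => (hav s).2) t 0 hlt h0
        · by_contra hc
          push_neg at hc
          have hlt : xm < y t := lt_of_le_of_ne hc (Ne.symm (hav t).1)
          exact hIVT xm (fun s => (hav s).1) 0 t h1 hlt
      · exact absurd h1 (hav 0).1
      · right; right
        intro t
        by_contra hc
        push_neg at hc
        have hlt : y t < xm := lt_of_le_of_ne hc (hav t).1
        exact hIVT xm (fun s => (hav s).1) t 0 hlt h1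
  -- ### ordering of distinct periodic solutions
  have hord : ∀ y z, IsPeriodicSolution f h y → IsPeriodicSolution f h z → y ≠ z →
      (∀ t, y t < z t) ∨ (∀ t, z t < y t) := by
    intro y z hy hz hne
    have hyF := hFsol y hy
    have hzF := hFsol z hz
    have hnever : ∀ t, y t ≠ z t := by
      intro t he
      exact hne (sol_unique_s3 hFlip hyF hzF he)
    have hcont : Continuous (fun t => z t - y t) := (hz.1.continuous).sub (hy.1.continuous)
    rcases lt_or_gt_of_ne (hnever 0) with h0 | h0
    · left
      intro t
      by_contra hc
      push_neg at hc
      have hlt : z t < y t := lt_of_le_of_ne hc (fun e => hnever t e.symm)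
      have hmem : (0:ℝ) ∈ uIcc (z 0 - y 0) (z t - y t) := by
        rw [mem_uIcc]; right; constructor <;> [linarith; linarith]
      obtain ⟨r, _, hr⟩ := intermediate_value_uIcc (a := (0:ℝ)) (b := t) hcont.continuousOn hmem
      exact hnever r (by linarith [hr, sub_eq_zero.mp hr])
    · right
      intro t
      by_contra hc
      push_neg at hc
      have hlt : y t < z t := lt_of_le_of_ne hc (hnever t)
      have hmem : (0:ℝ) ∈ uIcc (z 0 - y 0) (z t - y t) := by
        rw [mem_uIcc]; left; constructor <;> [linarith; linarith]
      obtain ⟨r, _, hr⟩ := intermediate_value_uIcc (a := (0:ℝ)) (b := t) hcont.continuousOn hmem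
      exact hnever r (by linarith [hr, sub_eq_zero.mp hr])
  -- ### the integral identity for ordered pairs of periodic solutions
  have hIID : ∀ y z, IsPeriodicSolution f h y → IsPeriodicSolution f h z → (∀ t, y t < z t) →
      ∫ t in (0:ℝ)..1, (γ - ((y t)^2 + y t * z t + (z t)^2)) = 0 := by
    intro y z hy hz hlt
    have hyF := hFsol y hy
    have hzF := hFsol z hz
    have hyc : Continuous y := hy.1.continuous
    have hzc : Continuous z := hz.1.continuous
    have hu : ∀ t, HasDerivAt (fun s => Real.log (z s - y s))
        (γ - ((y t)^2 + y t * z t + (z t)^2)) t := by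
      intro t
      have hsub : HasDerivAt (fun s => z s - y s) (F t (z t) - F t (y t)) t :=
        (hzF t).sub (hyF t)
      have hne : z t - y t ≠ 0 := ne_of_gt (sub_pos.mpr (hlt t))
      have hlog := hsub.log hne
      have hval : (F t (z t) - F t (y t)) / (z t - y t)
          = γ - ((y t)^2 + y t * z t + (z t)^2) := by
        rw [hFdef]
        simp only
        rw [hprojid _ (hbound z hz t), hprojid _ (hbound y hy t), hf, hf, div_eq_iff hne]
        ring
      rwa [hval] at hlog
    have hcont : Continuous (fun t => γ - ((y t)^2 + y t * z t + (z t)^2)) :=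
      continuous_const.sub (((hyc.pow 2).add (hyc.mul hzc)).add (hzc.pow 2))
    have hFTC := intervalIntegral.integral_eq_sub_of_hasDerivAt
      (f := fun s => Real.log (z s - y s))
      (f' := fun t => γ - ((y t)^2 + y t * z t + (z t)^2))
      (fun t _ => hu t) (hcont.intervalIntegrable 0 1)
    rw [hFTC]
    have hy1 : y 1 = y 0 := by simpa using hy.2.2 0
    have hz1 : z 1 = z 0 := by simpa using hz.2.2 0
    rw [hy1, hz1, sub_self]
  -- ### positivity of integrals of positive functions
  have hpos_int : ∀ w : ℝ → ℝ, Continuous w → (∀ t, 0 < w t) →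
      0 < ∫ t in (0:ℝ)..1, w t :=
    fun w hc hp => intervalIntegral.intervalIntegral_pos_of_pos (hc.intervalIntegrable 0 1) hp one_pos
  -- ### no two distinct periodic solutions in the same outer region
  have houter : ∀ y z, IsPeriodicSolution f h y → IsPeriodicSolution f h z →
      (∀ t, y t < z t) → ((∀ t, xm < y t) ∨ (∀ t, z t < -xm)) → False := by
    intro y z hy hz hlt hcase
    have hI := hIID y z hy hz hlt
    have hyc : Continuous y := hy.1.continuous
    have hzc : Continuous z := hz.1.continuous
    have hneg : ∀ t, 0 < (y t)^2 + y t * z t + (z t)^2 - γ := by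
      intro t
      have h2 := hlt t
      rcases hcase with hc | hc
      · have h1 := hc t
        nlinarith [hxm0, hxmsq, mul_pos (sub_pos.mpr h1) (sub_pos.mpr (h1.trans h2)),
          mul_pos (sub_pos.mpr h1) (show (0:ℝ) < y t + xm by linarith),
          mul_pos (sub_pos.mpr (h1.trans h2)) (show (0:ℝ) < z t + xm by linarith)]
      · have h1 := hc t
        nlinarith [hxm0, hxmsq,
          mul_pos (show (0:ℝ) < -(y t) - xm by linarith) (show (0:ℝ) < -(z t) - xm by linarith),
          mul_pos (show (0:ℝ) < -(y t) - xm by linarith) (show (0:ℝ) < -(y t) + xm by linarith),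
          mul_pos (show (0:ℝ) < -(z t) - xm by linarith) (show (0:ℝ) < -(z t) + xm by linarith)]
    have hp := hpos_int (fun t => (y t)^2 + y t * z t + (z t)^2 - γ)
      ((((hyc.pow 2).add (hyc.mul hzc)).add (hzc.pow 2)).sub continuous_const) hneg
    have heq : ∫ t in (0:ℝ)..1, ((y t)^2 + y t * z t + (z t)^2 - γ)
        = - ∫ t in (0:ℝ)..1, (γ - ((y t)^2 + y t * z t + (z t)^2)) := by
      rw [← intervalIntegral.integral_neg]
      apply intervalIntegral.integral_congr
      intro t _
      ring
    rw [heq, hI, neg_zero] at hp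
    exact lt_irrefl 0 hp
  -- ### no four pointwise-ordered periodic solutions
  have hfour : ∀ y₁ y₂ y₃ y₄, IsPeriodicSolution f h y₁ → IsPeriodicSolution f h y₂ →
      IsPeriodicSolution f h y₃ → IsPeriodicSolution f h y₄ →
      (∀ t, y₁ t < y₂ t) → (∀ t, y₂ t < y₃ t) → (∀ t, y₃ t < y₄ t) → False := by
    intro y₁ y₂ y₃ y₄ h1 h2 h3 h4 l12 l23 l34
    have c1 : Continuous y₁ := h1.1.continuous
    have c2 : Continuous y₂ := h2.1.continuous
    have c3 : Continuous y₃ := h3.1.continuous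
    have c4 : Continuous y₄ := h4.1.continuous
    have I13 := hIID y₁ y₃ h1 h3 (fun t => (l12 t).trans (l23 t))
    have I23 := hIID y₂ y₃ h2 h3 l23
    have I14 := hIID y₁ y₄ h1 h4 (fun t => ((l12 t).trans (l23 t)).trans (l34 t))
    have I24 := hIID y₂ y₄ h2 h4 (fun t => (l23 t).trans (l34 t))
    have cg : ∀ (p q : ℝ → ℝ), Continuous p → Continuous q →
        IntervalIntegrable (fun t => γ - ((p t)^2 + p t * q t + (q t)^2))
          MeasureTheory.volume 0 1 :=
      fun p q hp hq =>
        (continuous_const.sub (((hp.pow 2).add (hp.mul hq)).add (hq.pow 2))).intervalIntegrable 0 1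
    have hp := hpos_int (fun t => (y₁ t - y₂ t) * (y₃ t - y₄ t))
      ((c1.sub c2).mul (c3.sub c4))
      (fun t => mul_pos_of_neg_of_neg (by linarith [l12 t]) (by linarith [l34 t]))
    have hsplit : ∫ t in (0:ℝ)..1, (y₁ t - y₂ t) * (y₃ t - y₄ t)
        = (∫ t in (0:ℝ)..1, (γ - ((y₂ t)^2 + y₂ t * y₃ t + (y₃ t)^2)))
          + (∫ t in (0:ℝ)..1, (γ - ((y₁ t)^2 + y₁ t * y₄ t + (y₄ t)^2)))
          - (∫ t in (0:ℝ)..1, (γ - ((y₁ t)^2 + y₁ t * y₃ t + (y₃ t)^2)))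
          - (∫ t in (0:ℝ)..1, (γ - ((y₂ t)^2 + y₂ t * y₄ t + (y₄ t)^2))) := by
      rw [← intervalIntegral.integral_add (cg y₂ y₃ c2 c3) (cg y₁ y₄ c1 c4),
        ← intervalIntegral.integral_sub ((cg y₂ y₃ c2 c3).add (cg y₁ y₄ c1 c4)) (cg y₁ y₃ c1 c3),
        ← intervalIntegral.integral_sub
          (((cg y₂ y₃ c2 c3).add (cg y₁ y₄ c1 c4)).sub (cg y₁ y₃ c1 c3)) (cg y₂ y₄ c2 c4)]
      apply intervalIntegral.integral_congr
      intro t _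
      ring
    rw [I13, I23, I14, I24] at hsplit
    rw [hsplit] at hp
    norm_num at hp
  -- ### strict region membership of the three solutions
  have hX₁s : ∀ t, X₁ t < -xm := fun t => lt_of_le_of_ne (hX₁m t).2 ((havoid X₁ sol₁ t).2)
  have hX₃s : ∀ t, xm < X₃ t := fun t => lt_of_le_of_ne (hX₃m t).1 (Ne.symm ((havoid X₃ sol₃ t).1))
  have hX₂s : ∀ t, -xm < X₂ t ∧ X₂ t < xm := fun t =>
    ⟨lt_of_le_of_ne (hX₂m t).1 (Ne.symm ((havoid X₂ sol₂ t).2)),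
     lt_of_le_of_ne (hX₂m t).2 ((havoid X₂ sol₂ t).1)⟩
  -- ### stability integrals
  have hderivf : ∀ u : ℝ, deriv f u = γ - 3 * u ^ 2 := by
    intro u
    have hfe : f = fun w => γ * w - w ^ 3 := funext hf
    have h1 : HasDerivAt f (γ * 1 - ↑3 * u ^ (3 - 1)) u := by
      rw [hfe]
      exact ((hasDerivAt_id u).const_mul γ).sub (hasDerivAt_pow 3 u)
    rw [h1.deriv]
    norm_num
  have hstab : ∀ (X : ℝ → ℝ), Continuous X → (∀ t, xm ^ 2 < (X t) ^ 2) →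
      (∫ s in (0:ℝ)..1, deriv f (X s)) < 0 := by
    intro X hc hsq
    have heq : ∫ s in (0:ℝ)..1, deriv f (X s) = ∫ s in (0:ℝ)..1, (γ - 3 * (X s)^2) :=
      intervalIntegral.integral_congr (fun s _ => hderivf (X s))
    have hp := hpos_int (fun s => 3 * (X s)^2 - γ)
      ((continuous_const.mul (hc.pow 2)).sub continuous_const)
      (fun s => by show 0 < 3 * (X s)^2 - γ; nlinarith [hsq s, hxmsq])
    have heq2 : ∫ s in (0:ℝ)..1, (3 * (X s)^2 - γ)
        = - ∫ s in (0:ℝ)..1, (γ - 3 * (X s)^2) := by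
      rw [← intervalIntegral.integral_neg]
      apply intervalIntegral.integral_congr
      intro s _
      ring
    rw [heq2] at hp
    rw [heq]
    linarith [neg_pos.mp hp]
  have hstab₁ : (∫ s in (0:ℝ)..1, deriv f (X₁ s)) < 0 :=
    hstab X₁ sol₁.1.continuous (fun t => by nlinarith [hX₁s t, hxm0])
  have hstab₃ : (∫ s in (0:ℝ)..1, deriv f (X₃ s)) < 0 :=
    hstab X₃ sol₃.1.continuous (fun t => by nlinarith [hX₃s t, hxm0])
  -- ### final assembly
  refine ⟨X₁, X₂, X₃, sol₁, sol₂, sol₃, hX₁s, hX₂s, hX₃s, hstab₁, hstab₃, ?_⟩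
  intro y hy
  rcases htri y hy with hcase | hcase | hcase
  · left
    by_contra hne
    rcases hord y X₁ hy sol₁ hne with hlt | hlt
    · exact houter y X₁ hy sol₁ hlt (Or.inr hX₁s)
    · exact houter X₁ y sol₁ hy hlt (Or.inr hcase)
  · right; left
    by_contra hne
    have hne₁ : X₁ ≠ y := by
      intro e
      have h1 := hX₁s 0
      rw [e] at h1
      linarith [(hcase 0).1]
    have hlt₁ : ∀ t, X₁ t < y t := by
      rcases hord X₁ y sol₁ hy hne₁ with hl | hl
      · exact hl
      · exfalso; linarith [hX₁s 0, (hcase 0).1, hl 0]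
    have hne₃ : y ≠ X₃ := by
      intro e
      have h1 := hX₃s 0
      rw [← e] at h1
      linarith [(hcase 0).2]
    have hlt₃ : ∀ t, y t < X₃ t := by
      rcases hord y X₃ hy sol₃ hne₃ with hl | hl
      · exact hl
      · exfalso; linarith [hX₃s 0, (hcase 0).2, hl 0]
    rcases hord y X₂ hy sol₂ hne with hl | hl
    · exact hfour X₁ y X₂ X₃ sol₁ hy sol₂ sol₃ hlt₁ hl
        (fun t => lt_trans (hX₂s t).2 (hX₃s t))
    · exact hfour X₁ X₂ y X₃ sol₁ sol₂ hy sol₃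
        (fun t => lt_trans (hX₁s t) (hX₂s t).1) hl hlt₃
  · right; right
    by_contra hne
    rcases hord y X₃ hy sol₃ hne with hlt | hlt
    · exact houter y X₃ hy sol₃ hlt (Or.inl hcase)
    · exact houter X₃ y sol₃ hy hlt (Or.inl hX₃s)
end

section
/- Let β > 1, let f(x) = tanh(βx) − x, and let x_m > 0 be the unique positive point at which f attains its maximum over (0,∞). Then for every h with 0 ≤ h < f(x_m), the equation x' = f(x) + h·cos(2πt) has exactly three 1-periodic solutions: one whose values lie in (−∞, −x_m), one whose values lie in (−x_m, x_m), and one whose values lie in (x_m, ∞). The two solutions with values outside [−x_m, x_m] are stable, i.e. satisfy ∫₀¹ f'(x(s)) ds < 0. -/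
open Real Set Filter Topology

private lemma tanh_hasDerivAt (y : ℝ) : HasDerivAt Real.tanh (1 - Real.tanh y ^ 2) y := by
  have hc : Real.cosh y ≠ 0 := (Real.cosh_pos y).ne'
  have h := (Real.hasDerivAt_sinh y).div (Real.hasDerivAt_cosh y) hc
  have he : (fun x => Real.sinh x / Real.cosh x) = Real.tanh := by
    funext x; rw [Real.tanh_eq_sinh_div_cosh]
  rw [show (Real.sinh / Real.cosh) = Real.tanh from he] at h
  refine h.congr_deriv (Eq.symm ?_)
  rw [Real.tanh_eq_sinh_div_cosh]
  field_simp

private lemma tanh_lt_one' (x : ℝ) : Real.tanh x < 1 := by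
  rw [Real.tanh_eq_sinh_div_cosh, div_lt_one (Real.cosh_pos x)]
  rw [Real.sinh_eq, Real.cosh_eq]
  have := Real.exp_pos (-x)
  linarith

private lemma neg_one_lt_tanh' (x : ℝ) : -1 < Real.tanh x := by
  have := tanh_lt_one' (-x)
  rw [Real.tanh_neg] at this; linarith

private lemma tanh_sq_lt_one' (x : ℝ) : Real.tanh x ^ 2 < 1 := by
  nlinarith [tanh_lt_one' x, neg_one_lt_tanh' x]

private lemma tanh_strictMono' : StrictMono Real.tanh := by
  apply strictMono_of_deriv_pos
  intro x
  rw [(tanh_hasDerivAt x).deriv]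
  nlinarith [tanh_sq_lt_one' x]

private lemma hasDerivWithinAt_singleton' (f : ℝ → ℝ) (d x : ℝ) :
    HasDerivWithinAt f d {x} x := by
  rw [hasDerivWithinAt_iff_tendsto_slope, Set.diff_self, nhdsWithin_empty]
  exact tendsto_bot

private lemma no_touch_upper {y : ℝ → ℝ} (hyd : Differentiable ℝ y)
    (hyp : ∀ t, y (t + 1) = y t) {c : ℝ}
    (hder : ∀ t, y t = c → 0 < deriv y t) : ∀ t, y t ≠ c := by
  intro t₀ h0
  have hslope : ∀ u : ℝ, y u = c →
      ∀ᶠ r in 𝓝[≠] u, 0 < slope y u r := by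
    intro u hu
    have hd : HasDerivAt y (deriv y u) u := (hyd u).hasDerivAt
    rw [hasDerivAt_iff_tendsto_slope] at hd
    exact hd.eventually (eventually_gt_nhds (hder u hu))
  have h2 : ∀ᶠ r in 𝓝[<] t₀, 0 < slope y t₀ r :=
    (hslope t₀ h0).filter_mono (nhdsWithin_mono _ (fun x hx => ne_of_lt hx))
  obtain ⟨l, hl, hsub⟩ := mem_nhdsLT_iff_exists_Ioo_subset.mp h2
  rw [mem_Iio] at hl
  have hlt : ∀ r ∈ Ioo l t₀, y r < c := by
    intro r hr
    have hs := hsub hr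
    rw [Set.mem_setOf_eq, slope_def_field] at hs
    rcases div_pos_iff.mp hs with ⟨h1, h2⟩ | ⟨h1, h2⟩
    · linarith [hr.2]
    · rw [h0] at h1; linarith
  set m := max l (t₀ - 2⁻¹) with hm
  have hmlt : m < t₀ := max_lt hl (by linarith)
  have hm1 : t₀ - 1 ≤ m := le_max_of_le_right (by linarith)
  have hml : l ≤ m := le_max_left _ _
  set A := Icc (t₀-1) m ∩ y ⁻¹' (Ici c) with hA
  have hAc : IsClosed A :=
    (hyd.continuous.continuousOn).preimage_isClosed_of_isClosed isClosed_Icc isClosed_Ici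
  have hAcomp : IsCompact A := isCompact_Icc.of_isClosed_subset hAc inter_subset_left
  have hy1 : y (t₀ - 1) = c := by
    have := hyp (t₀ - 1); rw [sub_add_cancel] at this; rw [← this]; exact h0
  have hAne : A.Nonempty := ⟨t₀ - 1, ⟨le_rfl, hm1⟩, le_of_eq hy1.symm⟩
  set u := sSup A with hu
  have huA : u ∈ A := hAcomp.sSup_mem hAne
  have hyu : c ≤ y u := huA.2
  have hum : u ≤ m := huA.1.2
  have hut : u < t₀ := hum.trans_lt hmlt
  have habove : ∀ r ∈ Ioo u t₀, y r < c := by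
    intro r hr
    by_cases hrm : r ≤ m
    · by_contra hge
      push_neg at hge
      exact absurd (le_csSup hAcomp.bddAbove ⟨⟨huA.1.1.trans hr.1.le, hrm⟩, hge⟩)
        (not_le.mpr hr.1)
    · push_neg at hrm
      exact hlt r ⟨hml.trans_lt hrm, hr.2⟩
  haveI := left_nhdsWithin_Ioo_neBot hut
  have htends : Tendsto y (𝓝[Ioo u t₀] u) (𝓝 (y u)) :=
    (hyd.continuous.continuousAt).continuousWithinAt
  have hyuc : y u = c := by
    refine le_antisymm (le_of_tendsto htends ?_) hyu
    exact eventually_nhdsWithin_of_forall fun r hr => (habove r hr).le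
  have h3 : ∀ᶠ r in 𝓝[Ioo u t₀] u, 0 < slope y u r :=
    (hslope u hyuc).filter_mono (nhdsWithin_mono _ (fun x hx => ne_of_gt hx.1))
  obtain ⟨r, hsl, hrmem⟩ := (h3.and eventually_mem_nhdsWithin).exists
  rw [slope_def_field] at hsl
  have hru : u < r := hrmem.1
  have : c < y r := by
    rcases div_pos_iff.mp hsl with ⟨h1, h2⟩ | ⟨h1, h2⟩
    · rw [hyuc] at h1; linarith
    · linarith
  linarith [habove r hrmem]

private lemma no_touch_lower {y : ℝ → ℝ} (hyd : Differentiable ℝ y)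
    (hyp : ∀ t, y (t + 1) = y t) {c : ℝ}
    (hder : ∀ t, y t = c → deriv y t < 0) : ∀ t, y t ≠ c := by
  intro t ht
  have key := no_touch_upper (y := fun s => -(y s)) hyd.neg
    (fun s => by simp [hyp s]) (c := -c) (fun s hs => by
      rw [deriv.fun_neg]
      have : y s = c := by linarith [neg_eq_iff_eq_neg.mpr hs.symm]
      linarith [hder s this]) t
  exact key (by rw [ht])

section Gen

variable {g k : ℝ → ℝ} {L : NNReal} {a b : ℝ}

private lemma lip_v (hg : LipschitzWith L g) (t : ℝ) :
    LipschitzWith L fun x => g x + k t := fun x y => by simpa using hg x y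

private lemma local_sol (hg : LipschitzWith L g) (hk : Continuous k)
    {C τ : ℝ} (hτ : 0 < τ)
    (hC : ∀ t x : ℝ, x ∈ Icc (a-1) (b+1) → |g x + k t| ≤ C) (hCτ : C * τ ≤ 1)
    (t₀ x₀ : ℝ) (hx₀ : x₀ ∈ Icc a b) :
    ∃ Y : ℝ → ℝ, Y t₀ = x₀ ∧ ∀ t ∈ Icc t₀ (t₀ + τ),
      HasDerivWithinAt Y (g (Y t) + k t) (Icc t₀ (t₀ + τ)) t := by
  have hball : Metric.closedBall x₀ 1 ⊆ Icc (a-1) (b+1) := by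
    rw [Real.closedBall_eq_Icc]
    exact Icc_subset_Icc (by linarith [hx₀.1]) (by linarith [hx₀.2])
  have hC0 : 0 ≤ C :=
    le_trans (abs_nonneg _) (hC t₀ x₀ (hball (Metric.mem_closedBall_self zero_le_one)))
  have hpl : IsPicardLindelof (fun t x => g x + k t) (tmin := t₀) (tmax := t₀ + τ)
      ⟨t₀, le_refl _, by linarith⟩ x₀ 1 0 C.toNNReal L :=
    { lipschitzOnWith := fun t _ => (lip_v hg t).lipschitzOnWith
      continuousOn := fun x _ => (continuous_const.add hk).continuousOn
      norm_le := fun t _ x hx => by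
        rw [Real.norm_eq_abs, Real.coe_toNNReal C hC0]
        exact hC t x (hball (by rwa [NNReal.coe_one] at hx))
      mul_max_le := by
        show (C.toNNReal : ℝ) * max (t₀ + τ - t₀) (t₀ - t₀) ≤ ((1 : NNReal) : ℝ) - ((0 : NNReal) : ℝ)
        rw [Real.coe_toNNReal C hC0, NNReal.coe_one, NNReal.coe_zero, sub_zero]
        rw [show t₀ + τ - t₀ = τ by ring, show t₀ - t₀ = 0 by ring, max_eq_left hτ.le]
        exact hCτ }
  obtain ⟨Y, hY0, hYd⟩ := hpl.exists_eq_forall_mem_Icc_hasDerivWithinAt₀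
  exact ⟨Y, hY0, hYd⟩

private lemma invariant_upper {Y : ℝ → ℝ} {t₀ t₁ : ℝ}
    (hb' : ∀ t, g b + k t < 0)
    (hY : ∀ t ∈ Icc t₀ t₁, HasDerivWithinAt Y (g (Y t) + k t) (Icc t₀ t₁) t)
    (h0 : Y t₀ ≤ b) : ∀ t ∈ Icc t₀ t₁, Y t ≤ b := by
  intro s hs
  by_contra hbs
  push_neg at hbs
  have hYc : ContinuousOn Y (Icc t₀ t₁) := fun r hr => (hY r hr).continuousWithinAt
  set A := Icc t₀ s ∩ Y ⁻¹' (Iic b) with hA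
  have hsub : Icc t₀ s ⊆ Icc t₀ t₁ := Icc_subset_Icc le_rfl hs.2
  have hAc : IsClosed A :=
    (hYc.mono hsub).preimage_isClosed_of_isClosed isClosed_Icc isClosed_Iic
  have hAcomp : IsCompact A := isCompact_Icc.of_isClosed_subset hAc inter_subset_left
  have hAne : A.Nonempty := ⟨t₀, ⟨le_rfl, hs.1⟩, h0⟩
  set u := sSup A with hu
  have huA : u ∈ A := hAcomp.sSup_mem hAne
  have hus : u ≤ s := huA.1.2
  have hu0 : t₀ ≤ u := huA.1.1
  have hYu : Y u ≤ b := huA.2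
  have hult : u < s := lt_of_le_of_ne hus (fun h => by rw [h] at hYu; linarith)
  have habove : ∀ r ∈ Ioc u s, b < Y r := by
    intro r hr
    by_contra hYr
    push_neg at hYr
    exact absurd (le_csSup hAcomp.bddAbove ⟨⟨hu0.trans hr.1.le, hr.2⟩, hYr⟩) (not_le.mpr hr.1)
  have hmemu : u ∈ Icc t₀ t₁ := ⟨hu0, hus.trans hs.2⟩
  have hIoo : Ioo u s ⊆ Icc t₀ t₁ := fun r hr => ⟨hu0.trans hr.1.le, hr.2.le.trans hs.2⟩
  haveI := left_nhdsWithin_Ioo_neBot hult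
  have htends : Tendsto Y (𝓝[Ioo u s] u) (𝓝 (Y u)) := (hYc u hmemu).mono hIoo
  have hYub : Y u = b := by
    refine le_antisymm hYu (ge_of_tendsto htends ?_)
    exact eventually_nhdsWithin_of_forall fun r hr => (habove r ⟨hr.1, hr.2.le⟩).le
  have hd : HasDerivWithinAt Y (g b + k u) (Ioo u s) u := by
    have := (hY u hmemu).mono hIoo
    rwa [hYub] at this
  have hneg : g b + k u < 0 := hb' u
  rw [hasDerivWithinAt_iff_tendsto_slope] at hd
  rw [show Ioo u s \ {u} = Ioo u s from
    diff_singleton_eq_self (fun h => absurd h.1 (lt_irrefl u))] at hd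
  have h1 : ∀ᶠ r in 𝓝[Ioo u s] u, slope Y u r < 0 := hd.eventually (eventually_lt_nhds hneg)
  obtain ⟨r, hslope, hrmem⟩ := (h1.and eventually_mem_nhdsWithin).exists
  rw [slope_def_field] at hslope
  have hru : u < r := hrmem.1
  have hnum : Y r - Y u < 0 := by
    rcases div_neg_iff.mp hslope with ⟨h1, h2⟩ | ⟨h1, h2⟩
    · linarith
    · exact h1
  have := habove r ⟨hru, hrmem.2.le⟩
  rw [hYub] at hnum
  linarith

private lemma invariant_lower {Y : ℝ → ℝ} {t₀ t₁ : ℝ}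
    (ha' : ∀ t, 0 < g a + k t)
    (hY : ∀ t ∈ Icc t₀ t₁, HasDerivWithinAt Y (g (Y t) + k t) (Icc t₀ t₁) t)
    (h0 : a ≤ Y t₀) : ∀ t ∈ Icc t₀ t₁, a ≤ Y t := by
  intro t ht
  have key := invariant_upper (g := fun x => -(g (-x))) (k := fun t => -(k t)) (b := -a)
    (Y := fun t => -(Y t)) (t₀ := t₀) (t₁ := t₁)
    (fun t => by have := ha' t; simp only [neg_neg]; linarith)
    (fun t ht => by
      have := (hY t ht).neg
      exact this.congr_deriv (by simp only [neg_neg]; ring))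
    (by simpa using h0) t ht
  simpa using key

private lemma paste {Y Z : ℝ → ℝ} {r m m' : ℝ} (hrm : r ≤ m) (hmm' : m ≤ m')
    (hY : ∀ t ∈ Icc r m, HasDerivWithinAt Y (g (Y t) + k t) (Icc r m) t)
    (hZ : ∀ t ∈ Icc m m', HasDerivWithinAt Z (g (Z t) + k t) (Icc m m') t)
    (heq : Y m = Z m) :
    ∃ W : ℝ → ℝ, W r = Y r ∧
      (∀ t ∈ Icc r m', HasDerivWithinAt W (g (W t) + k t) (Icc r m') t) ∧
      ∀ t, (t ≤ m → W t = Y t) ∧ (m ≤ t → W t = Z t) := by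
  set W : ℝ → ℝ := fun t => if t ≤ m then Y t else Z t with hW
  have hWY : ∀ t, t ≤ m → W t = Y t := fun t ht => if_pos ht
  have hWZ : ∀ t, m ≤ t → W t = Z t := by
    intro t ht
    by_cases htm : t ≤ m
    · have : t = m := le_antisymm htm ht
      subst this; rw [hW]; simp only [if_pos le_rfl, heq]
    · exact if_neg htm
  refine ⟨W, hWY r hrm, ?_, fun t => ⟨hWY t, hWZ t⟩⟩
  intro t ht
  rcases lt_trichotomy t m with h | h | h
  · have hmem : t ∈ Icc r m := ⟨ht.1, h.le⟩
    have hD' : HasDerivWithinAt Y (g (Y t) + k t) (Icc r m') t := by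
      refine (hY t hmem).mono_of_mem_nhdsWithin ?_
      refine mem_of_superset (inter_mem_nhdsWithin (Icc r m') (Iic_mem_nhds h)) ?_
      exact fun x hx => ⟨hx.1.1, hx.2⟩
    have hev : W =ᶠ[𝓝[Icc r m'] t] Y := by
      refine Filter.eventuallyEq_of_mem (inter_mem_nhdsWithin (Icc r m') (Iio_mem_nhds h)) ?_
      exact fun x hx => hWY x hx.2.le
    have := hD'.congr_of_eventuallyEq hev (hWY t h.le)
    rwa [hWY t h.le]
  · subst h
    have hL : HasDerivWithinAt W (g (Y t) + k t) (Icc r t) t := by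
      refine (hY t ⟨hrm, le_rfl⟩).congr (fun s hs => hWY s hs.2) (hWY t le_rfl)
    have hR : HasDerivWithinAt W (g (Y t) + k t) (Icc t m') t := by
      have := (hZ t ⟨le_rfl, hmm'⟩).congr (fun s hs => hWZ s hs.1) (hWZ t le_rfl)
      rwa [← heq] at this
    have := hL.union hR
    rw [Set.Icc_union_Icc_eq_Icc hrm hmm'] at this
    rwa [hWY t le_rfl]
  · have hmem : t ∈ Icc m m' := ⟨h.le, ht.2⟩
    have hD' : HasDerivWithinAt Z (g (Z t) + k t) (Icc r m') t := by
      refine (hZ t hmem).mono_of_mem_nhdsWithin ?_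
      refine mem_of_superset (inter_mem_nhdsWithin (Icc r m') (Ioi_mem_nhds h)) ?_
      exact fun x hx => ⟨hx.2.le, hx.1.2⟩
    have hev : W =ᶠ[𝓝[Icc r m'] t] Z := by
      refine Filter.eventuallyEq_of_mem (inter_mem_nhdsWithin (Icc r m') (Ioi_mem_nhds h)) ?_
      exact fun x hx => hWZ x hx.2.le
    have := hD'.congr_of_eventuallyEq hev (hWZ t h.le)
    rwa [hWZ t h.le]

private lemma global_sol (hg : LipschitzWith L g) (hk : Continuous k)
    {C τ : ℝ} (hτ : 0 < τ)
    (hC : ∀ t x : ℝ, x ∈ Icc (a-1) (b+1) → |g x + k t| ≤ C) (hCτ : C * τ ≤ 1)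
    (ha' : ∀ t, 0 < g a + k t) (hb' : ∀ t, g b + k t < 0) :
    ∀ n : ℕ, ∀ x₀ ∈ Icc a b, ∃ Y : ℝ → ℝ, Y 0 = x₀ ∧
      ∀ t ∈ Icc 0 ((n:ℝ)*τ),
        HasDerivWithinAt Y (g (Y t) + k t) (Icc 0 ((n:ℝ)*τ)) t ∧ Y t ∈ Icc a b := by
  intro n
  induction n with
  | zero =>
    intro x₀ hx₀
    refine ⟨fun _ => x₀, rfl, ?_⟩
    simp only [Nat.cast_zero, zero_mul, Icc_self]
    intro t ht
    rw [mem_singleton_iff] at ht; subst ht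
    exact ⟨hasDerivWithinAt_singleton' _ _ _, hx₀⟩
  | succ n ih =>
    intro x₀ hx₀
    obtain ⟨Y, hY0, hY⟩ := ih x₀ hx₀
    have hnτ : (0:ℝ) ≤ (n:ℝ)*τ := by positivity
    have hend : Y ((n:ℝ)*τ) ∈ Icc a b := (hY ((n:ℝ)*τ) ⟨hnτ, le_rfl⟩).2
    obtain ⟨Z, hZ0, hZ⟩ := local_sol hg hk hτ hC hCτ ((n:ℝ)*τ) (Y ((n:ℝ)*τ)) hend
    have hZmem : ∀ t ∈ Icc ((n:ℝ)*τ) ((n:ℝ)*τ+τ), Z t ∈ Icc a b := by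
      intro t ht
      exact ⟨invariant_lower ha' hZ (by rw [hZ0]; exact hend.1) t ht,
        invariant_upper hb' hZ (by rw [hZ0]; exact hend.2) t ht⟩
    obtain ⟨W, hWr, hWD, hWeq⟩ :=
      paste hnτ (by linarith) (fun t ht => (hY t ht).1) hZ hZ0.symm
    refine ⟨W, by rw [hWr, hY0], ?_⟩
    have hcast : ((n+1 : ℕ):ℝ)*τ = (n:ℝ)*τ + τ := by push_cast; ring
    rw [hcast]
    intro t ht
    refine ⟨hWD t ht, ?_⟩
    by_cases htm : t ≤ (n:ℝ)*τ
    · rw [(hWeq t).1 htm]; exact (hY t ⟨ht.1, htm⟩).2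
    · push_neg at htm
      rw [(hWeq t).2 htm.le]
      exact hZmem t ⟨htm.le, ht.2⟩

private lemma uniq_fwd (hg : LipschitzWith L g) {Y Z : ℝ → ℝ} {T u s : ℝ}
    (hY : ∀ t ∈ Icc 0 T, HasDerivWithinAt Y (g (Y t) + k t) (Icc 0 T) t)
    (hZ : ∀ t ∈ Icc 0 T, HasDerivWithinAt Z (g (Z t) + k t) (Icc 0 T) t)
    (hu : 0 ≤ u) (hus : u ≤ s) (hsT : s < T)
    (heq : Y u = Z u) : Y s = Z s := by
  have hcY : ContinuousOn Y (Icc u s) := by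
    refine ContinuousOn.mono (fun r hr => (hY r hr).continuousWithinAt) ?_
    exact Icc_subset_Icc hu hsT.le
  have hcZ : ContinuousOn Z (Icc u s) := by
    refine ContinuousOn.mono (fun r hr => (hZ r hr).continuousWithinAt) ?_
    exact Icc_subset_Icc hu hsT.le
  have hder : ∀ (Q : ℝ → ℝ),
      (∀ t ∈ Icc 0 T, HasDerivWithinAt Q (g (Q t) + k t) (Icc 0 T) t) →
      ∀ r ∈ Ico u s, HasDerivWithinAt Q (g (Q r) + k r) (Ici r) r := by
    intro Q hQ r hr
    have hrT : r ∈ Icc 0 T := ⟨hu.trans hr.1, (hr.2.le.trans hsT.le)⟩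
    refine (hQ r hrT).mono_of_mem_nhdsWithin ?_
    refine mem_of_superset (inter_mem_nhdsWithin (Ici r)
      (Iio_mem_nhds (hr.2.trans_le hsT.le))) ?_
    exact fun x hx => ⟨(hu.trans hr.1).trans hx.1, hx.2.le⟩
  have key : EqOn Y Z (Icc u s) :=
    ODE_solution_unique (v := fun t x => g x + k t) (fun t => lip_v hg t)
      hcY (hder Y hY) hcZ (hder Z hZ) heq
  exact key ⟨hus, le_rfl⟩

private lemma fract_eq_on_Ico {n : ℤ} {s : ℝ} (hs : s ∈ Ico (n:ℝ) ((n:ℝ)+1)) :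
    Int.fract s = s - n := by
  have hfl : ⌊s⌋ = n := Int.floor_eq_iff.mpr ⟨hs.1, hs.2⟩
  rw [← Int.self_sub_floor, hfl]

private lemma periodify {Y : ℝ → ℝ} {T : ℝ} (hT : 1 < T)
    (hkp : ∀ s, k (s + 1) = k s)
    (hD : ∀ t ∈ Icc 0 T, HasDerivWithinAt Y (g (Y t) + k t) (Icc 0 T) t)
    (hper : Y 1 = Y 0) :
    ∀ t : ℝ, HasDerivAt (fun s => Y (Int.fract s)) (g (Y (Int.fract t)) + k t) t := by
  have hkper : Function.Periodic k 1 := hkp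
  have hkZ : ∀ (n : ℤ) (t : ℝ), k (t - n) = k t := by
    intro n t
    have := hkper.sub_int_mul_eq (x := t) n
    rwa [mul_one] at this
  have hInt : ∀ u ∈ Ioo (0:ℝ) T, HasDerivAt Y (g (Y u) + k u) u := fun u hu =>
    (hD u ⟨hu.1.le, hu.2.le⟩).hasDerivAt (Icc_mem_nhds hu.1 hu.2)
  intro t
  set n := ⌊t⌋ with hn
  have hfl : (n:ℝ) ≤ t := Int.floor_le t
  have hfu : t < (n:ℝ) + 1 := Int.lt_floor_add_one t
  by_cases ht : Int.fract t = 0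
  · -- t is an integer
    have htn : t = (n:ℝ) := by
      have h := Int.self_sub_floor t
      rw [ht] at h
      have := sub_eq_zero.mp h
      rw [this, hn]
    obtain ⟨m, hm⟩ : ∃ m : ℤ, t = (m:ℝ) := ⟨n, htn⟩
    subst hm
    have hk0 : k 0 = k (m:ℝ) := by
      have := hkZ m (m:ℝ); rwa [sub_self] at this
    have hfr0 : Int.fract ((m:ℝ)) = 0 := Int.fract_intCast m
    rw [hfr0, ← hk0]
    have h0T : (0:ℝ) ∈ Icc 0 T := ⟨le_rfl, by linarith⟩
    have hY0 : HasDerivWithinAt Y (g (Y 0) + k 0) (Ici (0:ℝ)) 0 := by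
      refine (hD 0 h0T).mono_of_mem_nhdsWithin ?_
      refine mem_of_superset (inter_mem_nhdsWithin (Ici (0:ℝ))
        (Iio_mem_nhds (by linarith : (0:ℝ) < T))) ?_
      exact fun x hx => ⟨hx.1, hx.2.le⟩
    have hinner : HasDerivWithinAt (fun s : ℝ => s - (m:ℝ)) 1 (Ici (m:ℝ)) (m:ℝ) :=
      ((hasDerivAt_id _).sub_const _).hasDerivWithinAt
    have hmaps : MapsTo (fun s : ℝ => s - (m:ℝ)) (Ici (m:ℝ)) (Ici (0:ℝ)) := by
      intro x hx
      exact mem_Ici.mpr (sub_nonneg.mpr (mem_Ici.mp hx))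
    have hcompR : HasDerivWithinAt (Y ∘ fun s : ℝ => s - (m:ℝ))
        ((g (Y 0) + k 0) * 1) (Ici (m:ℝ)) (m:ℝ) := by
      refine HasDerivWithinAt.comp (m:ℝ) ?_ hinner hmaps
      rw [show (m:ℝ) - (m:ℝ) = 0 by ring]
      exact hY0
    have hR : HasDerivWithinAt (fun s => Y (Int.fract s))
        ((g (Y 0) + k 0) * 1) (Ici (m:ℝ)) (m:ℝ) := by
      refine hcompR.congr_of_eventuallyEq ?_ ?_
      · refine Filter.eventuallyEq_of_mem (inter_mem_nhdsWithin (Ici (m:ℝ))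
          (Iio_mem_nhds (by linarith : (m:ℝ) < (m:ℝ)+1))) ?_
        intro x hx
        simp only [Function.comp]
        rw [fract_eq_on_Ico (n := m) ⟨hx.1, hx.2⟩]
      · simp only [Function.comp]
        rw [hfr0, sub_self]
    have hk1 : k 1 = k 0 := by have := hkp 0; rwa [zero_add] at this
    have hY1 : HasDerivAt Y (g (Y 0) + k 0) 1 := by
      have := hInt 1 ⟨one_pos, hT⟩
      rwa [hper, hk1] at this
    have hinnerL : HasDerivAt (fun s : ℝ => s - ((m:ℝ) - 1)) 1 (m:ℝ) :=
      (hasDerivAt_id _).sub_const _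
    have hcompL : HasDerivAt (Y ∘ fun s : ℝ => s - ((m:ℝ) - 1))
        ((g (Y 0) + k 0) * 1) (m:ℝ) := by
      refine HasDerivAt.comp (m:ℝ) ?_ hinnerL
      rw [show (m:ℝ) - ((m:ℝ) - 1) = 1 by ring]
      exact hY1
    have hL : HasDerivWithinAt (fun s => Y (Int.fract s))
        ((g (Y 0) + k 0) * 1) (Iic (m:ℝ)) (m:ℝ) := by
      refine (hcompL.hasDerivWithinAt).congr_of_eventuallyEq ?_ ?_
      · refine Filter.eventuallyEq_of_mem (inter_mem_nhdsWithin (Iic (m:ℝ))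
          (Ioi_mem_nhds (by linarith : (m:ℝ) - 1 < (m:ℝ)))) ?_
        intro x hx
        simp only [Function.comp]
        have hxm : x ≤ (m:ℝ) := hx.1
        have hxm' : (m:ℝ) - 1 < x := hx.2
        rcases eq_or_lt_of_le hxm with h | h
        · rw [h, hfr0, show (m:ℝ) - ((m:ℝ) - 1) = 1 by ring, hper]
        · have hx1 : x ∈ Ico (((m - 1 : ℤ)):ℝ) ((((m - 1 : ℤ)):ℝ) + 1) := by
            push_cast
            constructor
            · linarith
            · linarith
          rw [fract_eq_on_Ico hx1]
          push_cast
          ring_nf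
      · simp only [Function.comp]
        rw [hfr0, show (m:ℝ) - ((m:ℝ) - 1) = 1 by ring, hper]
    have := hL.union hR
    rw [Iic_union_Ici, hasDerivWithinAt_univ, mul_one] at this
    exact this
  · -- t is not an integer
    have htn : (n:ℝ) < t := by
      rcases lt_or_eq_of_le hfl with h | h
      · exact h
      · exact absurd (by rw [← Int.self_sub_floor, ← hn, ← h, sub_self]) ht
    have hu1 : Int.fract t = t - n := fract_eq_on_Ico ⟨hfl, hfu⟩
    have humem : Int.fract t ∈ Ioo (0:ℝ) T := by
      constructor
      · rw [hu1]; linarith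
      · exact (Int.fract_lt_one t).trans hT
    have hYu : HasDerivAt Y (g (Y (Int.fract t)) + k (Int.fract t)) (Int.fract t) := hInt _ humem
    have hkt : k (Int.fract t) = k t := by rw [hu1]; exact hkZ n t
    have hinner : HasDerivAt (fun s : ℝ => s - (n:ℝ)) 1 t := (hasDerivAt_id t).sub_const _
    have hcomp : HasDerivAt (fun s => Y (s - (n:ℝ))) ((g (Y (Int.fract t)) + k (Int.fract t)) * 1) t := by
      refine HasDerivAt.comp t ?_ hinner
      rwa [← hu1]
    rw [mul_one, hkt] at hcomp
    refine hcomp.congr_of_eventuallyEq ?_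
    filter_upwards [Ioo_mem_nhds htn hfu] with s hs
    rw [fract_eq_on_Ico ⟨hs.1.le, hs.2⟩]

private theorem gen_periodic {g k : ℝ → ℝ} {L : NNReal} (hg : LipschitzWith L g)
    (hk : Continuous k) (hkp : ∀ s, k (s + 1) = k s) {K : ℝ} (hkb : ∀ t, |k t| ≤ K)
    {a b : ℝ} (hab : a < b) (ha' : ∀ t, 0 < g a + k t) (hb' : ∀ t, g b + k t < 0) :
    ∃ X : ℝ → ℝ, Differentiable ℝ X ∧ (∀ t, deriv X t = g (X t) + k t) ∧
      (∀ t, X (t + 1) = X t) ∧ ∀ t, a < X t ∧ X t < b := by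
  have hK0 : 0 ≤ K := le_trans (abs_nonneg _) (hkb 0)
  set C : ℝ := |g 0| + L * max |a - 1| |b + 1| + K with hCdef
  have hmax0 : 0 ≤ max |a - 1| |b + 1| := le_max_of_le_left (abs_nonneg _)
  have hC0 : 0 ≤ C := by positivity
  have hCbound : ∀ t x : ℝ, x ∈ Icc (a-1) (b+1) → |g x + k t| ≤ C := by
    intro t x hx
    have hxb : |x| ≤ max |a-1| |b+1| := by
      rw [abs_le]
      constructor
      · calc -(max |a-1| |b+1|) ≤ -|a-1| := by simp [le_max_left]
          _ ≤ a - 1 := neg_abs_le _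
          _ ≤ x := hx.1
      · calc x ≤ b + 1 := hx.2
          _ ≤ |b+1| := le_abs_self _
          _ ≤ max |a-1| |b+1| := le_max_right _ _
    have hlip := hg.dist_le_mul x 0
    rw [Real.dist_eq, Real.dist_eq, sub_zero] at hlip
    have h1 : |g x| - |g 0| ≤ |g x - g 0| := abs_sub_abs_le_abs_sub _ _
    have h2 : (L:ℝ) * |x| ≤ (L:ℝ) * max |a-1| |b+1| :=
      mul_le_mul_of_nonneg_left hxb L.coe_nonneg
    calc |g x + k t| ≤ |g x| + |k t| := abs_add_le _ _
      _ ≤ C := by rw [hCdef]; linarith [hkb t]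
  set τ : ℝ := 1/(C+1) with hτdef
  have hτ : 0 < τ := by rw [hτdef]; positivity
  have hCτ : C * τ ≤ 1 := by
    rw [hτdef]
    rw [mul_one_div, div_le_one (by linarith)]
    linarith
  set N : ℕ := ⌈1/τ⌉₊ + 1 with hNdef
  set T : ℝ := (N:ℝ)*τ with hTdef
  have hT : 1 < T := by
    have h1 : (1/τ) ≤ (⌈1/τ⌉₊:ℝ) := Nat.le_ceil _
    have h2 : (1/τ) * τ = 1 := by field_simp
    rw [hTdef, hNdef]
    push_cast
    nlinarith
  have hsol : ∀ c : ℝ, ∃ Y : ℝ → ℝ, c ∈ Icc a b → (Y 0 = c ∧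
      ∀ t ∈ Icc 0 T, HasDerivWithinAt Y (g (Y t) + k t) (Icc 0 T) t ∧ Y t ∈ Icc a b) := by
    intro c
    by_cases hc : c ∈ Icc a b
    · obtain ⟨Y, h1, h2⟩ := global_sol hg hk hτ hCbound hCτ ha' hb' N c hc
      exact ⟨Y, fun _ => ⟨h1, h2⟩⟩
    · exact ⟨fun _ => 0, fun h => absurd h hc⟩
  choose Y hY using hsol
  have hmem : ∀ c ∈ Icc a b, ∀ t ∈ Icc 0 T, Y c t ∈ Icc a b :=
    fun c hc t ht => ((hY c hc).2 t ht).2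
  have hD : ∀ c ∈ Icc a b, ∀ t ∈ Icc 0 T,
      HasDerivWithinAt (Y c) (g (Y c t) + k t) (Icc 0 T) t :=
    fun c hc t ht => ((hY c hc).2 t ht).1
  have h1T : (1:ℝ) ∈ Icc (0:ℝ) T := ⟨zero_le_one, hT.le⟩
  have hmono : ∀ c d, c ∈ Icc a b → d ∈ Icc a b → c ≤ d → Y c 1 ≤ Y d 1 := by
    intro c d hc hd hcd
    by_contra hlt
    push_neg at hlt
    have hcont : ∀ e, e ∈ Icc a b → ContinuousOn (Y e) (Icc 0 T) :=
      fun e he => fun r hr => (hD e he r hr).continuousWithinAt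
    set A := Icc (0:ℝ) 1 ∩ (fun s => Y c s - Y d s) ⁻¹' (Iic 0) with hA
    have hsub01 : Icc (0:ℝ) 1 ⊆ Icc 0 T := Icc_subset_Icc le_rfl hT.le
    have hAc : IsClosed A := by
      refine ContinuousOn.preimage_isClosed_of_isClosed ?_ isClosed_Icc isClosed_Iic
      exact ((hcont c hc).mono hsub01).sub ((hcont d hd).mono hsub01)
    have hAcomp : IsCompact A := isCompact_Icc.of_isClosed_subset hAc inter_subset_left
    have hAne : A.Nonempty := by
      refine ⟨0, ⟨le_rfl, zero_le_one⟩, ?_⟩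
      simp only [mem_preimage, mem_Iic]
      rw [(hY c hc).1, (hY d hd).1]
      linarith
    set u := sSup A with hu
    have huA : u ∈ A := hAcomp.sSup_mem hAne
    have hu01 : u ∈ Icc (0:ℝ) 1 := huA.1
    have hyu : Y c u - Y d u ≤ 0 := huA.2
    have hune : u ≠ 1 := by
      intro h; rw [h] at hyu; linarith
    have hu1 : u < 1 := lt_of_le_of_ne hu01.2 hune
    have habove : ∀ r ∈ Ioc u 1, Y d r < Y c r := by
      intro r hr
      by_contra hge
      push_neg at hge
      exact absurd (le_csSup hAcomp.bddAbove
        ⟨⟨hu01.1.trans hr.1.le, hr.2⟩, by simp only [mem_preimage, mem_Iic]; linarith⟩)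
        (not_le.mpr hr.1)
    haveI := left_nhdsWithin_Ioo_neBot hu1
    have hIoo : Ioo u 1 ⊆ Icc 0 T := fun r hr =>
      ⟨hu01.1.trans hr.1.le, (hr.2.le.trans hT.le)⟩
    have humem : u ∈ Icc (0:ℝ) T := ⟨hu01.1, hu01.2.trans hT.le⟩
    have htendsc : Tendsto (fun s => Y c s - Y d s) (𝓝[Ioo u 1] u)
        (𝓝 (Y c u - Y d u)) :=
      (((hcont c hc u humem).mono hIoo).sub ((hcont d hd u humem).mono hIoo))
    have hequ : Y c u = Y d u := by
      have h2 : 0 ≤ Y c u - Y d u := by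
        refine ge_of_tendsto htendsc ?_
        exact eventually_nhdsWithin_of_forall fun r hr =>
          (sub_nonneg.mpr (habove r ⟨hr.1, hr.2.le⟩).le)
      linarith
    have := uniq_fwd hg (hD c hc) (hD d hd) hu01.1 hu01.2 hT hequ
    linarith
  set S := {x | x ∈ Icc a b ∧ x ≤ Y x 1} with hS
  have hbdd : BddAbove S := ⟨b, fun x hx => hx.1.2⟩
  have habI : a ∈ Icc a b := ⟨le_rfl, hab.le⟩
  have haS : a ∈ S := ⟨habI, (hmem a habI 1 h1T).1⟩
  set c := sSup S with hc
  have hca : a ≤ c := le_csSup hbdd haS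
  have hcb : c ≤ b := csSup_le ⟨a, haS⟩ (fun x hx => hx.1.2)
  have hcI : c ∈ Icc a b := ⟨hca, hcb⟩
  have hc1 : c ≤ Y c 1 := csSup_le ⟨a, haS⟩
    (fun x hx => le_trans hx.2 (hmono x c hx.1 hcI (le_csSup hbdd hx)))
  have hYc1I : Y c 1 ∈ Icc a b := hmem c hcI 1 h1T
  have hc2 : Y c 1 ≤ c := le_csSup hbdd ⟨hYc1I, hmono c (Y c 1) hcI hYc1I hc1⟩
  have hper : Y c 1 = Y c 0 := by
    rw [(hY c hcI).1]; exact le_antisymm hc2 hc1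
  have hX := periodify hT hkp (hD c hcI) hper
  set X : ℝ → ℝ := fun s => Y c (Int.fract s) with hXdef
  have hXdiff : Differentiable ℝ X := fun t => (hX t).differentiableAt
  have hXderiv : ∀ t, deriv X t = g (X t) + k t := fun t => (hX t).deriv
  have hXper : ∀ t, X (t + 1) = X t := fun t => by
    rw [hXdef]; simp only [Int.fract_add_one]
  have hXmem : ∀ t, X t ∈ Icc a b := fun t =>
    hmem c hcI _ ⟨Int.fract_nonneg t, (Int.fract_lt_one t).le.trans hT.le⟩
  have hne_b : ∀ t, X t ≠ b := by
    refine no_touch_lower hXdiff hXper ?_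
    intro t ht
    rw [hXderiv t, ht]
    exact hb' t
  have hne_a : ∀ t, X t ≠ a := by
    refine no_touch_upper hXdiff hXper ?_
    intro t ht
    rw [hXderiv t, ht]
    exact ha' t
  exact ⟨X, hXdiff, hXderiv, hXper,
    fun t => ⟨lt_of_le_of_ne (hXmem t).1 (Ne.symm (hne_a t)),
      lt_of_le_of_ne (hXmem t).2 (hne_b t)⟩⟩

private lemma per_nat {w : ℝ → ℝ} (hw : ∀ t, w (t + 1) = w t) :
    ∀ (n : ℕ) (t : ℝ), w (t + n) = w t := by
  intro n
  induction n with
  | zero => intro t; simp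
  | succ n ih =>
    intro t
    have : t + ((n:ℝ) + 1) = (t + n) + 1 := by ring
    push_cast
    rw [this, hw (t + n), ih t]

private lemma sol_unique_s4 (hg : LipschitzWith L g) {y z : ℝ → ℝ}
    (hy : Differentiable ℝ y) (hyd : ∀ t, deriv y t = g (y t) + k t)
    (hyp : ∀ t, y (t + 1) = y t)
    (hz : Differentiable ℝ z) (hzd : ∀ t, deriv z t = g (z t) + k t)
    (hzp : ∀ t, z (t + 1) = z t)
    {t₀ : ℝ} (heq : y t₀ = z t₀) : y = z := by
  have hyD : ∀ r, HasDerivAt y (g (y r) + k r) r := fun r => by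
    have := (hy r).hasDerivAt; rwa [hyd r] at this
  have hzD : ∀ r, HasDerivAt z (g (z r) + k r) r := fun r => by
    have := (hz r).hasDerivAt; rwa [hzd r] at this
  have fwd : ∀ s, t₀ ≤ s → y s = z s := by
    intro s hs
    have key : EqOn y z (Icc t₀ s) :=
      ODE_solution_unique (v := fun t x => g x + k t) (fun t => lip_v hg t)
        hy.continuous.continuousOn
        (fun r _ => (hyD r).hasDerivWithinAt)
        hz.continuous.continuousOn
        (fun r _ => (hzD r).hasDerivWithinAt)
        heq
    exact key ⟨hs, le_rfl⟩
  funext s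
  rcases le_total t₀ s with h | h
  · exact fwd s h
  · set n : ℕ := ⌈t₀ - s⌉₊ with hn
    have hns : t₀ - s ≤ (n:ℝ) := Nat.le_ceil _
    have : y (s + n) = z (s + n) := fwd _ (by linarith)
    rw [per_nat hyp n s, per_nat hzp n s] at this
    exact this

private lemma ivt_zero {w : ℝ → ℝ} (hw : Continuous w) {s t : ℝ}
    (h1 : w s < 0) (h2 : 0 < w t) : ∃ r, w r = 0 := by
  rcases le_total s t with h | h
  · obtain ⟨r, _, hr⟩ := intermediate_value_Icc h hw.continuousOn
      (mem_Icc.mpr ⟨h1.le, h2.le⟩)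
    exact ⟨r, hr⟩
  · obtain ⟨r, _, hr⟩ := intermediate_value_Icc' h hw.continuousOn
      (mem_Icc.mpr ⟨h1.le, h2.le⟩)
    exact ⟨r, hr⟩

private lemma order_all (hg : LipschitzWith L g) {y z : ℝ → ℝ}
    (hy : Differentiable ℝ y) (hyd : ∀ t, deriv y t = g (y t) + k t)
    (hyp : ∀ t, y (t + 1) = y t)
    (hz : Differentiable ℝ z) (hzd : ∀ t, deriv z t = g (z t) + k t)
    (hzp : ∀ t, z (t + 1) = z t)
    {t₁ : ℝ} (hlt : y t₁ < z t₁) : ∀ t, y t < z t := by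
  have hne : ∀ t, y t ≠ z t := by
    intro t ht
    have := sol_unique_s4 hg hy hyd hyp hz hzd hzp ht
    rw [this] at hlt
    exact lt_irrefl _ hlt
  intro t
  by_contra hge
  push_neg at hge
  have hgt : z t < y t := lt_of_le_of_ne hge (Ne.symm (hne t))
  obtain ⟨r, hr⟩ := ivt_zero (w := fun s => z s - y s)
    (hz.continuous.sub hy.continuous) (s := t) (t := t₁)
    (show z t - y t < 0 by linarith) (show 0 < z t₁ - y t₁ by linarith)
  have hr' : z r - y r = 0 := hr
  exact hne r (by linarith)

private lemma region_core_anti (hg : LipschitzWith L g) {P : Set ℝ}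
    (hanti : ∀ ⦃u v : ℝ⦄, u ∈ P → v ∈ P → u < v → g v < g u)
    {y z : ℝ → ℝ}
    (hy : Differentiable ℝ y) (hyd : ∀ t, deriv y t = g (y t) + k t)
    (hyp : ∀ t, y (t + 1) = y t) (hyP : ∀ t, y t ∈ P)
    (hz : Differentiable ℝ z) (hzd : ∀ t, deriv z t = g (z t) + k t)
    (hzp : ∀ t, z (t + 1) = z t) (hzP : ∀ t, z t ∈ P)
    {t₁ : ℝ} (hlt : y t₁ < z t₁) : False := by
  have hall : ∀ t, y t < z t := order_all hg hy hyd hyp hz hzd hzp hlt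
  have hder : ∀ t, deriv (fun s => z s - y s) t < 0 := by
    intro t
    rw [deriv_fun_sub (hz t) (hy t), hyd t, hzd t]
    have := hanti (hyP t) (hzP t) (hall t)
    linarith
  have hsa : StrictAnti (fun s => z s - y s) := strictAnti_of_deriv_neg hder
  have h1 : z (t₁ + 1) - y (t₁ + 1) < z t₁ - y t₁ := hsa (lt_add_one t₁)
  have h2 : z (t₁ + 1) - y (t₁ + 1) = z t₁ - y t₁ := by rw [hzp, hyp]
  linarith

private lemma region_core_mono (hg : LipschitzWith L g) {P : Set ℝ}
    (hmono : ∀ ⦃u v : ℝ⦄, u ∈ P → v ∈ P → u < v → g u < g v)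
    {y z : ℝ → ℝ}
    (hy : Differentiable ℝ y) (hyd : ∀ t, deriv y t = g (y t) + k t)
    (hyp : ∀ t, y (t + 1) = y t) (hyP : ∀ t, y t ∈ P)
    (hz : Differentiable ℝ z) (hzd : ∀ t, deriv z t = g (z t) + k t)
    (hzp : ∀ t, z (t + 1) = z t) (hzP : ∀ t, z t ∈ P)
    {t₁ : ℝ} (hlt : y t₁ < z t₁) : False := by
  have hall : ∀ t, y t < z t := order_all hg hy hyd hyp hz hzd hzp hlt
  have hder : ∀ t, 0 < deriv (fun s => z s - y s) t := by
    intro t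
    rw [deriv_fun_sub (hz t) (hy t), hyd t, hzd t]
    have := hmono (hyP t) (hzP t) (hall t)
    linarith
  have hsm : StrictMono (fun s => z s - y s) := strictMono_of_deriv_pos hder
  have h1 : z t₁ - y t₁ < z (t₁ + 1) - y (t₁ + 1) := hsm (lt_add_one t₁)
  have h2 : z (t₁ + 1) - y (t₁ + 1) = z t₁ - y t₁ := by rw [hzp, hyp]
  linarith

end Gen


theorem three_solutions_tanh (β : ℝ) (hβ : 1 < β)
    (f : ℝ → ℝ) (hf : ∀ x, f x = Real.tanh (β * x) - x)
    (xm : ℝ) (hxm_pos : 0 < xm)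
    (hxm_max : ∀ y, 0 < y → f y ≤ f xm)
    (hxm_unique : ∀ y, 0 < y → f y = f xm → y = xm)
    (h : ℝ) (hh0 : 0 ≤ h) (hh : h < f xm) :
    ∃ x₁ x₂ x₃ : ℝ → ℝ,
      IsPeriodicSolution f h x₁ ∧ IsPeriodicSolution f h x₂ ∧
      IsPeriodicSolution f h x₃ ∧
      (∀ t, x₁ t < -xm) ∧ (∀ t, -xm < x₂ t ∧ x₂ t < xm) ∧ (∀ t, xm < x₃ t) ∧
      (∫ s in (0:ℝ)..1, deriv f (x₁ s)) < 0 ∧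
      (∫ s in (0:ℝ)..1, deriv f (x₃ s)) < 0 ∧
      ∀ y : ℝ → ℝ, IsPeriodicSolution f h y → y = x₁ ∨ y = x₂ ∨ y = x₃ := by
  have hβ0 : 0 < β := by linarith
  -- derivative of f
  have hfd : ∀ x, HasDerivAt f (β * (1 - Real.tanh (β * x) ^ 2) - 1) x := by
    intro x
    have hmul : HasDerivAt (fun y : ℝ => β * y) β x := by
      simpa using (hasDerivAt_id x).const_mul β
    have hcomp := (tanh_hasDerivAt (β * x)).comp x hmul
    have hsub := hcomp.sub (hasDerivAt_id x)
    have : HasDerivAt (fun y => Real.tanh (β * y) - y)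
        (β * (1 - Real.tanh (β * x) ^ 2) - 1) x := by
      exact hsub.congr_deriv (by ring)
    exact this.congr_of_eventuallyEq (Filter.Eventually.of_forall hf)
  have hfdiff : Differentiable ℝ f := fun x => (hfd x).differentiableAt
  have hfderiv : ∀ x, deriv f x = β * (1 - Real.tanh (β * x) ^ 2) - 1 :=
    fun x => (hfd x).deriv
  -- Lipschitz
  set L : NNReal := β.toNNReal with hLdef
  have hLip : LipschitzWith L f := by
    apply lipschitzWith_of_nnnorm_deriv_le hfdiff
    intro x
    rw [← NNReal.coe_le_coe, coe_nnnorm, Real.norm_eq_abs, hLdef,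
      Real.coe_toNNReal β hβ0.le, hfderiv x]
    rw [abs_le]
    have h1 := tanh_sq_lt_one' (β * x)
    have h2 := sq_nonneg (Real.tanh (β * x))
    constructor <;> nlinarith
  -- critical point: derivative vanishes at xm
  have hkey : β * (1 - Real.tanh (β * xm) ^ 2) = 1 := by
    have hloc : IsLocalMax f xm := by
      filter_upwards [Ioi_mem_nhds hxm_pos] with y hy
      exact hxm_max y hy
    have h0 := hloc.deriv_eq_zero
    rw [hfderiv xm] at h0
    linarith
  have htm0 : 0 ≤ Real.tanh (β * xm) := by
    have := tanh_strictMono'.monotone (show (0:ℝ) ≤ β * xm by positivity)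
    rwa [Real.tanh_zero] at this
  have hsq_abs : ∀ x : ℝ, Real.tanh (β * x) ^ 2 = Real.tanh (β * |x|) ^ 2 := by
    intro x
    rcases abs_cases x with ⟨h1, _⟩ | ⟨h1, _⟩
    · rw [h1]
    · rw [h1, mul_neg, Real.tanh_neg, neg_sq]
  have hderiv_neg : ∀ x : ℝ, xm < |x| → deriv f x < 0 := by
    intro x hx
    rw [hfderiv x]
    have h1 : Real.tanh (β * xm) < Real.tanh (β * |x|) :=
      tanh_strictMono' (by nlinarith)
    have h2 : Real.tanh (β * xm) ^ 2 < Real.tanh (β * x) ^ 2 := by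
      rw [hsq_abs x]; nlinarith
    nlinarith
  have hderiv_pos : ∀ x : ℝ, |x| < xm → 0 < deriv f x := by
    intro x hx
    rw [hfderiv x]
    have h1 : Real.tanh (β * |x|) < Real.tanh (β * xm) :=
      tanh_strictMono' (by nlinarith [abs_nonneg x])
    have h1' : 0 ≤ Real.tanh (β * |x|) := by
      have := tanh_strictMono'.monotone (show (0:ℝ) ≤ β * |x| by positivity)
      rwa [Real.tanh_zero] at this
    have h2 : Real.tanh (β * x) ^ 2 < Real.tanh (β * xm) ^ 2 := by
      rw [hsq_abs x]; nlinarith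
    nlinarith
  have hfodd : ∀ x, f (-x) = -f x := by
    intro x
    rw [hf, hf, mul_neg, Real.tanh_neg]
    ring
  have hfxm : 0 < f xm := lt_of_le_of_lt hh0 hh
  -- the forcing term
  set k : ℝ → ℝ := fun t => h * Real.cos (2 * Real.pi * t) with hkdef
  have hk : Continuous k := by
    apply continuous_const.mul
    exact Real.continuous_cos.comp (continuous_const.mul continuous_id)
  have hkp : ∀ t, k (t + 1) = k t := by
    intro t
    rw [hkdef]
    simp only []
    rw [mul_add, mul_one, Real.cos_add_two_pi]
  have hkb : ∀ t, |k t| ≤ h := by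
    intro t
    rw [hkdef]
    simp only []
    rw [abs_mul, abs_of_nonneg hh0]
    exact mul_le_of_le_one_right hh0 (Real.abs_cos_le_one _)
  have hkrange : ∀ t, -h ≤ k t ∧ k t ≤ h := fun t => abs_le.mp (hkb t)
  -- the outer bound R
  set R : ℝ := max (xm + 1) (h + 2) with hRdef
  have hRxm : xm < R := lt_of_lt_of_le (lt_add_one xm) (le_max_left _ _)
  have hRh : h + 2 ≤ R := le_max_right _ _
  have hfRh : f R + h < 0 := by
    have h1 : Real.tanh (β * R) < 1 := tanh_lt_one' _
    rw [hf]
    linarith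
  -- solution x₃ on (xm, R)
  obtain ⟨x₃, hx₃diff, hx₃d, hx₃p, hx₃b⟩ :=
    gen_periodic (g := f) (k := k) hLip hk hkp hkb hRxm
      (fun t => by linarith [(hkrange t).1])
      (fun t => by linarith [(hkrange t).2])
  -- solution x₁ on (-R, -xm)
  obtain ⟨x₁, hx₁diff, hx₁d, hx₁p, hx₁b⟩ :=
    gen_periodic (g := f) (k := k) hLip hk hkp hkb (by linarith : -R < -xm)
      (fun t => by rw [hfodd]; linarith [(hkrange t).1])
      (fun t => by rw [hfodd]; linarith [(hkrange t).2])
  -- solution for middle region: reversed time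
  have hLip2 : LipschitzWith L (fun x => -(f x)) := by
    intro x y
    simpa [edist_neg_neg] using hLip x y
  obtain ⟨Z, hZdiff, hZd, hZp, hZb⟩ :=
    gen_periodic (g := fun x => -(f x)) (k := fun t => -(k t)) hLip2 hk.neg
      (fun t => by show -(k (t+1)) = -(k t); rw [hkp t]) (K := h)
      (fun t => by show |-(k t)| ≤ h; rw [abs_neg]; exact hkb t)
      (by linarith : -xm < xm)
      (fun t => by
        show 0 < -(f (-xm)) + -(k t)
        rw [hfodd xm, neg_neg]
        linarith [(hkrange t).2])
      (fun t => by
        show -(f xm) + -(k t) < 0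
        linarith [(hkrange t).1])
  set x₂ : ℝ → ℝ := fun t => Z (-t) with hx₂def
  have hkeven : ∀ t, k (-t) = k t := by
    intro t
    rw [hkdef]
    simp only []
    rw [show 2 * Real.pi * -t = -(2 * Real.pi * t) by ring, Real.cos_neg]
  have hx₂D : ∀ t, HasDerivAt x₂ (f (x₂ t) + k t) t := by
    intro t
    have hZt : HasDerivAt Z (-(f (Z (-t))) + -(k (-t))) (-t) := by
      have := (hZdiff (-t)).hasDerivAt
      rwa [hZd (-t)] at this
    have hcomp := HasDerivAt.comp t hZt (hasDerivAt_neg t)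
    have : HasDerivAt x₂ ((-(f (Z (-t))) + -(k (-t))) * -1) t := hcomp
    convert this using 1
    rw [hkeven t]
    ring
  have hx₂diff : Differentiable ℝ x₂ := fun t => (hx₂D t).differentiableAt
  have hx₂d : ∀ t, deriv x₂ t = f (x₂ t) + k t := fun t => (hx₂D t).deriv
  have hx₂p : ∀ t, x₂ (t + 1) = x₂ t := by
    intro t
    have := hZp (-t - 1)
    rw [show -t - 1 + 1 = -t by ring] at this
    rw [hx₂def]
    simp only []
    rw [show -(t+1) = -t - 1 by ring, this]
  have hx₂b : ∀ t, -xm < x₂ t ∧ x₂ t < xm := fun t => hZb (-t)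
  -- integrals
  have hdF : Continuous (deriv f) := by
    have : deriv f = fun x => β * (1 - Real.tanh (β * x) ^ 2) - 1 := funext hfderiv
    rw [this]
    have htd : Differentiable ℝ Real.tanh := fun x => (tanh_hasDerivAt x).differentiableAt
    have htanh : Continuous Real.tanh := htd.continuous
    exact (continuous_const.mul (continuous_const.sub
      ((htanh.comp (continuous_const.mul continuous_id)).pow 2))).sub continuous_const
  have hint : ∀ w : ℝ → ℝ, Continuous w → (∀ s, xm < |w s|) →
      (∫ s in (0:ℝ)..1, deriv f (w s)) < 0 := by
    intro w hw hws
    have hcont : Continuous fun s => -(deriv f (w s)) := (hdF.comp hw).neg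
    have hpos := intervalIntegral.intervalIntegral_pos_of_pos_on
      (f := fun s => -(deriv f (w s)))
      (hcont.intervalIntegrable 0 1)
      (fun s _ => by
        show 0 < -(deriv f (w s))
        linarith [hderiv_neg (w s) (hws s)]) one_pos
    rw [intervalIntegral.integral_neg] at hpos
    linarith
  have hint₁ : (∫ s in (0:ℝ)..1, deriv f (x₁ s)) < 0 := by
    refine hint x₁ hx₁diff.continuous (fun s => ?_)
    have := (hx₁b s).2
    rw [abs_of_neg (by linarith)]
    linarith
  have hint₃ : (∫ s in (0:ℝ)..1, deriv f (x₃ s)) < 0 := by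
    refine hint x₃ hx₃diff.continuous (fun s => ?_)
    have := hx₃b s
    rw [abs_of_pos (by linarith [this.1])]
    linarith [this.1]
  -- monotonicity properties of f on the three regions
  have hanti_low : ∀ ⦃u v : ℝ⦄, u ∈ Iio (-xm) → v ∈ Iio (-xm) → u < v → f v < f u := by
    have hA : StrictAntiOn f (Iic (-xm)) := by
      refine strictAntiOn_of_deriv_neg (convex_Iic _) hfdiff.continuous.continuousOn ?_
      intro x hx
      rw [interior_Iic, mem_Iio] at hx
      exact hderiv_neg x (by rw [abs_of_neg (by linarith)]; linarith)
    exact fun u v hu hv huv =>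
      hA (mem_Iic.mpr (le_of_lt (mem_Iio.mp hu))) (mem_Iic.mpr (le_of_lt (mem_Iio.mp hv))) huv
  have hanti_high : ∀ ⦃u v : ℝ⦄, u ∈ Ioi xm → v ∈ Ioi xm → u < v → f v < f u := by
    have hA : StrictAntiOn f (Ici xm) := by
      refine strictAntiOn_of_deriv_neg (convex_Ici _) hfdiff.continuous.continuousOn ?_
      intro x hx
      rw [interior_Ici, mem_Ioi] at hx
      exact hderiv_neg x (by rw [abs_of_pos (by linarith)]; exact hx)
    exact fun u v hu hv huv =>
      hA (mem_Ici.mpr (le_of_lt (mem_Ioi.mp hu))) (mem_Ici.mpr (le_of_lt (mem_Ioi.mp hv))) huv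
  have hmono_mid : ∀ ⦃u v : ℝ⦄, u ∈ Ioo (-xm) xm → v ∈ Ioo (-xm) xm → u < v → f u < f v := by
    have hM : StrictMonoOn f (Icc (-xm) xm) := by
      refine strictMonoOn_of_deriv_pos (convex_Icc _ _) hfdiff.continuous.continuousOn ?_
      intro x hx
      rw [interior_Icc] at hx
      exact hderiv_pos x (abs_lt.mpr ⟨hx.1, hx.2⟩)
    exact fun u v hu hv huv => hM (Ioo_subset_Icc_self hu) (Ioo_subset_Icc_self hv) huv
  have hps : ∀ w : ℝ → ℝ, Differentiable ℝ w → (∀ t, deriv w t = f (w t) + k t) →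
      (∀ t, w (t + 1) = w t) → IsPeriodicSolution f h w := by
    intro w h1 h2 h3
    refine ⟨h1, fun t => ?_, h3⟩
    rw [h2 t, hkdef]
  refine ⟨x₁, x₂, x₃, hps x₁ hx₁diff hx₁d hx₁p, hps x₂ hx₂diff hx₂d hx₂p,
    hps x₃ hx₃diff hx₃d hx₃p,
    fun t => (hx₁b t).2, hx₂b, fun t => (hx₃b t).1, hint₁, hint₃, ?_⟩
  -- uniqueness
  rintro y ⟨hyd, hye0, hyp⟩
  have hkr : ∀ t : ℝ, -h ≤ h * Real.cos (2 * Real.pi * t) ∧ h * Real.cos (2 * Real.pi * t) ≤ h := by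
    intro t
    have h1 := Real.neg_one_le_cos (2 * Real.pi * t)
    have h2 := Real.cos_le_one (2 * Real.pi * t)
    constructor <;> nlinarith
  have hye : ∀ t, deriv y t = f (y t) + k t := fun t => by
    rw [hkdef]; exact hye0 t
  have hy_ne_top : ∀ t, y t ≠ xm := by
    refine no_touch_upper hyd hyp ?_
    intro t ht
    rw [hye0 t, ht]
    have := (hkr t).1
    linarith
  have hy_ne_bot : ∀ t, y t ≠ -xm := by
    refine no_touch_lower hyd hyp ?_
    intro t ht
    rw [hye0 t, ht, hfodd]
    have := (hkr t).2
    linarith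
  -- region persistence
  have hregion_low : y 0 < -xm → ∀ t, y t < -xm := by
    intro h0 t
    by_contra hge
    push_neg at hge
    have hgt : -xm < y t := lt_of_le_of_ne hge (Ne.symm (hy_ne_bot t))
    obtain ⟨r, hr⟩ := ivt_zero (w := fun s => y s + xm) (hyd.continuous.add continuous_const)
      (s := 0) (t := t) (show y 0 + xm < 0 by linarith) (show 0 < y t + xm by linarith)
    have hr' : y r + xm = 0 := hr
    exact hy_ne_bot r (by linarith)
  have hregion_high : xm < y 0 → ∀ t, xm < y t := by
    intro h0 t
    by_contra hge
    push_neg at hge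
    have hgt : y t < xm := lt_of_le_of_ne hge (hy_ne_top t)
    obtain ⟨r, hr⟩ := ivt_zero (w := fun s => y s - xm) (hyd.continuous.sub continuous_const)
      (s := t) (t := 0) (show y t - xm < 0 by linarith) (show 0 < y 0 - xm by linarith)
    have hr' : y r - xm = 0 := hr
    exact hy_ne_top r (by linarith)
  have hregion_mid : -xm < y 0 → y 0 < xm → ∀ t, -xm < y t ∧ y t < xm := by
    intro h0a h0b t
    constructor
    · by_contra hge
      push_neg at hge
      have hgt : y t < -xm := lt_of_le_of_ne hge (hy_ne_bot t)
      obtain ⟨r, hr⟩ := ivt_zero (w := fun s => y s + xm) (hyd.continuous.add continuous_const)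
        (s := t) (t := 0) (show y t + xm < 0 by linarith) (show 0 < y 0 + xm by linarith)
      have hr' : y r + xm = 0 := hr
      exact hy_ne_bot r (by linarith)
    · by_contra hge
      push_neg at hge
      have hgt : xm < y t := lt_of_le_of_ne hge (fun hq => hy_ne_top t hq.symm)
      obtain ⟨r, hr⟩ := ivt_zero (w := fun s => y s - xm) (hyd.continuous.sub continuous_const)
        (s := 0) (t := t) (show y 0 - xm < 0 by linarith) (show 0 < y t - xm by linarith)
      have hr' : y r - xm = 0 := hr
      exact hy_ne_top r (by linarith)
  rcases lt_trichotomy (y 0) (-xm) with hc | hc | hc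
  · -- region 1
    left
    have hyreg : ∀ t, y t < -xm := hregion_low hc
    rcases lt_trichotomy (y 0) (x₁ 0) with hd | hd | hd
    · exact absurd (region_core_anti hLip hanti_low hyd hye hyp (fun t => hyreg t)
        hx₁diff hx₁d hx₁p (fun t => (hx₁b t).2) hd) not_false
    · exact sol_unique_s4 hLip hyd hye hyp hx₁diff hx₁d hx₁p hd
    · exact absurd (region_core_anti hLip hanti_low hx₁diff hx₁d hx₁p (fun t => (hx₁b t).2)
        hyd hye hyp (fun t => hyreg t) hd) not_false
  · exact absurd hc (hy_ne_bot 0)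
  · rcases lt_trichotomy (y 0) xm with hc2 | hc2 | hc2
    · -- middle region
      right; left
      have hyreg := hregion_mid hc hc2
      rcases lt_trichotomy (y 0) (x₂ 0) with hd | hd | hd
      · exact absurd (region_core_mono hLip hmono_mid hyd hye hyp
          (fun t => ⟨(hyreg t).1, (hyreg t).2⟩)
          hx₂diff hx₂d hx₂p (fun t => ⟨(hx₂b t).1, (hx₂b t).2⟩) hd) not_false
      · exact sol_unique_s4 hLip hyd hye hyp hx₂diff hx₂d hx₂p hd
      · exact absurd (region_core_mono hLip hmono_mid hx₂diff hx₂d hx₂p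
          (fun t => ⟨(hx₂b t).1, (hx₂b t).2⟩)
          hyd hye hyp (fun t => ⟨(hyreg t).1, (hyreg t).2⟩) hd) not_false
    · exact absurd hc2 (hy_ne_top 0)
    · -- region 3
      right; right
      have hyreg : ∀ t, xm < y t := hregion_high hc2
      rcases lt_trichotomy (y 0) (x₃ 0) with hd | hd | hd
      · exact absurd (region_core_anti hLip hanti_high hyd hye hyp (fun t => hyreg t)
          hx₃diff hx₃d hx₃p (fun t => (hx₃b t).1) hd) not_false
      · exact sol_unique_s4 hLip hyd hye hyp hx₃diff hx₃d hx₃p hd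
      · exact absurd (region_core_anti hLip hanti_high hx₃diff hx₃d hx₃p (fun t => (hx₃b t).1)
          hyd hye hyp (fun t => hyreg t) hd) not_false
end

section
/- Let f : ℝ → ℝ be continuously differentiable and suppose there exist constants α < 0, M ∈ ℝ and x₀ > 0 such that f'(x) ≤ α for all |x| > x₀ and f'(x) ≤ M for all x ∈ ℝ. Then there exists H > 0 such that for all h > H, every 1-periodic solution x of the equation x' = f(x) + h·cos(2πt) satisfies ∫₀¹ f'(x(s)) ds < 0 (i.e. every 1-periodic solution is stable). -/
set_option maxHeartbeats 1000000


open Real MeasureTheory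

lemma jordan_sin {δ : ℝ} (hδ0 : 0 ≤ δ) (hδ1 : δ ≤ 1) : δ ≤ Real.sin (π * δ / 2) := by
  have hπ := Real.pi_pos
  have h := Real.mul_le_sin (x := π * δ / 2) (by positivity) (by nlinarith)
  have h2 : 2 / π * (π * δ / 2) = δ := by field_simp
  rw [h2] at h
  exact h

lemma cos_two_pi_ge {δ t : ℝ} (hδ0 : 0 < δ) (hδ1 : δ ≤ 1) (ht : |t| ≤ 1/4 - δ/4) :
    δ ≤ Real.cos (2 * π * t) := by
  have hπ := Real.pi_pos
  have habs : Real.cos (2 * π * |t|) = Real.cos (2 * π * t) := by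
    rcases abs_cases t with ⟨h, _⟩ | ⟨h, _⟩
    · rw [h]
    · rw [h]; rw [show 2*π*(-t) = -(2*π*t) by ring, Real.cos_neg]
  have h0t : 0 ≤ |t| := abs_nonneg t
  have hmono : Real.cos (π/2 - π*δ/2) ≤ Real.cos (2 * π * |t|) := by
    apply Real.cos_le_cos_of_nonneg_of_le_pi (by positivity) (by nlinarith) (by nlinarith)
  have heq : Real.cos (π/2 - π*δ/2) = Real.sin (π*δ/2) := Real.cos_pi_div_two_sub _
  have := jordan_sin hδ0.le hδ1
  linarith [habs ▸ hmono, heq ▸ hmono]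

/-- Band-time lemma: if the velocity is at least `v` whenever `x ≤ x₀ + 1` on `[a,b]`,
then the time spent in the band `|x| ≤ x₀` within `(a,b]` is at most `(2x₀+2)/v`. -/
lemma band_time (x : ℝ → ℝ) (hx : Differentiable ℝ x) (hx' : Continuous (deriv x))
    (x₀ v a b : ℝ) (hx₀ : 0 < x₀) (hv : 0 < v) (hab : a ≤ b)
    (hctrl : ∀ t ∈ Set.Icc a b, x t ≤ x₀ + 1 → v ≤ deriv x t) :
    volume ({t : ℝ | |x t| ≤ x₀} ∩ Set.Ioc a b) ≤ ENNReal.ofReal ((2 * x₀ + 2) / v) := by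
  set A : Set ℝ := {t : ℝ | |x t| ≤ x₀} with hA
  have hAmeas : MeasurableSet A :=
    (isClosed_le (continuous_abs.comp hx.continuous) continuous_const).measurableSet
  set ψ : ℝ → ℝ := fun u => max 0 (min 1 (min (u + (x₀ + 1)) ((x₀ + 1) - u))) with hψdef
  have hψcont : Continuous ψ := by
    apply continuous_const.max (continuous_const.min (Continuous.min (by continuity) (by continuity)))
  have hψ0 : ∀ u, 0 ≤ ψ u := fun u => le_max_left _ _
  have hψ1 : ∀ u, ψ u ≤ 1 := fun u => max_le zero_le_one (min_le_left _ _)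
  have hψone : ∀ u, |u| ≤ x₀ → ψ u = 1 := by
    intro u hu
    rw [abs_le] at hu
    have h1 : min (u + (x₀+1)) ((x₀+1) - u) ≥ 1 := le_min (by linarith [hu.1]) (by linarith [hu.2])
    rw [hψdef]
    simp only []
    rw [min_eq_left h1, max_eq_right zero_le_one]
  have hψzero_hi : ∀ u, x₀ + 1 ≤ u → ψ u = 0 := by
    intro u hu
    rw [hψdef]
    simp only []
    rw [max_eq_left]
    exact le_trans (min_le_right _ _) (le_trans (min_le_right _ _) (by linarith))
  have hψzero_lo : ∀ u, u ≤ -(x₀ + 1) → ψ u = 0 := by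
    intro u hu
    rw [hψdef]
    simp only []
    rw [max_eq_left]
    exact le_trans (min_le_right _ _) (le_trans (min_le_left _ _) (by linarith))
  set φ : ℝ → ℝ := fun u => ∫ s in (0:ℝ)..u, ψ s with hφdef
  have hφd : ∀ u, HasDerivAt φ (ψ u) u := fun u => (hψcont.integral_hasStrictDerivAt 0 u).hasDerivAt
  -- upper bound for φ
  have keyhi : φ (x₀ + 1) ≤ x₀ + 1 := by
    have h1 : φ (x₀+1) ≤ ∫ s in (0:ℝ)..(x₀+1), (1:ℝ) :=
      intervalIntegral.integral_mono_on (by linarith) (hψcont.intervalIntegrable _ _)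
        intervalIntegrable_const (fun s _ => hψ1 s)
    simpa using h1
  have keylo : -(x₀ + 1) ≤ φ (-(x₀ + 1)) := by
    have h1 : ∫ s in (-(x₀+1))..(0:ℝ), ψ s ≤ ∫ s in (-(x₀+1))..(0:ℝ), (1:ℝ) :=
      intervalIntegral.integral_mono_on (by linarith) (hψcont.intervalIntegrable _ _)
        intervalIntegrable_const (fun s _ => hψ1 s)
    have h2 : φ (-(x₀+1)) = - ∫ s in (-(x₀+1))..(0:ℝ), ψ s := intervalIntegral.integral_symm _ _
    have h1' : ∫ s in (-(x₀+1))..(0:ℝ), (1:ℝ) = x₀ + 1 := by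
      rw [intervalIntegral.integral_const, smul_eq_mul]; ring
    rw [h1'] at h1
    linarith
  have hφle : ∀ u, φ u ≤ x₀ + 1 := by
    intro u
    rcases le_or_gt u (x₀+1) with h | h
    · rcases le_or_gt 0 u with h0 | h0
      · have h1 : φ u ≤ ∫ s in (0:ℝ)..u, (1:ℝ) :=
          intervalIntegral.integral_mono_on h0 (hψcont.intervalIntegrable _ _)
            intervalIntegrable_const (fun s _ => hψ1 s)
        simp at h1; linarith
      · have h1 : (0:ℝ) ≤ ∫ s in u..(0:ℝ), ψ s :=
          intervalIntegral.integral_nonneg h0.le (fun s _ => hψ0 s)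
        have h2 : φ u = - ∫ s in u..(0:ℝ), ψ s := intervalIntegral.integral_symm _ _
        linarith
    · have h2 : φ (x₀+1) + ∫ s in (x₀+1)..u, ψ s = φ u :=
        intervalIntegral.integral_add_adjacent_intervals (hψcont.intervalIntegrable _ _)
          (hψcont.intervalIntegrable _ _)
      have h3 : ∫ s in (x₀+1)..u, ψ s = 0 := by
        have heq : Set.EqOn ψ (fun _ => (0:ℝ)) (Set.uIcc (x₀+1) u) := by
          intro s hs
          rw [Set.uIcc_of_le h.le] at hs
          exact hψzero_hi s hs.1
        rw [intervalIntegral.integral_congr heq]; simp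
      linarith [keyhi]
  have hφge : ∀ u, -(x₀ + 1) ≤ φ u := by
    intro u
    rcases le_or_gt (-(x₀+1)) u with h | h
    · rcases le_or_gt u 0 with h0 | h0
      · have h1 : ∫ s in u..(0:ℝ), ψ s ≤ ∫ s in u..(0:ℝ), (1:ℝ) :=
          intervalIntegral.integral_mono_on h0 (hψcont.intervalIntegrable _ _)
            intervalIntegrable_const (fun s _ => hψ1 s)
        have h2 : φ u = - ∫ s in u..(0:ℝ), ψ s := intervalIntegral.integral_symm _ _
        simp at h1
        linarith
      · have h1 : (0:ℝ) ≤ φ u := intervalIntegral.integral_nonneg h0.le (fun s _ => hψ0 s)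
        linarith
    · have h2 : φ (-(x₀+1)) + ∫ s in (-(x₀+1))..u, ψ s = φ u :=
        intervalIntegral.integral_add_adjacent_intervals (hψcont.intervalIntegrable _ _)
          (hψcont.intervalIntegrable _ _)
      have h3 : ∫ s in (-(x₀+1))..u, ψ s = 0 := by
        have heq : Set.EqOn ψ (fun _ => (0:ℝ)) (Set.uIcc (-(x₀+1)) u) := by
          intro s hs
          rw [Set.uIcc_of_ge h.le] at hs
          exact hψzero_lo s hs.2
        rw [intervalIntegral.integral_congr heq]; simp
      linarith [keylo]
  -- chain rule and FTC
  have hchain : ∀ t, HasDerivAt (fun u => φ (x u)) (ψ (x t) * deriv x t) t := by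
    intro t
    have := (hφd (x t)).comp t (hx t).hasDerivAt
    exact this
  have hintcont : Continuous fun t => ψ (x t) * deriv x t := (hψcont.comp hx.continuous).mul hx'
  have hftc : ∫ t in a..b, ψ (x t) * deriv x t = φ (x b) - φ (x a) :=
    intervalIntegral.integral_eq_sub_of_hasDerivAt (fun t _ => hchain t)
      (hintcont.intervalIntegrable _ _)
  have hind_int : IntervalIntegrable (A.indicator fun _ => v) volume a b := by
    rw [intervalIntegrable_iff_integrableOn_Ioc_of_le hab]
    exact (integrableOn_const measure_Ioc_lt_top.ne).indicator hAmeas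
  have hmono : ∫ t in a..b, (A.indicator fun _ => v) t ≤ ∫ t in a..b, ψ (x t) * deriv x t := by
    apply intervalIntegral.integral_mono_on hab hind_int (hintcont.intervalIntegrable _ _)
    intro t ht
    by_cases htA : t ∈ A
    · rw [Set.indicator_of_mem htA]
      have hxt : |x t| ≤ x₀ := htA
      have hxt' : x t ≤ x₀ + 1 := by linarith [(abs_le.mp hxt).2]
      have hd := hctrl t ht hxt'
      rw [hψone (x t) hxt]
      linarith
    · rw [Set.indicator_of_notMem htA]
      rcases le_or_gt (x t) (x₀ + 1) with hcase | hcase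
      · exact mul_nonneg (hψ0 _) (le_trans hv.le (hctrl t ht hcase))
      · rw [hψzero_hi (x t) hcase.le]; simp
  have hlhs : ∫ t in a..b, (A.indicator fun _ => v) t = (volume (A ∩ Set.Ioc a b)).toReal * v := by
    rw [intervalIntegral.integral_of_le hab, MeasureTheory.setIntegral_indicator hAmeas,
      MeasureTheory.setIntegral_const, smul_eq_mul, Set.inter_comm]
    rfl
  have hfin : volume (A ∩ Set.Ioc a b) ≠ ⊤ :=
    (lt_of_le_of_lt (measure_mono Set.inter_subset_right) measure_Ioc_lt_top).ne
  have hreal : (volume (A ∩ Set.Ioc a b)).toReal * v ≤ 2 * x₀ + 2 := by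
    rw [← hlhs]
    calc ∫ t in a..b, (A.indicator fun _ => v) t ≤ ∫ t in a..b, ψ (x t) * deriv x t := hmono
      _ = φ (x b) - φ (x a) := hftc
      _ ≤ 2 * x₀ + 2 := by linarith [hφle (x b), hφge (x a)]
  rw [ENNReal.le_ofReal_iff_toReal_le hfin (div_nonneg (by linarith) hv.le)]
  rw [le_div_iff₀ hv]
  exact hreal

open Real

theorem all_solutions_stable_large_h (f : ℝ → ℝ) (hf : ContDiff ℝ 1 f)
    (α M x₀ : ℝ) (hα : α < 0) (hx₀ : 0 < x₀)
    (hder_out : ∀ x : ℝ, x₀ < |x| → deriv f x ≤ α)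
    (hder_all : ∀ x : ℝ, deriv f x ≤ M) :
    ∃ H > (0:ℝ), ∀ h > H, ∀ x : ℝ → ℝ,
      IsPeriodicSolution f h x → (∫ s in (0:ℝ)..1, deriv f (x s)) < 0 := by
  have hfc : Continuous f := hf.continuous
  have hf'c : Continuous (deriv f) := hf.continuous_deriv le_rfl
  have hfd : Differentiable ℝ f := hf.differentiable one_ne_zero
  obtain ⟨C, hC⟩ := (isCompact_Icc (a := -(x₀+1)) (b := x₀+1)).exists_bound_of_continuousOn
    hfc.continuousOn
  have hC0 : 0 ≤ C := le_trans (norm_nonneg (f 0)) (hC 0 ⟨by linarith, by linarith⟩)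
  have hflow : ∀ u : ℝ, u ≤ x₀ + 1 → -C ≤ f u := by
    intro u hu
    rcases le_or_gt (-(x₀+1)) u with h | h
    · have := hC u ⟨h, hu⟩
      rw [Real.norm_eq_abs, abs_le] at this
      exact this.1
    · obtain ⟨c, hc, hcd⟩ := exists_hasDerivAt_eq_slope f (deriv f) h
        hfc.continuousOn (fun y _ => (hfd y).hasDerivAt)
      have hcx : x₀ < |c| := by
        have hc2 : c < -x₀ := by linarith [hc.2]
        rw [abs_of_neg (by linarith)]; linarith
      have h1 : deriv f c ≤ α := hder_out c hcx
      have hd : 0 < -(x₀+1) - u := by linarith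
      rw [hcd] at h1
      have h2 : f (-(x₀+1)) - f u ≤ α * (-(x₀+1) - u) := (div_le_iff₀ hd).mp h1
      have hfb : -C ≤ f (-(x₀+1)) := by
        have := hC (-(x₀+1)) ⟨le_refl _, by linarith⟩
        rw [Real.norm_eq_abs, abs_le] at this
        exact this.1
      nlinarith [mul_neg_of_neg_of_pos hα hd]
  have hfhigh : ∀ u : ℝ, -(x₀+1) ≤ u → f u ≤ C := by
    intro u hu
    rcases le_or_gt u (x₀+1) with h | h
    · have := hC u ⟨hu, h⟩
      rw [Real.norm_eq_abs, abs_le] at this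
      exact this.2
    · obtain ⟨c, hc, hcd⟩ := exists_hasDerivAt_eq_slope f (deriv f) h
        hfc.continuousOn (fun y _ => (hfd y).hasDerivAt)
      have hcx : x₀ < |c| := by
        have hc2 : x₀ < c := by linarith [hc.1]
        rw [abs_of_pos (by linarith)]; linarith
      have h1 : deriv f c ≤ α := hder_out c hcx
      have hd : 0 < u - (x₀+1) := by linarith
      rw [hcd] at h1
      have h2 : f u - f (x₀+1) ≤ α * (u - (x₀+1)) := (div_le_iff₀ hd).mp h1
      have hfb : f (x₀+1) ≤ C := by
        have := hC (x₀+1) ⟨by linarith, le_refl _⟩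
        rw [Real.norm_eq_abs, abs_le] at this
        exact this.2
      nlinarith [mul_neg_of_neg_of_pos hα hd]
  -- constants
  set M' : ℝ := max M 0 with hM'def
  set K : ℝ := M' - α with hKdef
  have hM'0 : 0 ≤ M' := le_max_right _ _
  have hK0 : 0 < K := by simp only [hKdef]; linarith
  set ε : ℝ := -α / (2 * K) with hεdef
  have hε0 : 0 < ε := div_pos (by linarith) (by linarith)
  have hεhalf : ε ≤ 1/2 := by
    rw [hεdef, div_le_iff₀ (by linarith)]
    simp only [hKdef]
    nlinarith
  set δ : ℝ := ε / 2 with hδdef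
  have hδ0 : 0 < δ := by simp only [hδdef]; linarith
  have hδ1 : δ ≤ 1/4 := by simp only [hδdef]; linarith
  set v : ℝ := 12 * (x₀ + 1) / ε with hvdef
  have hv0 : 0 < v := div_pos (by linarith) hε0
  refine ⟨max ((C + v) / δ) 1, lt_of_lt_of_le one_pos (le_max_right _ _), ?_⟩
  intro h hh x hsol
  obtain ⟨hxd, hode, -⟩ := hsol
  have hh1 : 1 < h := lt_of_le_of_lt (le_max_right _ _) hh
  have hhv : C + v < h * δ := by
    have h1 : (C + v)/δ < h := lt_of_le_of_lt (le_max_left _ _) hh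
    have := mul_lt_mul_of_pos_right h1 hδ0
    rw [div_mul_cancel₀ _ hδ0.ne'] at this
    exact this
  set v' : ℝ := h * δ - C with hv'def
  have hv'0 : 0 < v' := by simp only [hv'def]; linarith
  have hvv' : v ≤ v' := by simp only [hv'def]; linarith
  have hx'c : Continuous (deriv x) := by
    have hderiv_eq : deriv x = fun t => f (x t) + h * Real.cos (2 * π * t) := funext hode
    rw [hderiv_eq]
    exact (hfc.comp hxd.continuous).add (continuous_const.mul (Real.continuous_cos.comp
      (continuous_const.mul continuous_id)))
  set A : Set ℝ := {t : ℝ | |x t| ≤ x₀} with hAdef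
  have hAmeas : MeasurableSet A :=
    (isClosed_le (continuous_abs.comp hxd.continuous) continuous_const).measurableSet
  set q₁ : ℝ := 1/4 - δ/4 with hq₁
  set q₂ : ℝ := 1/4 + δ/4 with hq₂
  set q₃ : ℝ := 3/4 - δ/4 with hq₃
  set q₄ : ℝ := 3/4 + δ/4 with hq₄
  -- cosine bounds on the three good intervals
  have hcos1 : ∀ t ∈ Set.Icc (0:ℝ) q₁, δ ≤ Real.cos (2 * π * t) := by
    intro t ht
    apply cos_two_pi_ge hδ0 (by linarith)
    rw [abs_of_nonneg ht.1]
    simpa [hq₁] using ht.2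
  have hcos3 : ∀ t ∈ Set.Icc q₄ (1:ℝ), δ ≤ Real.cos (2 * π * t) := by
    intro t ht
    have key : Real.cos (2 * π * (t - 1)) = Real.cos (2 * π * t) := by
      rw [show 2*π*(t-1) = 2*π*t - 2*π by ring, Real.cos_sub_two_pi]
    rw [← key]
    apply cos_two_pi_ge hδ0 (by linarith)
    rw [abs_of_nonpos (by linarith [ht.2])]
    have := ht.1
    simp only [hq₄] at this
    linarith
  have hcos2 : ∀ t ∈ Set.Icc q₂ q₃, Real.cos (2 * π * t) ≤ -δ := by
    intro t ht
    have key : Real.cos (2 * π * (t - 1/2)) = -Real.cos (2 * π * t) := by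
      rw [show 2*π*(t-1/2) = 2*π*t - π by ring, Real.cos_sub_pi]
    have h1 : δ ≤ Real.cos (2 * π * (t - 1/2)) := by
      apply cos_two_pi_ge hδ0 (by linarith)
      rw [abs_le]
      have h2 := ht.1; have h3 := ht.2
      simp only [hq₂] at h2; simp only [hq₃] at h3
      constructor <;> linarith
    linarith [key ▸ h1]
  -- band time on the three good intervals
  have hb1 : volume (A ∩ Set.Ioc 0 q₁) ≤ ENNReal.ofReal ((2 * x₀ + 2) / v') := by
    apply band_time x hxd hx'c x₀ v' 0 q₁ hx₀ hv'0 (by simp only [hq₁]; linarith)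
    intro t ht hxt
    rw [hode]
    have h1 := hflow (x t) hxt
    have h2 := hcos1 t ht
    have h3 : h * δ ≤ h * Real.cos (2*π*t) := mul_le_mul_of_nonneg_left h2 (by linarith)
    simp only [hv'def]
    linarith
  have hb3 : volume (A ∩ Set.Ioc q₄ 1) ≤ ENNReal.ofReal ((2 * x₀ + 2) / v') := by
    apply band_time x hxd hx'c x₀ v' q₄ 1 hx₀ hv'0 (by simp only [hq₄]; linarith)
    intro t ht hxt
    rw [hode]
    have h1 := hflow (x t) hxt
    have h2 := hcos3 t ht
    have h3 : h * δ ≤ h * Real.cos (2*π*t) := mul_le_mul_of_nonneg_left h2 (by linarith)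
    simp only [hv'def]
    linarith
  have hb2 : volume (A ∩ Set.Ioc q₂ q₃) ≤ ENNReal.ofReal ((2 * x₀ + 2) / v') := by
    have hyd : Differentiable ℝ (fun t => -x t) := hxd.neg
    have hyderiv : deriv (fun t => -x t) = fun t => -deriv x t := funext fun t => deriv.neg
    have hy'c : Continuous (deriv (fun t => -x t)) := by rw [hyderiv]; exact hx'c.neg
    have hAy : {t : ℝ | |(fun t => -x t) t| ≤ x₀} = A := by
      ext t; simp [hAdef, abs_neg]
    have := band_time (fun t => -x t) hyd hy'c x₀ v' q₂ q₃ hx₀ hv'0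
      (by simp only [hq₂, hq₃]; linarith) ?_
    · rwa [hAy] at this
    · intro t ht hxt
      have hdy : deriv (fun s => -x s) t = -deriv x t := deriv.neg
      rw [hdy, hode]
      have hxt2 : -x t ≤ x₀ + 1 := hxt
      have h1 : -(x₀ + 1) ≤ x t := by linarith
      have h2 := hfhigh (x t) h1
      have h3 := hcos2 t ht
      have h4 : h * Real.cos (2*π*t) ≤ h * (-δ) := mul_le_mul_of_nonneg_left h3 (by linarith)
      simp only [hv'def]
      nlinarith
  -- covering
  have hcover : A ∩ Set.Ioc (0:ℝ) 1 ⊆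
      (A ∩ Set.Ioc 0 q₁) ∪ Set.Ioc q₁ q₂ ∪ (A ∩ Set.Ioc q₂ q₃) ∪ Set.Ioc q₃ q₄ ∪
        (A ∩ Set.Ioc q₄ 1) := by
    rintro t ⟨htA, ht0, ht1⟩
    rcases le_or_gt t q₁ with h1 | h1
    · exact Or.inl (Or.inl (Or.inl (Or.inl ⟨htA, ht0, h1⟩)))
    rcases le_or_gt t q₂ with h2 | h2
    · exact Or.inl (Or.inl (Or.inl (Or.inr ⟨h1, h2⟩)))
    rcases le_or_gt t q₃ with h3 | h3
    · exact Or.inl (Or.inl (Or.inr ⟨htA, h2, h3⟩))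
    rcases le_or_gt t q₄ with h4 | h4
    · exact Or.inl (Or.inr ⟨h3, h4⟩)
    · exact Or.inr ⟨htA, h4, ht1⟩
  have hwin1 : volume (Set.Ioc q₁ q₂) = ENNReal.ofReal (δ/2) := by
    rw [Real.volume_Ioc]; congr 1; simp only [hq₁, hq₂]; ring
  have hwin2 : volume (Set.Ioc q₃ q₄) = ENNReal.ofReal (δ/2) := by
    rw [Real.volume_Ioc]; congr 1; simp only [hq₃, hq₄]; ring
  have hterm : (2 * x₀ + 2) / v' ≤ ε / 6 := by
    have h1 : (2 * x₀ + 2) / v' ≤ (2 * x₀ + 2) / v :=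
      div_le_div_of_nonneg_left (by linarith) hv0 hvv'
    have h2 : (2 * x₀ + 2) / v = ε / 6 := by
      rw [hvdef]
      field_simp
      ring
    linarith
  have hμ : volume (A ∩ Set.Ioc (0:ℝ) 1) ≤ ENNReal.ofReal ε := by
    calc volume (A ∩ Set.Ioc (0:ℝ) 1)
        ≤ volume ((A ∩ Set.Ioc 0 q₁) ∪ Set.Ioc q₁ q₂ ∪ (A ∩ Set.Ioc q₂ q₃) ∪ Set.Ioc q₃ q₄ ∪
            (A ∩ Set.Ioc q₄ 1)) := measure_mono hcover
      _ ≤ volume (A ∩ Set.Ioc 0 q₁) + volume (Set.Ioc q₁ q₂) + volume (A ∩ Set.Ioc q₂ q₃) +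
            volume (Set.Ioc q₃ q₄) + volume (A ∩ Set.Ioc q₄ 1) := by
          refine le_trans (measure_union_le _ _) ?_
          gcongr
          refine le_trans (measure_union_le _ _) ?_
          gcongr
          refine le_trans (measure_union_le _ _) ?_
          gcongr
          exact measure_union_le _ _
      _ ≤ ENNReal.ofReal (ε/6) + ENNReal.ofReal (ε/4) + ENNReal.ofReal (ε/6) +
            ENNReal.ofReal (ε/4) + ENNReal.ofReal (ε/6) := by
          gcongr
          · exact le_trans hb1 (ENNReal.ofReal_le_ofReal hterm)
          · rw [hwin1]; apply ENNReal.ofReal_le_ofReal; linarith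
          · exact le_trans hb2 (ENNReal.ofReal_le_ofReal hterm)
          · rw [hwin2]; apply ENNReal.ofReal_le_ofReal; linarith
          · exact le_trans hb3 (ENNReal.ofReal_le_ofReal hterm)
      _ = ENNReal.ofReal (ε/6 + ε/4 + ε/6 + ε/4 + ε/6) := by
          rw [ENNReal.ofReal_add (by linarith) (by linarith),
            ENNReal.ofReal_add (by linarith) (by linarith),
            ENNReal.ofReal_add (by linarith) (by linarith),
            ENNReal.ofReal_add (by linarith) (by linarith)]
      _ = ENNReal.ofReal ε := by rw [show ε/6 + ε/4 + ε/6 + ε/4 + ε/6 = ε by ring]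
  have hμreal : (volume (A ∩ Set.Ioc (0:ℝ) 1)).toReal ≤ ε :=
    ENNReal.toReal_le_of_le_ofReal hε0.le hμ
  -- final estimate
  have hind_int : IntervalIntegrable (A.indicator fun _ => K) volume 0 1 := by
    rw [intervalIntegrable_iff_integrableOn_Ioc_of_le zero_le_one]
    exact (integrableOn_const measure_Ioc_lt_top.ne).indicator hAmeas
  have hptw : ∀ s ∈ Set.Icc (0:ℝ) 1,
      deriv f (x s) ≤ α + A.indicator (fun _ => K) s := by
    intro s _
    by_cases hs : s ∈ A
    · rw [Set.indicator_of_mem hs]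
      have h1 := hder_all (x s)
      have h2 : M ≤ M' := le_max_left _ _
      simp only [hKdef]
      linarith
    · rw [Set.indicator_of_notMem hs]
      have h1 : x₀ < |x s| := lt_of_not_ge hs
      linarith [hder_out (x s) h1]
  have hmain : ∫ s in (0:ℝ)..1, deriv f (x s) ≤
      ∫ s in (0:ℝ)..1, (α + A.indicator (fun _ => K) s) :=
    intervalIntegral.integral_mono_on zero_le_one
      ((hf'c.comp hxd.continuous).intervalIntegrable _ _)
      (intervalIntegrable_const.add hind_int) hptw
  have hrhs : ∫ s in (0:ℝ)..1, (α + A.indicator (fun _ => K) s) =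
      α + (volume (A ∩ Set.Ioc (0:ℝ) 1)).toReal * K := by
    rw [intervalIntegral.integral_add intervalIntegrable_const hind_int,
      intervalIntegral.integral_const, smul_eq_mul,
      intervalIntegral.integral_of_le zero_le_one,
      MeasureTheory.setIntegral_indicator hAmeas, MeasureTheory.setIntegral_const, smul_eq_mul,
      Set.inter_comm (Set.Ioc (0:ℝ) 1) A]
    simp
    exact Or.inl rfl
  have hKε : ε * K = -α / 2 := by
    rw [hεdef]
    field_simp
  have hfinal : (volume (A ∩ Set.Ioc (0:ℝ) 1)).toReal * K ≤ -α/2 := by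
    rw [← hKε]
    exact mul_le_mul_of_nonneg_right hμreal hK0.le
  calc ∫ s in (0:ℝ)..1, deriv f (x s)
      ≤ α + (volume (A ∩ Set.Ioc (0:ℝ) 1)).toReal * K := hrhs ▸ hmain
    _ ≤ α + (-α/2) := by linarith
    _ < 0 := by linarith
end

section
/- Let β > 0 and let f(x) = tanh(βx) − x, so that f'(x) = β − 1 − β·tanh²(βx). Let x₀ : ℝ → ℝ be a continuous 1-periodic function and let v : ℝ → ℝ be a differentiable 1-periodic function satisfying v'(t) = f'(x₀(t))·v(t) for all t. Put ζ(s) = tanh(β·x₀(s)). Then ∫₀¹ ζ(s)²·v(s)² ds = ((β−1)/β)·∫₀¹ v(s)² ds. -/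
open Real

lemma my_tanh_hasDerivAt (x : ℝ) :
    HasDerivAt Real.tanh (1 - Real.tanh x ^ 2) x := by
  have hc : Real.cosh x ≠ 0 := (Real.cosh_pos x).ne'
  have h := (Real.hasDerivAt_sinh x).div (Real.hasDerivAt_cosh x) hc
  have ht : Real.tanh = fun y => Real.sinh y / Real.cosh y :=
    funext Real.tanh_eq_sinh_div_cosh
  rw [ht]
  convert h using 1
  rfl
  rfl
  rfl
  simp only
  field_simp

theorem zeta_squared_identity (β : ℝ) (hβ : 0 < β)
    (f : ℝ → ℝ) (hf : ∀ x, f x = Real.tanh (β * x) - x)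
    (x₀ : ℝ → ℝ) (hx₀ : Continuous x₀) (hx₀per : ∀ t, x₀ (t + 1) = x₀ t)
    (v : ℝ → ℝ) (hv : Differentiable ℝ v) (hvper : ∀ t, v (t + 1) = v t)
    (hveq : ∀ t, deriv v t = deriv f (x₀ t) * v t)
    (ζ : ℝ → ℝ) (hζ : ∀ s, ζ s = Real.tanh (β * x₀ s)) :
    (∫ s in (0:ℝ)..1, ζ s ^ 2 * v s ^ 2) =
      ((β - 1) / β) * ∫ s in (0:ℝ)..1, v s ^ 2 := by
  -- derivative of f
  have hf' : ∀ x, deriv f x = β * (1 - Real.tanh (β * x) ^ 2) - 1 := by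
    intro x
    have h1 : HasDerivAt (fun y => Real.tanh (β * y))
        ((1 - Real.tanh (β * x) ^ 2) * β) x := by
      have := (my_tanh_hasDerivAt (β * x)).comp x ((hasDerivAt_id x).const_mul β)
      convert this using 1
      rfl
      rfl
      rfl
      ring
    have h2 : HasDerivAt f (β * (1 - Real.tanh (β * x) ^ 2) - 1) x := by
      have hfe : f = fun y => Real.tanh (β * y) - y := funext hf
      rw [hfe]
      have := h1.sub (hasDerivAt_id x)
      convert this using 1
      rfl
      rfl
      rfl
      ring
    exact h2.deriv
  have hζc : Continuous ζ := by
    have : ζ = fun s => Real.tanh (β * x₀ s) := funext hζ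
    rw [this]
    have hdt : Differentiable ℝ Real.tanh := fun x => (my_tanh_hasDerivAt x).differentiableAt
    have hct : Continuous Real.tanh := hdt.continuous
    exact hct.comp (continuous_const.mul hx₀)
  have hvc : Continuous v := hv.continuous
  -- FTC for v^2 over [0,1]
  have hD : ∀ t ∈ Set.uIcc (0:ℝ) 1,
      HasDerivAt (fun s => v s ^ 2) (2 * (β * (1 - ζ t ^ 2) - 1) * v t ^ 2) t := by
    intro t _
    have h := ((hv t).hasDerivAt).pow 2
    convert h using 1
    rfl
    rfl
    rfl
    rw [hveq t, hf' (x₀ t), hζ t]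
    ring
  have hFc : Continuous (fun t => 2 * (β * (1 - ζ t ^ 2) - 1) * v t ^ 2) := by
    fun_prop
  have hint : (∫ s in (0:ℝ)..1, 2 * (β * (1 - ζ s ^ 2) - 1) * v s ^ 2)
      = v 1 ^ 2 - v 0 ^ 2 :=
    intervalIntegral.integral_eq_sub_of_hasDerivAt hD
      (hFc.intervalIntegrable 0 1)
  have hv10 : v 1 = v 0 := by simpa using hvper 0
  rw [hv10, sub_self] at hint
  -- split the integral
  have hI1 : IntervalIntegrable (fun s => v s ^ 2) MeasureTheory.volume 0 1 :=
    (hvc.pow 2).intervalIntegrable 0 1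
  have hI2 : IntervalIntegrable (fun s => ζ s ^ 2 * v s ^ 2) MeasureTheory.volume 0 1 :=
    ((hζc.pow 2).mul (hvc.pow 2)).intervalIntegrable 0 1
  have hsplit : (∫ s in (0:ℝ)..1, 2 * (β * (1 - ζ s ^ 2) - 1) * v s ^ 2)
      = (2 * β - 2) * (∫ s in (0:ℝ)..1, v s ^ 2)
        - 2 * β * (∫ s in (0:ℝ)..1, ζ s ^ 2 * v s ^ 2) := by
    rw [← intervalIntegral.integral_const_mul, ← intervalIntegral.integral_const_mul,
      ← intervalIntegral.integral_sub (hI1.const_mul _) (hI2.const_mul _)]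
    apply intervalIntegral.integral_congr
    intro s _
    ring
  rw [hsplit] at hint
  have hβ' : β ≠ 0 := hβ.ne'
  field_simp
  linarith
end
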